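/- arXiv:1010.5288 — 4 statements merged into one kernel-verified Lean document; each statement's English description precedes it below -/
import Mathlib

section
/- For every n ≥ 3 and every k with 1 ≤ k ≤ n-1 (both parities of k), the number of permutations of {1,…,n} with exactly n-k cycles (including fixed points) equals a(n,k) + a(n,k-1); equivalently, c(n,n-k) = a(n,k) + a(n,k-1) where c(n,j) is the unsigned Stirling number of the first kind. -/
set_option linter.unusedSectionVars false
set_option maxHeartbeats 1000000

/-- The set `T(A_n) = {(1 2)(i j) : 1 ≤ i < j ≤ n}` of A-transpositions, viewed inside
`Equiv.Perm (Fin n)` (letter `k` corresponds to `(k-1 : Fin n)`). -/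
def ATrans (n : ℕ) : Set (Equiv.Perm (Fin n)) :=
  {v | ∃ (h1 : 1 < n) (i j : Fin n), i < j ∧
       v = Equiv.swap (⟨0, by omega⟩ : Fin n) ⟨1, h1⟩ * Equiv.swap i j}

/-- Length of a permutation with respect to the generating set `T(A_n)`. -/
noncomputable def alen (n : ℕ) (v : Equiv.Perm (Fin n)) : ℕ :=
  sInf {k | ∃ l : List (Equiv.Perm (Fin n)),
    (∀ x ∈ l, x ∈ ATrans n) ∧ l.length = k ∧ l.prod = v}

/-- `a(n,m)`: the number of elements of `A_n` of length `m` w.r.t. `T(A_n)`. -/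
noncomputable def aCount (n m : ℕ) : ℕ :=
  Nat.card {v : Equiv.Perm (Fin n) // v ∈ alternatingGroup (Fin n) ∧ alen n v = m}

/-- `cyc(v)`: the number of cycles of `v` including fixed points, i.e. the number of
orbits of the cyclic group generated by `v` acting on `Fin n`. -/
noncomputable def cycNum (n : ℕ) (v : Equiv.Perm (Fin n)) : ℕ :=
  Nat.card (MulAction.orbitRel.Quotient (Subgroup.zpowers v) (Fin n))

section Aux
open Equiv Equiv.Perm MulAction Subgroup
variable {α : Type*} [Fintype α] [DecidableEq α]

variable {α : Type*} [Fintype α] [DecidableEq α]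

noncomputable abbrev QG (G : Subgroup (Perm α)) := MulAction.orbitRel.Quotient G α

noncomputable def qq (G : Subgroup (Perm α)) (x : α) : QG G := ⟦x⟧

lemma qq_surj (G : Subgroup (Perm α)) : Function.Surjective (qq (α := α) G) :=
  Quotient.mk''_surjective

lemma qq_eq_iff (G : Subgroup (Perm α)) (x y : α) :
    qq G x = qq G y ↔ ∃ g : G, (g : Perm α) y = x := by
  rw [qq, qq, Quotient.eq'']
  rw [show (MulAction.orbitRel (↥G) α) x y ↔ x ∈ MulAction.orbit G y from Iff.rfl,
    MulAction.mem_orbit_iff]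
  simp [Subgroup.smul_def, Equiv.Perm.smul_def]

lemma qq_apply_self (G : Subgroup (Perm α)) (g : Perm α) (hg : g ∈ G) (x : α) :
    qq G (g x) = qq G x := (qq_eq_iff G _ _).2 ⟨⟨g, hg⟩, rfl⟩

lemma qq_lift (G : Subgroup (Perm α)) {β : Type*} (v : α → β)
    (hv : ∀ x y : α, qq G x = qq G y → v x = v y) :
    ∃ f : QG G → β, ∀ x, f (qq G x) = v x := by
  refine ⟨Quotient.lift v ?_, fun x => rfl⟩
  intro x y hxy
  exact hv x y (Quotient.sound hxy)


lemma card_QG_le (G : Subgroup (Perm α)) : Nat.card (QG G) ≤ Fintype.card α := by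
  rw [← Nat.card_eq_fintype_card]
  exact Nat.card_le_card_of_surjective _ (qq_surj G)

lemma card_QG_one : Nat.card (QG (⊥ : Subgroup (Perm α))) = Fintype.card α := by
  rw [← Nat.card_eq_fintype_card]
  refine (Nat.card_eq_of_bijective (qq ⊥) ⟨fun x y h => ?_, qq_surj _⟩).symm
  obtain ⟨g, hg⟩ := (qq_eq_iff _ _ _).1 h
  have hg1 : (g : Perm α) = 1 := by
    have := g.2; rwa [Subgroup.mem_bot] at this
  rw [hg1] at hg; simpa using hg.symm

lemma card_QG_mono {K H : Subgroup (Perm α)} (h : K ≤ H) :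
    Nat.card (QG H) ≤ Nat.card (QG K) := by
  obtain ⟨f, hf⟩ := qq_lift K (qq H) (by
    intro x y hxy
    obtain ⟨g, hg⟩ := (qq_eq_iff _ _ _).1 hxy
    exact (qq_eq_iff _ _ _).2 ⟨⟨g, h g.2⟩, hg⟩)
  apply Nat.card_le_card_of_surjective f
  intro c
  obtain ⟨x, rfl⟩ := qq_surj H c
  exact ⟨qq K x, hf x⟩

/-- The coarsened relation: equal `K`-classes, or both classes among those of `a,b`. -/
def RelC (K : Subgroup (Perm α)) (a b : α) (x y : α) : Prop :=
  qq K x = qq K y ∨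
    ((qq K x = qq K a ∨ qq K x = qq K b) ∧ (qq K y = qq K a ∨ qq K y = qq K b))

lemma RelC.refl (K : Subgroup (Perm α)) (a b x : α) : RelC K a b x x := Or.inl rfl

lemma RelC.symm {K : Subgroup (Perm α)} {a b x y : α} (h : RelC K a b x y) :
    RelC K a b y x := by
  rcases h with h | ⟨h1, h2⟩
  · exact Or.inl h.symm
  · exact Or.inr ⟨h2, h1⟩

lemma RelC.trans {K : Subgroup (Perm α)} {a b x y z : α} (h : RelC K a b x y)
    (h' : RelC K a b y z) : RelC K a b x z := by
  rcases h with h | ⟨h1, h2⟩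
  · rcases h' with h' | ⟨h1', h2'⟩
    · exact Or.inl (h.trans h')
    · exact Or.inr ⟨h ▸ h1', h2'⟩
  · rcases h' with h' | ⟨h1', h2'⟩
    · exact Or.inr ⟨h1, h' ▸ h2⟩
    · exact Or.inr ⟨h1, h2'⟩

lemma relC_of_mem_closure (u : Perm α) (a b : α) (g : Perm α)
    (hg : g ∈ Subgroup.closure {u, Equiv.swap a b}) :
    ∀ z, RelC (zpowers u) a b z (g z) := by
  induction hg using Subgroup.closure_induction with
  | mem g hgen =>
    intro z
    rcases hgen with rfl | rfl
    · exact Or.inl (qq_apply_self _ g (mem_zpowers g) z).symm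
    · rcases eq_or_ne z a with rfl | hza
      · rw [Equiv.swap_apply_left]
        exact Or.inr ⟨Or.inl rfl, Or.inr rfl⟩
      · rcases eq_or_ne z b with rfl | hzb
        · rw [Equiv.swap_apply_right]
          exact Or.inr ⟨Or.inr rfl, Or.inl rfl⟩
        · rw [Equiv.swap_apply_of_ne_of_ne hza hzb]
          exact RelC.refl _ _ _ _
  | one => intro z; simpa using RelC.refl (zpowers u) a b z
  | mul g1 g2 _ _ ih1 ih2 =>
    intro z
    exact (ih2 z).trans (by simpa using ih1 (g2 z))
  | inv g _ ih =>
    intro z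
    have := (ih (g⁻¹ z)).symm
    simpa using this

lemma relC_of_qq_closure_eq (u : Perm α) (a b : α) (x y : α)
    (h : qq (Subgroup.closure {u, Equiv.swap a b}) x = qq _ y) :
    RelC (zpowers u) a b x y := by
  obtain ⟨g, hg⟩ := (qq_eq_iff _ _ _).1 h
  have := relC_of_mem_closure u a b (g : Perm α) g.2 y
  rw [hg] at this
  exact this.symm

lemma zpowers_le_closure_pair (u s : Perm α) :
    zpowers u ≤ Subgroup.closure {u, s} :=
  zpowers_le.2 (Subgroup.subset_closure (by simp))

/-- Adding one swap to the generating set decreases the orbit count by at most 1. -/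
lemma card_QG_closure_pair_ge (u : Perm α) (a b : α) :
    Nat.card (QG (zpowers u)) ≤
      Nat.card (QG (Subgroup.closure {u, Equiv.swap a b})) + 1 := by
  classical
  set K := zpowers u with hK
  set H := Subgroup.closure {u, Equiv.swap a b} with hH
  obtain ⟨f, hf⟩ := qq_lift K
    (fun z => if qq K z = qq K b ∧ qq K a ≠ qq K b then (Sum.inr () : QG H ⊕ Unit)
      else Sum.inl (qq H z))
    (by
      intro x y hxy
      have hH' : qq H x = qq H y := by
        obtain ⟨g, hg⟩ := (qq_eq_iff _ _ _).1 hxy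
        exact (qq_eq_iff _ _ _).2 ⟨⟨g, zpowers_le_closure_pair u _ g.2⟩, hg⟩
      simp only [hxy, hH'])
  have hinj : Function.Injective f := by
    intro c1 c2 hc
    obtain ⟨x, rfl⟩ := qq_surj K c1
    obtain ⟨y, rfl⟩ := qq_surj K c2
    rw [hf, hf] at hc
    by_cases hx : qq K x = qq K b ∧ qq K a ≠ qq K b <;>
      by_cases hy : qq K y = qq K b ∧ qq K a ≠ qq K b
    · rw [hx.1, hy.1]
    · rw [if_pos hx, if_neg hy] at hc; exact absurd hc (by simp)
    · rw [if_neg hx, if_pos hy] at hc; exact absurd hc (by simp)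
    · rw [if_neg hx, if_neg hy] at hc
      have hrel := relC_of_qq_closure_eq u a b x y (by exact Sum.inl.inj hc)
      rcases hrel with h | ⟨h1, h2⟩
      · exact h
      · by_cases hab : qq K a = qq K b
        · rcases h1 with h1 | h1 <;> rcases h2 with h2 | h2 <;>
            (rw [h1, h2] <;> first | exact hab | exact hab.symm)
        · have hx' : qq K x = qq K a := by
            rcases h1 with h1 | h1
            · exact h1
            · exact absurd ⟨h1, hab⟩ hx
          have hy' : qq K y = qq K a := by
            rcases h2 with h2 | h2
            · exact h2
            · exact absurd ⟨h2, hab⟩ hy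
          rw [hx', hy']
  calc Nat.card (QG K) ≤ Nat.card (QG H ⊕ Unit) := Nat.card_le_card_of_injective f hinj
    _ = Nat.card (QG H) + 1 := by simp [Nat.card_sum]

lemma closure_pair_swap_mul (v s : Perm α) (hs : s * s = 1) :
    Subgroup.closure {s * v, s} = Subgroup.closure {v, s} := by
  have h1 : s * v ∈ Subgroup.closure {v, s} :=
    mul_mem (Subgroup.subset_closure (by simp)) (Subgroup.subset_closure (by simp))
  have h2 : v ∈ Subgroup.closure {s * v, s} := by
    have := mul_mem (Subgroup.subset_closure (show s ∈ ({s * v, s} : Set (Perm α)) by simp))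
      (Subgroup.subset_closure (show s * v ∈ ({s * v, s} : Set (Perm α)) by simp))
    rwa [← mul_assoc, hs, one_mul] at this
  apply le_antisymm <;> rw [Subgroup.closure_le] <;> intro g hg <;>
    simp only [Set.mem_insert_iff, Set.mem_singleton_iff] at hg <;>
    rcases hg with hg | hg <;> rw [hg]
  · exact h1
  · exact Subgroup.subset_closure (by simp)
  · exact h2
  · exact Subgroup.subset_closure (by simp)

lemma card_QG_swap_mul (v : Perm α) (x : α) (hx : v x ≠ x) :
    Nat.card (QG (zpowers (Equiv.swap x (v x) * v)))
      = Nat.card (QG (zpowers v)) + 1 := by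
  classical
  set s : Perm α := Equiv.swap x (v x) with hs
  set w : Perm α := s * v with hwdef
  have hss : s * s = 1 := by rw [hs, Equiv.swap_mul_self]
  have hwx : w x = x := by
    rw [hwdef, hs]
    simp [Equiv.swap_apply_right]
  have hKw_fix : ∀ g : zpowers w, (g : Perm α) x = x := by
    rintro ⟨g, m, rfl⟩
    exact zpow_apply_eq_self_of_apply_eq_self hwx m
  have hqwx : ∀ z, qq (zpowers w) z = qq (zpowers w) x → z = x := by
    intro z hz
    obtain ⟨g, hg⟩ := (qq_eq_iff _ _ _).1 hz.symm
    exact (g : Perm α).injective (hg.trans (hKw_fix g).symm)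
  have hqwvx : qq (zpowers w) (v x) ≠ qq (zpowers w) x := fun h => hx (hqwx _ h)
  have hvxq : qq (zpowers v) (v x) = qq (zpowers v) x :=
    qq_apply_self _ v (mem_zpowers v) x
  set H : Subgroup (Perm α) := Subgroup.closure {v, s} with hH
  set H' : Subgroup (Perm α) := Subgroup.closure {w, s} with hH'
  have hHH : H' = H := closure_pair_swap_mul v s hss
  -- Step 1 : QG (zpowers v) ≃ QG H
  have step1 : Nat.card (QG (zpowers v)) = Nat.card (QG H) := by
    obtain ⟨f, hf⟩ := qq_lift (zpowers v) (fun z => qq H z)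
      (by
        intro z z' hzz
        obtain ⟨g, hg⟩ := (qq_eq_iff _ _ _).1 hzz
        exact (qq_eq_iff _ _ _).2 ⟨⟨g, zpowers_le_closure_pair v s g.2⟩, hg⟩)
    refine Nat.card_eq_of_bijective f ⟨?_, ?_⟩
    · intro c1 c2 hc
      obtain ⟨z, rfl⟩ := qq_surj _ c1
      obtain ⟨z', rfl⟩ := qq_surj _ c2
      rw [hf, hf] at hc
      have hrel := relC_of_qq_closure_eq v x (v x) z z' hc
      rcases hrel with h | ⟨h1, h2⟩
      · exact h
      · have e1 : qq (zpowers v) z = qq (zpowers v) x := by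
          rcases h1 with h1 | h1
          · exact h1
          · exact h1.trans hvxq
        have e2 : qq (zpowers v) z' = qq (zpowers v) x := by
          rcases h2 with h2 | h2
          · exact h2
          · exact h2.trans hvxq
        exact e1.trans e2.symm
    · intro c
      obtain ⟨z, rfl⟩ := qq_surj H c
      exact ⟨qq _ z, hf z⟩
  -- Step 2 : QG (zpowers w) ≃ QG H' ⊕ Unit
  have step2 : Nat.card (QG (zpowers w)) = Nat.card (QG H') + 1 := by
    obtain ⟨f, hf⟩ := qq_lift (zpowers w)
      (fun z => if qq (zpowers w) z = qq (zpowers w) x then (Sum.inr () : QG H' ⊕ Unit)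
        else Sum.inl (qq H' z))
      (by
        intro z z' hzz
        have hH'' : qq H' z = qq H' z' := by
          obtain ⟨g, hg⟩ := (qq_eq_iff _ _ _).1 hzz
          exact (qq_eq_iff _ _ _).2 ⟨⟨g, zpowers_le_closure_pair w s g.2⟩, hg⟩
        simp only [hzz, hH''])
    have hmono : ∀ z z' : α, qq (zpowers w) z = qq (zpowers w) z' → qq H' z = qq H' z' := by
      intro z z' hzz
      obtain ⟨g, hg⟩ := (qq_eq_iff _ _ _).1 hzz
      exact (qq_eq_iff _ _ _).2 ⟨⟨g, zpowers_le_closure_pair w s g.2⟩, hg⟩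
    have hsH' : s ∈ H' := Subgroup.subset_closure (by simp)
    have hqH'vx : qq H' (v x) = qq H' x := by
      have := qq_apply_self H' s hsH' x
      rwa [show s x = v x from Equiv.swap_apply_left x (v x)] at this
    have hbij : Function.Bijective f := by
      constructor
      · intro c1 c2 hc
        obtain ⟨z, rfl⟩ := qq_surj _ c1
        obtain ⟨z', rfl⟩ := qq_surj _ c2
        rw [hf, hf] at hc
        by_cases h1 : qq (zpowers w) z = qq (zpowers w) x <;>
          by_cases h2 : qq (zpowers w) z' = qq (zpowers w) x
        · exact h1.trans h2.symm
        · rw [if_pos h1, if_neg h2] at hc; exact absurd hc (by simp)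
        · rw [if_neg h1, if_pos h2] at hc; exact absurd hc (by simp)
        · rw [if_neg h1, if_neg h2] at hc
          have hrel := relC_of_qq_closure_eq w x (v x) z z' (Sum.inl.inj hc)
          rcases hrel with h | ⟨ha1, ha2⟩
          · exact h
          · have e1 : qq (zpowers w) z = qq (zpowers w) (v x) := by
              rcases ha1 with ha1 | ha1
              · exact absurd ha1 h1
              · exact ha1
            have e2 : qq (zpowers w) z' = qq (zpowers w) (v x) := by
              rcases ha2 with ha2 | ha2
              · exact absurd ha2 h2
              · exact ha2
            exact e1.trans e2.symm
      · intro c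
        rcases c with c | u
        · obtain ⟨z, rfl⟩ := qq_surj H' c
          by_cases h1 : qq (zpowers w) z = qq (zpowers w) x
          · refine ⟨qq _ (v x), ?_⟩
            rw [hf, if_neg hqwvx]
            exact congrArg Sum.inl (hqH'vx.trans (hmono x z h1.symm))
          · exact ⟨qq _ z, by rw [hf, if_neg h1]⟩
        · exact ⟨qq _ x, by rw [hf, if_pos rfl]⟩
    rw [Nat.card_eq_of_bijective f hbij]
    simp [Nat.card_sum]
  rw [step2, hHH, ← step1]

noncomputable def ncyc (v : Perm α) : ℕ := Nat.card (QG (zpowers v))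

lemma ncyc_le (v : Perm α) : ncyc v ≤ Fintype.card α := card_QG_le _

lemma ncyc_one : ncyc (1 : Perm α) = Fintype.card α := by
  rw [ncyc, Subgroup.zpowers_one_eq_bot, card_QG_one]

def IsProdSwaps (m : ℕ) (v : Perm α) : Prop :=
  ∃ l : List (Perm α), (∀ x ∈ l, x.IsSwap) ∧ l.length = m ∧ l.prod = v

lemma ncyc_swap_mul_ge (u : Perm α) (a b : α) :
    ncyc u ≤ ncyc (Equiv.swap a b * u) + 1 := by
  refine (card_QG_closure_pair_ge u a b).trans ?_
  have hle : zpowers (Equiv.swap a b * u) ≤ Subgroup.closure {u, Equiv.swap a b} :=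
    zpowers_le.2 (mul_mem (Subgroup.subset_closure (by simp))
      (Subgroup.subset_closure (by simp)))
  exact Nat.add_le_add_right (card_QG_mono hle) 1

lemma ncyc_prod_swaps_ge (l : List (Perm α)) (hl : ∀ x ∈ l, x.IsSwap) :
    Fintype.card α ≤ ncyc l.prod + l.length := by
  induction l with
  | nil => simp [ncyc_one]
  | cons t l ih =>
    obtain ⟨a, b, hab, rfl⟩ := hl t (by simp)
    have h1 := ih (fun x hx => hl x (by simp [hx]))
    have h2 := ncyc_swap_mul_ge l.prod a b
    simp only [List.prod_cons, List.length_cons]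
    omega

lemma isProdSwaps_le {m : ℕ} {v : Perm α} (h : IsProdSwaps m v) :
    Fintype.card α ≤ ncyc v + m := by
  obtain ⟨l, hl, hlen, rfl⟩ := h
  rw [← hlen]
  exact ncyc_prod_swaps_ge l hl

lemma exists_prod_swaps_aux :
    ∀ N (v : Perm α), v.support.card ≤ N →
      IsProdSwaps (Fintype.card α - ncyc v) v := by
  intro N
  induction N with
  | zero =>
    intro v hv
    have : v = 1 := by
      rw [← Equiv.Perm.support_eq_empty_iff, ← Finset.card_eq_zero]; omega
    subst this
    exact ⟨[], by simp, by simp [ncyc_one], by simp⟩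
  | succ N ih =>
    intro v hv
    by_cases h1 : v = 1
    · subst h1
      exact ⟨[], by simp, by simp [ncyc_one], by simp⟩
    · obtain ⟨x, hx⟩ : ∃ x, v x ≠ x := by
        by_contra h
        push_neg at h
        exact h1 (Equiv.ext h)
      have hsup : (Equiv.swap x (v x) * v).support.card < v.support.card :=
        Equiv.Perm.card_support_swap_mul hx
      obtain ⟨l, hl, hlen, hprod⟩ := ih (Equiv.swap x (v x) * v) (by omega)
      have hsplit : ncyc (Equiv.swap x (v x) * v) = ncyc v + 1 :=
        card_QG_swap_mul v x hx
      have hncle := ncyc_le (Equiv.swap x (v x) * v)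
      refine ⟨Equiv.swap x (v x) :: l, ?_, ?_, ?_⟩
      · intro y hy
        rcases List.mem_cons.1 hy with rfl | hy
        · exact ⟨x, v x, Ne.symm hx, rfl⟩
        · exact hl y hy
      · simp only [List.length_cons, hlen, hsplit]
        omega
      · rw [List.prod_cons, hprod, ← mul_assoc, Equiv.swap_mul_self, one_mul]

lemma exists_prod_swaps (v : Perm α) :
    IsProdSwaps (Fintype.card α - ncyc v) v :=
  exists_prod_swaps_aux v.support.card v le_rfl

lemma sign_of_isProdSwaps {m : ℕ} {v : Perm α} (h : IsProdSwaps m v) :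
    Equiv.Perm.sign v = (-1 : ℤˣ) ^ m := by
  obtain ⟨l, hl, hlen, rfl⟩ := h
  rw [Equiv.Perm.sign.map_list_prod]
  have : l.map Equiv.Perm.sign = List.replicate m (-1 : ℤˣ) := by
    apply List.eq_replicate_iff.2
    constructor
    · simp [hlen]
    · intro b hb
      obtain ⟨y, hy, hyb⟩ := List.mem_map.1 hb
      obtain ⟨a, c, hac, rfl⟩ := hl y hy
      rw [← hyb, Equiv.Perm.sign_swap hac]
  rw [this, List.prod_replicate]

lemma sign_eq_pow_ncyc (v : Perm α) :
    Equiv.Perm.sign v = (-1 : ℤˣ) ^ (Fintype.card α - ncyc v) :=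
  sign_of_isProdSwaps (exists_prod_swaps v)

lemma isProdSwaps_pad {m : ℕ} {v : Perm α} (h : IsProdSwaps m v)
    {a b : α} (hab : a ≠ b) : ∀ j, IsProdSwaps (m + 2 * j) v := by
  intro j
  induction j with
  | zero => simpa using h
  | succ j ih =>
    obtain ⟨l, hl, hlen, hprod⟩ := ih
    refine ⟨Equiv.swap a b :: Equiv.swap a b :: l, ?_, ?_, ?_⟩
    · intro y hy
      rcases List.mem_cons.1 hy with rfl | hy
      · exact ⟨a, b, hab, rfl⟩
      rcases List.mem_cons.1 hy with rfl | hy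
      · exact ⟨a, b, hab, rfl⟩
      · exact hl y hy
    · simp only [List.length_cons, hlen]; omega
    · rw [List.prod_cons, List.prod_cons, hprod, ← mul_assoc, Equiv.swap_mul_self, one_mul]

lemma neg_one_pow_inj {m l : ℕ} (h : (-1 : ℤˣ) ^ m = (-1 : ℤˣ) ^ l) :
    (Even m ↔ Even l) := by
  rcases Nat.even_or_odd m with hm | hm <;> rcases Nat.even_or_odd l with hl | hl
  · simp [hm, hl]
  · rw [hm.neg_one_pow, hl.neg_one_pow] at h
    exact absurd h (by decide)
  · rw [hm.neg_one_pow, hl.neg_one_pow] at h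
    exact absurd h (by decide)
  · simp [Nat.not_even_iff_odd.symm.1 hm, Nat.not_even_iff_odd.symm.1 hl]

lemma isProdSwaps_iff {m : ℕ} {v : Perm α} {a b : α} (hab : a ≠ b) :
    IsProdSwaps m v ↔
      (Fintype.card α - ncyc v ≤ m ∧ (-1 : ℤˣ) ^ m = Equiv.Perm.sign v) := by
  constructor
  · intro h
    have h1 := isProdSwaps_le h
    have h2 := (sign_of_isProdSwaps h).symm
    exact ⟨by omega, h2⟩
  · rintro ⟨h1, h2⟩
    have hL := exists_prod_swaps v
    set L := Fintype.card α - ncyc v with hLdef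
    have hpar : Even m ↔ Even L := by
      apply neg_one_pow_inj
      rw [h2, sign_eq_pow_ncyc v]
    obtain ⟨j, hj⟩ : ∃ j, m = L + 2 * j := by
      rcases Nat.even_or_odd m with hm | hm
      · have : Even L := hpar.1 hm
        obtain ⟨p, hp⟩ := hm; obtain ⟨q, hq⟩ := this
        exact ⟨p - q, by omega⟩
      · have : ¬ Even L := fun hL' => (Nat.not_even_iff_odd.symm.1 hm) (hpar.2 hL')
        have hLodd : Odd L := Nat.not_even_iff_odd.symm.2 this
        obtain ⟨p, hp⟩ := hm; obtain ⟨q, hq⟩ := hLodd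
        exact ⟨p - q, by omega⟩
    rw [hj]
    exact isProdSwaps_pad hL hab j

end Aux
section FinStuff
variable {n : ℕ} (h1 : 1 < n)

def sw0 (h1 : 1 < n) : Equiv.Perm (Fin n) :=
  Equiv.swap (⟨0, Nat.lt_trans Nat.zero_lt_one h1⟩ : Fin n) ⟨1, h1⟩

lemma sw0_ne : (⟨0, by omega⟩ : Fin n) ≠ ⟨1, h1⟩ := by
  intro h
  exact absurd (congrArg Fin.val h) (by simp)

lemma sw0_mul_self : sw0 h1 * sw0 h1 = 1 := Equiv.swap_mul_self _ _

lemma sw0_pow_even (p : ℕ) : sw0 h1 ^ (2 * p) = 1 := by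
  rw [pow_mul, show sw0 h1 ^ 2 = 1 from by rw [sq, sw0_mul_self], one_pow]

lemma sw0_pow_odd (p : ℕ) : sw0 h1 ^ (2 * p + 1) = sw0 h1 := by
  rw [pow_succ, sw0_pow_even, one_mul]

lemma conj_isSwap (g t : Equiv.Perm (Fin n)) (ht : t.IsSwap) :
    (g * t * g⁻¹).IsSwap := by
  obtain ⟨x, y, hxy, rfl⟩ := ht
  exact ⟨g x, g y, fun h => hxy (g.injective h), (Equiv.swap_apply_apply g x y).symm⟩

lemma mem_ATrans_iff (x : Equiv.Perm (Fin n)) :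
    x ∈ ATrans n ↔ ∃ t : Equiv.Perm (Fin n), t.IsSwap ∧ x = sw0 h1 * t := by
  constructor
  · rintro ⟨h1', i, j, hij, rfl⟩
    exact ⟨Equiv.swap i j, ⟨i, j, ne_of_lt hij, rfl⟩, rfl⟩
  · rintro ⟨t, ⟨a, b, hab, rfl⟩, rfl⟩
    rcases lt_or_gt_of_ne hab with h | h
    · exact ⟨h1, a, b, h, rfl⟩
    · exact ⟨h1, b, a, h, by rw [show Equiv.swap a b = Equiv.swap b a from Equiv.swap_comm a b]; rfl⟩

/-- Converting a product of `T`-elements to `s₀ ^ len *` (product of swaps). -/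
lemma prod_ATrans_eq (l : List (Equiv.Perm (Fin n))) (hl : ∀ x ∈ l, x ∈ ATrans n) :
    ∃ u : List (Equiv.Perm (Fin n)), (∀ x ∈ u, x.IsSwap) ∧ u.length = l.length ∧
      l.prod = sw0 h1 ^ l.length * u.prod := by
  induction l with
  | nil => exact ⟨[], by simp, by simp, by simp⟩
  | cons x xs ih =>
    obtain ⟨u, hu, hlen, hprod⟩ := ih (fun y hy => hl y (by simp [hy]))
    obtain ⟨t, ht, rfl⟩ := (mem_ATrans_iff h1 x).1 (hl x (by simp))
    set m := xs.length with hm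
    refine ⟨((sw0 h1 ^ m)⁻¹ * t * sw0 h1 ^ m) :: u, ?_, by simp [hlen, hm], ?_⟩
    · intro y hy
      rcases List.mem_cons.1 hy with rfl | hy
      · have := conj_isSwap (sw0 h1 ^ m)⁻¹ t ht
        rwa [inv_inv] at this
      · exact hu y hy
    · rw [List.prod_cons, hprod, List.length_cons, List.prod_cons]
      rw [pow_succ]
      rw [← hm]
      group

/-- Converting a product of swaps to a product of `T`-elements. -/
lemma prod_swaps_to_ATrans (u : List (Equiv.Perm (Fin n))) (hu : ∀ x ∈ u, x.IsSwap) :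
    ∃ l : List (Equiv.Perm (Fin n)), (∀ x ∈ l, x ∈ ATrans n) ∧ l.length = u.length ∧
      l.prod = sw0 h1 ^ u.length * u.prod := by
  induction u with
  | nil => exact ⟨[], by simp, by simp, by simp⟩
  | cons t ts ih =>
    obtain ⟨l, hlmem, hlen, hprod⟩ := ih (fun y hy => hu y (by simp [hy]))
    set m := ts.length with hm
    have htsw : ((sw0 h1 ^ m) * t * (sw0 h1 ^ m)⁻¹).IsSwap :=
      conj_isSwap _ _ (hu t (by simp))
    refine ⟨(sw0 h1 * ((sw0 h1 ^ m) * t * (sw0 h1 ^ m)⁻¹)) :: l, ?_, by simp [hlen, hm], ?_⟩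
    · intro y hy
      rcases List.mem_cons.1 hy with rfl | hy
      · exact (mem_ATrans_iff h1 _).2 ⟨_, htsw, rfl⟩
      · exact hlmem y hy
    · rw [List.prod_cons, hprod, List.length_cons, List.prod_cons]
      rw [pow_succ]
      rw [← hm]
      group

end FinStuff

section Main
open Equiv Equiv.Perm Subgroup

lemma alen_mem_iff {n : ℕ} (h1 : 1 < n) (v : Equiv.Perm (Fin n)) (k : ℕ) :
    (∃ l : List (Equiv.Perm (Fin n)),
        (∀ x ∈ l, x ∈ ATrans n) ∧ l.length = k ∧ l.prod = v) ↔
      ((Even k ∧ IsProdSwaps k v) ∨ (Odd k ∧ IsProdSwaps k (sw0 h1 * v))) := by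
  constructor
  · rintro ⟨l, hl, rfl, rfl⟩
    obtain ⟨u, hu, hulen, hprod⟩ := prod_ATrans_eq h1 l hl
    rcases Nat.even_or_odd l.length with he | ho
    · obtain ⟨p, hp⟩ := he
      refine Or.inl ⟨⟨p, hp⟩, u, hu, hulen, ?_⟩
      rw [hprod, show l.length = 2 * p by omega, sw0_pow_even, one_mul]
    · obtain ⟨p, hp⟩ := ho
      refine Or.inr ⟨⟨p, hp⟩, u, hu, hulen, ?_⟩
      rw [hprod, hp, sw0_pow_odd, ← mul_assoc, sw0_mul_self, one_mul]
  · rintro (⟨⟨p, hp⟩, u, hu, hulen, hprod⟩ | ⟨⟨p, hp⟩, u, hu, hulen, hprod⟩)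
    · obtain ⟨l, hlmem, hllen, hlprod⟩ := prod_swaps_to_ATrans h1 u hu
      refine ⟨l, hlmem, by omega, ?_⟩
      rw [hlprod, hulen, show k = 2 * p by omega, sw0_pow_even, one_mul, hprod]
    · obtain ⟨l, hlmem, hllen, hlprod⟩ := prod_swaps_to_ATrans h1 u hu
      refine ⟨l, hlmem, by omega, ?_⟩
      rw [hlprod, hulen, hp, sw0_pow_odd, hprod, ← mul_assoc, sw0_mul_self, one_mul]

lemma even_of_neg_one_pow {m : ℕ} (h : (-1 : ℤˣ) ^ m = 1) : Even m := by
  have : (-1 : ℤˣ) ^ m = (-1 : ℤˣ) ^ 0 := by simpa using h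
  exact (neg_one_pow_inj this).2 Even.zero

lemma odd_of_neg_one_pow {m : ℕ} (h : (-1 : ℤˣ) ^ m = -1) : Odd m := by
  have : (-1 : ℤˣ) ^ m = (-1 : ℤˣ) ^ 1 := by simpa using h
  rw [← Nat.not_even_iff_odd]
  intro he
  exact absurd ((neg_one_pow_inj this).1 he) (by decide)

lemma sign_sw0 {n : ℕ} (h1 : 1 < n) : Equiv.Perm.sign (sw0 h1) = -1 :=
  Equiv.Perm.sign_swap (sw0_ne h1)

lemma alen_eq_min {n : ℕ} (h1 : 1 < n) (v : Equiv.Perm (Fin n))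
    (hv : Equiv.Perm.sign v = 1) :
    alen n v = min (n - ncyc v) (n - ncyc (sw0 h1 * v)) := by
  have hcard : Fintype.card (Fin n) = n := Fintype.card_fin n
  set L := n - ncyc v with hL
  set L' := n - ncyc (sw0 h1 * v) with hL'
  have hvle := ncyc_le v
  have hv'le := ncyc_le (sw0 h1 * v)
  rw [hcard] at hvle hv'le
  have hsv : Equiv.Perm.sign (sw0 h1 * v) = -1 := by
    rw [Equiv.Perm.sign_mul, sign_sw0, hv, mul_one]
  have hsignL : ((-1 : ℤˣ)) ^ L = Equiv.Perm.sign v := by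
    rw [sign_eq_pow_ncyc v, hcard]
  have hsignL' : ((-1 : ℤˣ)) ^ L' = Equiv.Perm.sign (sw0 h1 * v) := by
    rw [sign_eq_pow_ncyc (sw0 h1 * v), hcard]
  have hLeven : Even L := even_of_neg_one_pow (by rw [hsignL, hv])
  have hL'odd : Odd L' := odd_of_neg_one_pow (by rw [hsignL', hsv])
  have hmem : ∃ l : List (Equiv.Perm (Fin n)),
      (∀ x ∈ l, x ∈ ATrans n) ∧ l.length = min L L' ∧ l.prod = v := by
    rw [alen_mem_iff h1]
    rcases le_total L L' with h | h
    · rw [min_eq_left h]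
      exact Or.inl ⟨hLeven, (isProdSwaps_iff (sw0_ne h1)).2 ⟨by rw [hcard], by rw [hsignL, hv]⟩⟩
    · rw [min_eq_right h]
      exact Or.inr ⟨hL'odd,
        (isProdSwaps_iff (sw0_ne h1)).2 ⟨by rw [hcard], by rw [hsignL', hsv]⟩⟩
  have hlb : ∀ j ∈ {k | ∃ l : List (Equiv.Perm (Fin n)),
      (∀ x ∈ l, x ∈ ATrans n) ∧ l.length = k ∧ l.prod = v}, min L L' ≤ j := by
    intro j hj
    rcases (alen_mem_iff h1 v j).1 hj with ⟨_, hps⟩ | ⟨_, hps⟩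
    · have := isProdSwaps_le hps
      rw [hcard] at this
      exact le_trans (min_le_left _ _) (by omega)
    · have := isProdSwaps_le hps
      rw [hcard] at this
      exact le_trans (min_le_right _ _) (by omega)
  rw [alen]
  exact le_antisymm (Nat.sInf_le hmem) (le_csInf ⟨_, hmem⟩ hlb)

/-- For `n ≥ 3` and `1 ≤ k ≤ n - 1` (both parities of `k`), the number of permutations
of `{1,…,n}` with exactly `n - k` cycles equals `a(n,k) + a(n,k-1)`, i.e.
`c(n, n-k) = a(n,k) + a(n,k-1)`. -/
theorem stmt_12 (n : ℕ) (hn : 3 ≤ n) (k : ℕ) (hk1 : 1 ≤ k) (hk2 : k ≤ n - 1) :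
    Nat.card {v : Equiv.Perm (Fin n) // cycNum n v = n - k}
      = aCount n k + aCount n (k - 1) := by
  classical
  have h1 : 1 < n := by omega
  set s₀ := sw0 h1 with hs₀
  have hcard : Fintype.card (Fin n) = n := Fintype.card_fin n
  have hcyc : ∀ v : Equiv.Perm (Fin n), cycNum n v = ncyc v := fun v => rfl
  have hs₀s₀ : ∀ v : Equiv.Perm (Fin n), s₀ * (s₀ * v) = v := fun v => by
    rw [← mul_assoc, hs₀, sw0_mul_self, one_mul]
  have hsign_s₀ : ∀ v : Equiv.Perm (Fin n),
      Equiv.Perm.sign (s₀ * v) = - Equiv.Perm.sign v := fun v => by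
    rw [Equiv.Perm.sign_mul, hs₀, sign_sw0, neg_one_mul]
  have hb1 : ∀ v : Equiv.Perm (Fin n), ncyc v ≤ ncyc (s₀ * v) + 1 := fun v =>
    ncyc_swap_mul_ge v (⟨0, Nat.lt_trans Nat.zero_lt_one h1⟩ : Fin n) ⟨1, h1⟩
  have hb2 : ∀ v : Equiv.Perm (Fin n), ncyc (s₀ * v) ≤ ncyc v + 1 := fun v => by
    have := hb1 (s₀ * v)
    rwa [hs₀s₀ v] at this
  have hne : ∀ v : Equiv.Perm (Fin n), ncyc (s₀ * v) ≠ ncyc v := by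
    intro v h
    have e1 : Equiv.Perm.sign (s₀ * v) = Equiv.Perm.sign v := by
      rw [sign_eq_pow_ncyc (s₀ * v), sign_eq_pow_ncyc v, h]
    rw [hsign_s₀ v] at e1
    rcases Int.units_eq_one_or (Equiv.Perm.sign v) with h' | h' <;> rw [h'] at e1 <;>
      exact absurd e1 (by decide)
  have halen : ∀ v : Equiv.Perm (Fin n), Equiv.Perm.sign v = 1 →
      alen n v = min (n - ncyc v) (n - ncyc (s₀ * v)) := fun v hv =>
    alen_eq_min h1 v hv
  set F : Equiv.Perm (Fin n) → Equiv.Perm (Fin n) :=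
    fun v => if Equiv.Perm.sign v = 1 then v else s₀ * v with hF
  have hFdef : ∀ v, F v = if Equiv.Perm.sign v = 1 then v else s₀ * v := fun v => rfl
  have hFsign : ∀ v, Equiv.Perm.sign (F v) = 1 := by
    intro v
    rw [hFdef]
    by_cases h : Equiv.Perm.sign v = 1
    · rw [if_pos h]; exact h
    · rw [if_neg h, hsign_s₀]
      rcases Int.units_eq_one_or (Equiv.Perm.sign v) with h' | h'
      · exact absurd h' h
      · rw [h']; decide
  have hkey : ∀ v : Equiv.Perm (Fin n), ncyc v = n - k →
      alen n (F v) = k ∨ alen n (F v) = k - 1 := by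
    intro v hv
    have hvle := ncyc_le v; rw [hcard] at hvle
    have hv'le := ncyc_le (s₀ * v); rw [hcard] at hv'le
    have hd1 := hb1 v; have hd2 := hb2 v; have hd3 := hne v
    by_cases hsv : Equiv.Perm.sign v = 1
    · have hFv : F v = v := by rw [hFdef]; exact if_pos hsv
      rw [hFv, halen v hsv]
      omega
    · have hFv : F v = s₀ * v := by rw [hFdef]; exact if_neg hsv
      have hsv' : Equiv.Perm.sign (s₀ * v) = 1 := by
        rw [← hFv]; exact hFsign v
      rw [hFv, halen (s₀ * v) hsv', hs₀s₀ v]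
      omega
  have hFinj : ∀ v w : Equiv.Perm (Fin n), ncyc v = n - k → ncyc w = n - k →
      F v = F w → v = w := by
    intro v w hv hw hvw
    rw [hFdef v, hFdef w] at hvw
    by_cases h1' : Equiv.Perm.sign v = 1 <;> by_cases h2' : Equiv.Perm.sign w = 1
    · rw [if_pos h1', if_pos h2'] at hvw; exact hvw
    · rw [if_pos h1', if_neg h2'] at hvw
      rw [hvw] at hv
      exact absurd (hv.trans hw.symm) (hne w)
    · rw [if_neg h1', if_pos h2'] at hvw
      rw [← hvw] at hw
      exact absurd (hw.trans hv.symm) (hne v)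
    · rw [if_neg h1', if_neg h2'] at hvw; exact mul_left_cancel hvw
  -- Finset versions
  have e0 : Nat.card {v : Equiv.Perm (Fin n) // cycNum n v = n - k} =
      (Finset.univ.filter (fun v : Equiv.Perm (Fin n) => cycNum n v = n - k)).card := by
    rw [Nat.card_eq_fintype_card, Fintype.card_subtype]
  have eB : aCount n k = (Finset.univ.filter (fun v : Equiv.Perm (Fin n) =>
      v ∈ alternatingGroup (Fin n) ∧ alen n v = k)).card := by
    rw [aCount, Nat.card_eq_fintype_card, Fintype.card_subtype]
  have eC : aCount n (k - 1) = (Finset.univ.filter (fun v : Equiv.Perm (Fin n) =>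
      v ∈ alternatingGroup (Fin n) ∧ alen n v = k - 1)).card := by
    rw [aCount, Nat.card_eq_fintype_card, Fintype.card_subtype]
  have hstep1 : (Finset.univ.filter (fun v : Equiv.Perm (Fin n) =>
        cycNum n v = n - k)).card =
      (Finset.univ.filter (fun v : Equiv.Perm (Fin n) =>
        (v ∈ alternatingGroup (Fin n) ∧ alen n v = k) ∨
        (v ∈ alternatingGroup (Fin n) ∧ alen n v = k - 1))).card := by
    refine Finset.card_bij (fun v _ => F v) ?_ ?_ ?_
    · intro v hv
      rw [Finset.mem_filter] at hv ⊢
      refine ⟨Finset.mem_univ _, ?_⟩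
      have hv' : ncyc v = n - k := by rw [← hcyc]; exact hv.2
      have hmem : F v ∈ alternatingGroup (Fin n) :=
        Equiv.Perm.mem_alternatingGroup.2 (hFsign v)
      rcases hkey v hv' with h | h
      · exact Or.inl ⟨hmem, h⟩
      · exact Or.inr ⟨hmem, h⟩
    · intro v hv w hw hvw
      rw [Finset.mem_filter] at hv hw
      exact hFinj v w (by rw [← hcyc]; exact hv.2) (by rw [← hcyc]; exact hw.2) hvw
    · intro u hu
      rw [Finset.mem_filter] at hu
      have humem : u ∈ alternatingGroup (Fin n) := by
        rcases hu.2 with h | h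
        · exact h.1
        · exact h.1
      have husign : Equiv.Perm.sign u = 1 := Equiv.Perm.mem_alternatingGroup.1 humem
      have hualen : alen n u = k ∨ alen n u = k - 1 := by
        rcases hu.2 with h | h
        · exact Or.inl h.2
        · exact Or.inr h.2
      have hvle := ncyc_le u; rw [hcard] at hvle
      have hv'le := ncyc_le (s₀ * u); rw [hcard] at hv'le
      have hd1 := hb1 u; have hd2 := hb2 u; have hd3 := hne u
      have hmin := halen u husign
      have hcase : ncyc u = n - k ∨ ncyc (s₀ * u) = n - k := by omega
      rcases hcase with hcase | hcase
      · refine ⟨u, ?_, ?_⟩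
        · rw [Finset.mem_filter]
          exact ⟨Finset.mem_univ _, by rw [hcyc, hcase]⟩
        · show F u = u
          rw [hFdef]; exact if_pos husign
      · refine ⟨s₀ * u, ?_, ?_⟩
        · rw [Finset.mem_filter]
          exact ⟨Finset.mem_univ _, by rw [hcyc, hcase]⟩
        · have hsgn : ¬ (Equiv.Perm.sign (s₀ * u) = 1) := by
            rw [hsign_s₀, husign]; decide
          show F (s₀ * u) = u
          rw [hFdef, if_neg hsgn, hs₀s₀]
  have hdisj : Disjoint
      (Finset.univ.filter (fun v : Equiv.Perm (Fin n) =>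
        v ∈ alternatingGroup (Fin n) ∧ alen n v = k))
      (Finset.univ.filter (fun v : Equiv.Perm (Fin n) =>
        v ∈ alternatingGroup (Fin n) ∧ alen n v = k - 1)) := by
    rw [Finset.disjoint_filter]
    intro v _ hv hv'
    omega
  rw [e0, hstep1, Finset.filter_or, Finset.card_union_of_disjoint hdisj, eB, eC]

end Main
end

section
/- For every n ≥ 2, the generating polynomial of length on A_n factors as ∑_{v ∈ A_n} x^{ℓ(v)} = ∑_{k=0}^{n} a(n,k)·x^k = (1+2x)(1+3x)⋯(1+(n-1)x) = ∏_{t=2}^{n-1} (1+tx), as an identity of polynomials. -/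
namespace AlenProof

open Equiv Equiv.Perm List Polynomial

set_option linter.unusedSectionVars false

lemma multiset_card_le_sum {s : Multiset ℕ} (h : ∀ i ∈ s, 1 ≤ i) : Multiset.card s ≤ s.sum := by
  induction s using Multiset.induction_on with
  | empty => simp
  | cons a s ih =>
    simp only [Multiset.card_cons, Multiset.sum_cons]
    have ha := h a (Multiset.mem_cons_self a s)
    have := ih fun i hi => h i (Multiset.mem_cons_of_mem hi)
    omega

variable {α : Type*} [DecidableEq α] [Fintype α]

/-- `fl w = ∑ (mᵢ - 1)` over cycle lengths: the absolute (transposition) length statistic. -/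
def fl (w : Perm α) : ℕ := w.cycleType.sum - Multiset.card w.cycleType

lemma card_le_sum_cycleType (w : Perm α) : Multiset.card w.cycleType ≤ w.cycleType.sum :=
  multiset_card_le_sum fun i hi => le_trans one_le_two (Equiv.Perm.two_le_of_mem_cycleType hi)

@[simp] lemma fl_one : fl (1 : Perm α) = 0 := by simp [fl]

lemma fl_eq_zero_iff {w : Perm α} : fl w = 0 ↔ w = 1 := by
  constructor
  · intro h
    by_contra hw
    have hc : Multiset.card w.cycleType ≠ 0 := by
      simpa [Equiv.Perm.card_cycleType_eq_zero] using hw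
    have hne : w.cycleType ≠ 0 := by intro h0; rw [h0] at hc; simp at hc
    obtain ⟨m, hm⟩ := Multiset.exists_mem_of_ne_zero hne
    have h2 : 2 ≤ m := Equiv.Perm.two_le_of_mem_cycleType hm
    have hsum : Multiset.card w.cycleType < w.cycleType.sum := by
      obtain ⟨s, hs⟩ := Multiset.exists_cons_of_mem hm
      have hss : Multiset.card s ≤ s.sum := multiset_card_le_sum fun i hi =>
        le_trans one_le_two (Equiv.Perm.two_le_of_mem_cycleType (by rw [hs]; exact Multiset.mem_cons_of_mem hi))
      rw [hs]
      simp only [Multiset.card_cons, Multiset.sum_cons]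
      omega
    unfold fl at h
    omega
  · rintro rfl; simp

lemma fl_mul_of_disjoint {σ τ : Perm α} (h : Equiv.Perm.Disjoint σ τ) :
    fl (σ * τ) = fl σ + fl τ := by
  unfold fl
  rw [h.cycleType_mul]
  have h1 := card_le_sum_cycleType σ
  have h2 := card_le_sum_cycleType τ
  simp only [Multiset.sum_add, Multiset.card_add]
  omega

lemma fl_isCycle {σ : Perm α} (h : Equiv.Perm.IsCycle σ) : fl σ = σ.support.card - 1 := by
  unfold fl
  rw [h.cycleType]
  simp

lemma sign_eq_pow_fl (w : Perm α) : Equiv.Perm.sign w = (-1) ^ (fl w) := by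
  rw [Equiv.Perm.sign_of_cycleType]
  have h := card_le_sum_cycleType w
  unfold fl
  obtain ⟨d, hd⟩ := Nat.exists_eq_add_of_le h
  rw [hd]
  rw [show Multiset.card w.cycleType + d - Multiset.card w.cycleType = d by omega]
  rw [show Multiset.card w.cycleType + d + Multiset.card w.cycleType =
    2 * Multiset.card w.cycleType + d by ring]
  rw [pow_add, pow_mul]
  simp

lemma fl_le_card (w : Perm α) : fl w ≤ Fintype.card α := by
  unfold fl
  have : w.cycleType.sum ≤ Fintype.card α := by
    rw [Equiv.Perm.sum_cycleType]
    exact Finset.card_le_univ _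
  omega


variable {α : Type*} [DecidableEq α] [Fintype α]

lemma swap_shift {a c b : α} (hac : a ≠ c) (hcb : c ≠ b) (hab : a ≠ b) :
    Equiv.swap a c * Equiv.swap c b = Equiv.swap a b * Equiv.swap a c := by
  ext x
  simp only [Equiv.Perm.mul_apply, Equiv.swap_apply_def]
  rcases eq_or_ne x a with rfl | hxa
  · simp [hac, hab, hac.symm, hcb]
  · rcases eq_or_ne x c with rfl | hxc
    · simp [hac.symm, hcb, hab.symm, hcb.symm, hac]
    · rcases eq_or_ne x b with rfl | hxb
      · simp [hcb.symm, hab.symm, hac.symm, hab, hcb]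
      · simp [hxa, hxc, hxb]

/-- Splitting a cycle: `formPerm (a :: A ++ b :: B) = swap a b * formPerm (a::A) * formPerm (b::B)`. -/
lemma formPerm_split (A : List α) : ∀ (a b : α) (B : List α),
    (a :: A ++ b :: B).Nodup →
    List.formPerm (a :: A ++ b :: B) =
      Equiv.swap a b * List.formPerm (a :: A) * List.formPerm (b :: B) := by
  induction A with
  | nil =>
    intro a b B _
    simp [List.formPerm_cons_cons]
  | cons c A ih =>
    intro a b B hnd
    have hnd' := hnd
    simp only [List.cons_append, List.nodup_cons, List.mem_append, List.mem_cons] at hnd'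
    have h1 : (c :: A ++ b :: B).Nodup := by
      simp only [List.cons_append, List.nodup_cons, List.mem_append, List.mem_cons]
      tauto
    have hac : a ≠ c := by tauto
    have hcb : c ≠ b := by tauto
    have hab : a ≠ b := by tauto
    have : List.formPerm (a :: (c :: A) ++ b :: B)
        = Equiv.swap a c * List.formPerm (c :: A ++ b :: B) := by
      simp [List.formPerm_cons_cons]
    rw [this, ih c b B h1, List.formPerm_cons_cons]
    rw [← mul_assoc, ← mul_assoc, ← mul_assoc, swap_shift hac hcb hab]


lemma fl_formPerm {l : List α} (hl : l.Nodup) : fl (List.formPerm l) = l.length - 1 := by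
  rcases le_or_gt l.length 1 with h | h
  · rw [(List.formPerm_eq_one_iff l hl).2 h]
    simp only [fl_one]
    omega
  · have hc := List.isCycle_formPerm hl h
    rw [fl_isCycle hc, List.support_formPerm_of_nodup l hl]
    · rw [List.card_toFinset, List.dedup_eq_self.mpr hl]
    · intro x hx
      rw [hx] at h
      simp at h

lemma inv_fix {σ : Perm α} {z : α} (h : σ z = z) : σ⁻¹ z = z := by
  conv_lhs => rw [← h]
  exact Equiv.symm_apply_apply _ _

/-- the rest of `w` after removing the cycle of `x`. -/
def rest (w : Perm α) (x : α) : Perm α := (w.cycleOf x)⁻¹ * w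

lemma cycleOf_mul_rest (w : Perm α) (x : α) : w.cycleOf x * rest w x = w := by
  simp [rest, mul_assoc]

lemma rest_apply_of_sameCycle {w : Perm α} {x z : α} (h : w.SameCycle x z) :
    rest w x z = z := by
  have h1 : w.cycleOf x z = w z := by rw [cycleOf_apply, if_pos h]
  have h2 : (w.cycleOf x)⁻¹ (w z) = z := by
    rw [← h1]; exact Equiv.symm_apply_apply _ _
  simpa [rest] using h2

lemma rest_apply_of_not_sameCycle {w : Perm α} {x z : α} (h : ¬ w.SameCycle x (w z)) :
    rest w x z = w z := by
  have h1 : w.cycleOf x (w z) = w z := cycleOf_apply_of_not_sameCycle h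
  simp only [rest, Equiv.Perm.mul_apply]
  exact inv_fix h1

lemma disjoint_cycleOf_rest (w : Perm α) (x : α) :
    Equiv.Perm.Disjoint (w.cycleOf x) (rest w x) := by
  intro z
  by_cases h : w.SameCycle x z
  · exact Or.inr (rest_apply_of_sameCycle h)
  · exact Or.inl (cycleOf_apply_of_not_sameCycle h)

lemma fl_eq_cycleOf_add_rest (w : Perm α) {x : α} (hx : w x ≠ x) :
    fl w = ((w.cycleOf x).support.card - 1) + fl (rest w x) := by
  conv_lhs => rw [← cycleOf_mul_rest w x]
  rw [fl_mul_of_disjoint (disjoint_cycleOf_rest w x), fl_isCycle (isCycle_cycleOf w hx)]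

lemma toList_eq_cons {w : Perm α} {x : α} (hx : x ∈ w.support) :
    ∃ t, w.toList x = x :: t := by
  have h1 : 0 < (w.toList x).length := length_toList_pos_of_mem_support _ _ hx
  rw [Equiv.Perm.toList] at *
  rw [List.length_iterate] at h1
  obtain ⟨m, hm⟩ := Nat.exists_eq_add_of_lt h1
  rw [hm, zero_add]
  exact ⟨_, rfl⟩

lemma sameCycle_of_fix {w : Perm α} {x y : α} (h : w.SameCycle x y) (hx : w x = x) : y = x := by
  obtain ⟨i, rfl⟩ := h
  exact zpow_apply_eq_self_of_apply_eq_self hx i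

lemma two_le_length_toList {w : Perm α} {x : α} (hx : w x ≠ x) :
    2 ≤ (w.toList x).length := by
  rw [length_toList]
  exact two_le_card_support_cycleOf_iff.2 hx

/-- SURGERY, merge case. -/
theorem fl_swap_mul_of_not_sameCycle {w : Perm α} {x y : α} (hxy : x ≠ y)
    (h : ¬ w.SameCycle x y) : fl (Equiv.swap x y * w) = fl w + 1 := by
  by_cases hx : w x = x
  · by_cases hy : w y = y
    · -- both fixed: disjoint product
      have hd : Equiv.Perm.Disjoint (Equiv.swap x y) w := by
        intro z
        by_cases hz : z = x
        · subst hz; exact Or.inr hx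
        by_cases hz' : z = y
        · subst hz'; exact Or.inr hy
        · exact Or.inl (Equiv.swap_apply_of_ne_of_ne hz hz')
      rw [fl_mul_of_disjoint hd, fl_isCycle (isCycle_swap hxy), card_support_swap hxy]
      omega
    · -- x fixed, y moved: prepend x to the cycle of y
      have hys : y ∈ w.support := mem_support.2 hy
      obtain ⟨t, ht⟩ := toList_eq_cons hys
      set l := w.toList y with hl
      have hnd : l.Nodup := nodup_toList w y
      have hscyx : ¬ w.SameCycle y x := by
        intro hc
        exact hxy (sameCycle_of_fix hc.symm hx).symm
      have hxl : x ∉ l := by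
        intro hc
        rw [mem_toList_iff] at hc
        exact hscyx hc.1
      have hw' : w = List.formPerm l * rest w y := by
        rw [hl, formPerm_toList, cycleOf_mul_rest]
      have hflx : List.formPerm (x :: l) = Equiv.swap x y * List.formPerm l := by
        rw [ht]
        exact List.formPerm_cons_cons _ _ _
      have hkey : Equiv.swap x y * w = List.formPerm (x :: l) * rest w y := by
        rw [hflx, mul_assoc, ← hw']
      have hdisj : Equiv.Perm.Disjoint (List.formPerm (x :: l)) (rest w y) := by
        intro z
        by_cases hz : z ∈ (x :: l)
        · refine Or.inr ?_
          rcases List.mem_cons.mp hz with rfl | hz'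
          · -- rest w y fixes x
            have h1 : w.cycleOf y z = z := cycleOf_apply_of_not_sameCycle hscyx
            have : rest w y z = (w.cycleOf y)⁻¹ (w z) := rfl
            rw [this, hx, inv_fix h1]
          · rw [mem_toList_iff] at hz'
            exact rest_apply_of_sameCycle hz'.1
        · exact Or.inl (List.formPerm_apply_of_notMem hz)
      rw [hkey, fl_mul_of_disjoint hdisj, fl_formPerm (List.nodup_cons.2 ⟨hxl, hnd⟩),
        fl_eq_cycleOf_add_rest w hy, ← length_toList, ← hl]
      have h2 := two_le_length_toList hy
      rw [← hl] at h2
      simp only [List.length_cons]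
      omega
  · by_cases hy : w y = y
    · -- y fixed, x moved: prepend y to the cycle of x
      have hxs : x ∈ w.support := mem_support.2 hx
      obtain ⟨t, ht⟩ := toList_eq_cons hxs
      set l := w.toList x with hl
      have hnd : l.Nodup := nodup_toList w x
      have hscxy : ¬ w.SameCycle x y := h
      have hyl : y ∉ l := by
        intro hc
        rw [mem_toList_iff] at hc
        exact hscxy hc.1
      have hw' : w = List.formPerm l * rest w x := by
        rw [hl, formPerm_toList, cycleOf_mul_rest]
      have hflx : List.formPerm (y :: l) = Equiv.swap x y * List.formPerm l := by
        rw [ht, Equiv.swap_comm]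
        exact List.formPerm_cons_cons _ _ _
      have hkey : Equiv.swap x y * w = List.formPerm (y :: l) * rest w x := by
        rw [hflx, mul_assoc, ← hw']
      have hdisj : Equiv.Perm.Disjoint (List.formPerm (y :: l)) (rest w x) := by
        intro z
        by_cases hz : z ∈ (y :: l)
        · refine Or.inr ?_
          rcases List.mem_cons.mp hz with rfl | hz'
          · have h1 : w.cycleOf x z = z := cycleOf_apply_of_not_sameCycle hscxy
            have : rest w x z = (w.cycleOf x)⁻¹ (w z) := rfl
            rw [this, hy, inv_fix h1]
          · rw [mem_toList_iff] at hz'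
            exact rest_apply_of_sameCycle hz'.1
        · exact Or.inl (List.formPerm_apply_of_notMem hz)
      rw [hkey, fl_mul_of_disjoint hdisj, fl_formPerm (List.nodup_cons.2 ⟨hyl, hnd⟩),
        fl_eq_cycleOf_add_rest w hx, ← length_toList, ← hl]
      have h2 := two_le_length_toList hx
      rw [← hl] at h2
      simp only [List.length_cons]
      omega
    · -- both moved, different cycles: merge the two cycles
      have hxs : x ∈ w.support := mem_support.2 hx
      obtain ⟨t1, ht1⟩ := toList_eq_cons hxs
      set l1 := w.toList x with hl1
      set ρ1 := rest w x with hρ1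
      have hρ1y : ρ1 y = w y := by
        apply rest_apply_of_not_sameCycle
        intro hc
        exact h ((sameCycle_apply_right).mp hc)
      have hρ1yy : ρ1 y ≠ y := by rw [hρ1y]; exact hy
      have hys : y ∈ ρ1.support := mem_support.2 hρ1yy
      obtain ⟨t2, ht2⟩ := toList_eq_cons hys
      set l2 := ρ1.toList y with hl2
      -- cycleOf ρ1 y = cycleOf w y
      have hcyc : ρ1.cycleOf y = w.cycleOf y := by
        have hdecomp := (disjoint_cycleOf_rest w x)
        have := hdecomp.cycleOf_mul_distrib y
        rw [cycleOf_mul_rest w x] at this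
        rw [this]
        have h1 : (w.cycleOf x).cycleOf y = 1 := by
          rw [cycleOf_eq_one_iff]
          exact cycleOf_apply_of_not_sameCycle h
        rw [h1, one_mul]
      -- SameCycle ρ1 y z ↔ SameCycle w y z
      have hsc2 : ∀ z, ρ1.SameCycle y z ↔ w.SameCycle y z := by
        intro z
        rcases eq_or_ne z y with rfl | hzy
        · simp [Equiv.Perm.SameCycle.refl]
        constructor
        · intro hc
          have : z ∈ (ρ1.cycleOf y).support := mem_support_cycleOf_iff.2 ⟨hc, hys⟩
          rw [hcyc] at this
          exact (mem_support_cycleOf_iff.1 this).1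
        · intro hc
          have : z ∈ (w.cycleOf y).support := mem_support_cycleOf_iff.2 ⟨hc, mem_support.2 hy⟩
          rw [← hcyc] at this
          exact (mem_support_cycleOf_iff.1 this).1
      have hnd1 : l1.Nodup := nodup_toList w x
      have hnd2 : l2.Nodup := nodup_toList ρ1 y
      have hmem1 : ∀ z, z ∈ l1 ↔ w.SameCycle x z := by
        intro z; rw [hl1, mem_toList_iff]
        exact ⟨fun hh => hh.1, fun hh => ⟨hh, hxs⟩⟩
      have hmem2 : ∀ z, z ∈ l2 ↔ w.SameCycle y z := by
        intro z; rw [hl2, mem_toList_iff, hsc2 z]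
        exact ⟨fun hh => hh.1, fun hh => ⟨hh, hys⟩⟩
      have hdisjl : List.Disjoint l1 l2 := by
        intro z hz1 hz2
        rw [hmem1 z] at hz1
        rw [hmem2 z] at hz2
        exact h (hz1.trans hz2.symm)
      have hndapp : (l1 ++ l2).Nodup := List.Nodup.append hnd1 hnd2 hdisjl
      set ρ2 := rest ρ1 y with hρ2
      have hw : w = List.formPerm l1 * List.formPerm l2 * ρ2 := by
        rw [hl1, hl2, formPerm_toList, formPerm_toList, hρ2, mul_assoc, cycleOf_mul_rest,
          hρ1, cycleOf_mul_rest]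
      have hsplitn : List.formPerm (l1 ++ l2) =
          Equiv.swap x y * List.formPerm l1 * List.formPerm l2 := by
        rw [ht1, ht2]
        exact formPerm_split t1 x y t2 (by rw [← ht1, ← ht2]; exact hndapp)
      have hkey : Equiv.swap x y * w = List.formPerm (l1 ++ l2) * ρ2 := by
        rw [hw, hsplitn]
        group
      have hdisj : Equiv.Perm.Disjoint (List.formPerm (l1 ++ l2)) ρ2 := by
        intro z
        by_cases hz : z ∈ l1 ++ l2
        · refine Or.inr ?_
          rcases List.mem_append.mp hz with hz1 | hz2
          · -- z in cycle of x : fixed by ρ1 hence need ρ2 z = z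
            have hz1' := (hmem1 z).mp hz1
            have hρ1z : ρ1 z = z := rest_apply_of_sameCycle hz1'
            have hnsc : ¬ ρ1.SameCycle y z := by
              rw [hsc2]
              intro hc
              exact h (hz1'.trans hc.symm)
            have h1 : ρ1.cycleOf y z = z := cycleOf_apply_of_not_sameCycle hnsc
            have : ρ2 z = (ρ1.cycleOf y)⁻¹ (ρ1 z) := rfl
            rw [this, hρ1z, inv_fix h1]
          · exact rest_apply_of_sameCycle ((hmem2 z).mp hz2 |> (hsc2 z).mpr)
        · exact Or.inl (List.formPerm_apply_of_notMem hz)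
      have e1 : fl w = fl (List.formPerm l1) + fl (List.formPerm l2) + fl ρ2 := by
        rw [hw, fl_mul_of_disjoint, fl_mul_of_disjoint]
        · intro z
          by_cases hz : z ∈ l1
          · exact Or.inr (by
              intro hc
              exact hdisjl hz hc) |>.elim (fun hh => Or.inl hh) (fun hh =>
              Or.inr (List.formPerm_apply_of_notMem hh))
          · exact Or.inl (List.formPerm_apply_of_notMem hz)
        · -- Disjoint (formPerm l1 * formPerm l2) ρ2
          apply Equiv.Perm.Disjoint.mul_left
          · intro z
            by_cases hz : z ∈ l1
            · refine Or.inr ?_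
              have hz1' := (hmem1 z).mp hz
              have hρ1z : ρ1 z = z := rest_apply_of_sameCycle hz1'
              have hnsc : ¬ ρ1.SameCycle y z := by
                rw [hsc2]
                intro hc
                exact h (hz1'.trans hc.symm)
              have h1 : ρ1.cycleOf y z = z := cycleOf_apply_of_not_sameCycle hnsc
              have : ρ2 z = (ρ1.cycleOf y)⁻¹ (ρ1 z) := rfl
              rw [this, hρ1z, inv_fix h1]
            · exact Or.inl (List.formPerm_apply_of_notMem hz)
          · intro z
            by_cases hz : z ∈ l2
            · exact Or.inr (rest_apply_of_sameCycle ((hsc2 z).mpr ((hmem2 z).mp hz)))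
            · exact Or.inl (List.formPerm_apply_of_notMem hz)
      rw [hkey, fl_mul_of_disjoint hdisj, e1, fl_formPerm hndapp, fl_formPerm hnd1,
        fl_formPerm hnd2]
      have h1 : 2 ≤ l1.length := by rw [hl1]; exact two_le_length_toList hx
      have h2 : 2 ≤ l2.length := by rw [hl2]; exact two_le_length_toList hρ1yy
      rw [List.length_append]
      omega

/-- SURGERY, split case. -/
theorem fl_swap_mul_of_sameCycle {w : Perm α} {x y : α} (hxy : x ≠ y)
    (h : w.SameCycle x y) : fl (Equiv.swap x y * w) + 1 = fl w := by
  have hx : w x ≠ x := by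
    intro hc
    exact hxy (sameCycle_of_fix h hc).symm
  have hxs : x ∈ w.support := mem_support.2 hx
  obtain ⟨t, ht⟩ := toList_eq_cons hxs
  set l := w.toList x with hl
  have hnd : l.Nodup := nodup_toList w x
  have hyl : y ∈ l := by rw [hl, mem_toList_iff]; exact ⟨h, hxs⟩
  have hyt : y ∈ t := by
    rcases List.mem_cons.mp (ht ▸ hyl) with hc | hc
    · exact absurd hc.symm hxy
    · exact hc
  obtain ⟨t1, t2, ht12⟩ := List.append_of_mem hyt
  have hlform : l = (x :: t1) ++ (y :: t2) := by rw [ht, ht12, List.cons_append]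
  have hndl : ((x :: t1) ++ (y :: t2)).Nodup := hlform ▸ hnd
  have hsplit := formPerm_split t1 x y t2 hndl
  have hkey : Equiv.swap x y * w =
      List.formPerm (x :: t1) * List.formPerm (y :: t2) * rest w x := by
    conv_lhs => rw [← cycleOf_mul_rest w x]
    rw [← formPerm_toList w x, ← hl, hlform, hsplit, ← mul_assoc, ← mul_assoc, ← mul_assoc,
      Equiv.swap_mul_self, one_mul]
  have hnd1 : (x :: t1).Nodup := (List.nodup_append.mp hndl).1
  have hnd2 : (y :: t2).Nodup := (List.nodup_append.mp hndl).2.1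
  have hdisjl : List.Disjoint (x :: t1) (y :: t2) := (List.nodup_append'.mp hndl).2.2
  have hmem : ∀ z, z ∈ l ↔ w.SameCycle x z := by
    intro z; rw [hl, mem_toList_iff]
    exact ⟨fun hh => hh.1, fun hh => ⟨hh, hxs⟩⟩
  have hd12 : Equiv.Perm.Disjoint (List.formPerm (x :: t1)) (List.formPerm (y :: t2)) := by
    intro z
    by_cases hz : z ∈ (x :: t1)
    · exact Or.inr (List.formPerm_apply_of_notMem (fun hc => hdisjl hz hc))
    · exact Or.inl (List.formPerm_apply_of_notMem hz)
  have hdrest : Equiv.Perm.Disjoint (List.formPerm (x :: t1) * List.formPerm (y :: t2))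
      (rest w x) := by
    apply Equiv.Perm.Disjoint.mul_left
    · intro z
      by_cases hz : z ∈ (x :: t1)
      · refine Or.inr (rest_apply_of_sameCycle ((hmem z).mp ?_))
        rw [hlform]; exact List.mem_append.mpr (Or.inl hz)
      · exact Or.inl (List.formPerm_apply_of_notMem hz)
    · intro z
      by_cases hz : z ∈ (y :: t2)
      · refine Or.inr (rest_apply_of_sameCycle ((hmem z).mp ?_))
        rw [hlform]; exact List.mem_append.mpr (Or.inr hz)
      · exact Or.inl (List.formPerm_apply_of_notMem hz)
  rw [hkey, fl_mul_of_disjoint hdrest, fl_mul_of_disjoint hd12, fl_formPerm hnd1,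
    fl_formPerm hnd2, fl_eq_cycleOf_add_rest w hx, ← length_toList, ← hl, hlform,
    List.length_append]
  simp only [List.length_cons]
  omega


lemma fl_swap_mul_le {w : Perm α} {x y : α} (hxy : x ≠ y) :
    fl (Equiv.swap x y * w) ≤ fl w + 1 := by
  by_cases h : w.SameCycle x y
  · have := fl_swap_mul_of_sameCycle hxy h; omega
  · rw [fl_swap_mul_of_not_sameCycle hxy h]

def isProdSwaps (k : ℕ) (w : Perm α) : Prop :=
  ∃ l : List (Perm α), (∀ x ∈ l, x.IsSwap) ∧ l.length = k ∧ l.prod = w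

lemma fl_le_of_isProdSwaps {k : ℕ} {w : Perm α} (h : isProdSwaps k w) : fl w ≤ k := by
  obtain ⟨l, hsw, hlen, hprod⟩ := h
  subst hlen hprod
  induction l with
  | nil => simp
  | cons t L ih =>
    obtain ⟨x, y, hxy, rfl⟩ := hsw t List.mem_cons_self
    have h1 := ih (fun x hx => hsw x (List.mem_cons_of_mem _ hx))
    have h2 := fl_swap_mul_le (w := L.prod) (x := x) (y := y) hxy
    rw [List.prod_cons]
    simp only [List.length_cons]
    omega

lemma sign_of_isProdSwaps {k : ℕ} {w : Perm α} (h : isProdSwaps k w) :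
    Equiv.Perm.sign w = (-1) ^ k := by
  obtain ⟨l, hsw, hlen, hprod⟩ := h
  subst hlen hprod
  induction l with
  | nil => simp
  | cons t L ih =>
    obtain ⟨x, y, hxy, rfl⟩ := hsw t List.mem_cons_self
    have h1 := ih (fun x hx => hsw x (List.mem_cons_of_mem _ hx))
    rw [List.prod_cons, map_mul, h1, Equiv.Perm.sign_swap hxy]
    simp [pow_succ, mul_comm]

lemma isProdSwaps_fl (w : Perm α) : isProdSwaps (fl w) w := by
  -- strong induction on fl w
  generalize hk : fl w = k
  induction k generalizing w with
  | zero =>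
    rw [fl_eq_zero_iff.mp hk]
    exact ⟨[], by simp, rfl, rfl⟩
  | succ k ih =>
    have hw : w ≠ 1 := by
      intro hc; rw [hc] at hk; simp at hk
    have : ∃ x, w x ≠ x := by
      by_contra hc
      push_neg at hc
      exact hw (Equiv.ext hc)
    obtain ⟨x, hx⟩ := this
    have hsc : w.SameCycle x (w x) := ⟨1, by simp⟩
    have hne : x ≠ w x := Ne.symm hx
    have hstep := fl_swap_mul_of_sameCycle hne hsc
    rw [hk] at hstep
    have hfl : fl (Equiv.swap x (w x) * w) = k := by omega
    obtain ⟨l, hsw, hlen, hprod⟩ := ih _ hfl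
    refine ⟨Equiv.swap x (w x) :: l, ?_, by simp [hlen], ?_⟩
    · intro t ht
      rcases List.mem_cons.mp ht with rfl | ht'
      · exact ⟨x, w x, hne, rfl⟩
      · exact hsw t ht'
    · rw [List.prod_cons, hprod, ← mul_assoc, Equiv.swap_mul_self, one_mul]

lemma isProdSwaps_succ_succ {k : ℕ} {w : Perm α} {a b : α} (hab : a ≠ b)
    (h : isProdSwaps k w) : isProdSwaps (k + 2) w := by
  obtain ⟨l, hsw, hlen, hprod⟩ := h
  refine ⟨Equiv.swap a b :: Equiv.swap a b :: l, ?_, by simp [hlen], ?_⟩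
  · intro t ht
    rcases List.mem_cons.mp ht with rfl | ht'
    · exact ⟨a, b, hab, rfl⟩
    rcases List.mem_cons.mp ht' with rfl | ht''
    · exact ⟨a, b, hab, rfl⟩
    · exact hsw t ht''
  · rw [List.prod_cons, List.prod_cons, hprod, ← mul_assoc, Equiv.swap_mul_self, one_mul]

lemma neg_one_pow_units_eq_iff {k m : ℕ} (h : ((-1 : ℤˣ)) ^ k = (-1) ^ m) :
    k % 2 = m % 2 := by
  rcases Nat.even_or_odd k with hk | hk <;> rcases Nat.even_or_odd m with hm | hm
  · obtain ⟨c, rfl⟩ := hk; obtain ⟨d, rfl⟩ := hm; omega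
  · rw [Even.neg_one_pow hk, Odd.neg_one_pow hm] at h
    exact absurd h (by decide)
  · rw [Odd.neg_one_pow hk, Even.neg_one_pow hm] at h
    exact absurd h (by decide)
  · obtain ⟨c, rfl⟩ := hk; obtain ⟨d, rfl⟩ := hm; omega

lemma isProdSwaps_iff {a b : α} (hab : a ≠ b) {k : ℕ} {w : Perm α} :
    isProdSwaps k w ↔ fl w ≤ k ∧ (-1 : ℤˣ) ^ k = Equiv.Perm.sign w := by
  constructor
  · intro h
    exact ⟨fl_le_of_isProdSwaps h, (sign_of_isProdSwaps h).symm⟩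
  · rintro ⟨hle, hsgn⟩
    rw [sign_eq_pow_fl] at hsgn
    have hmod := neg_one_pow_units_eq_iff hsgn
    obtain ⟨m, hm⟩ : ∃ m, k = fl w + 2 * m := by
      refine ⟨(k - fl w) / 2, by omega⟩
    subst hm
    clear hle hsgn hmod
    induction m with
    | zero => simpa using isProdSwaps_fl w
    | succ m ih =>
      have : fl w + 2 * (m + 1) = (fl w + 2 * m) + 2 := by ring
      rw [this]
      exact isProdSwaps_succ_succ hab ih


lemma fl_conj (σ τ : Perm α) : fl (σ * τ * σ⁻¹) = fl τ := by
  unfold fl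
  rw [Equiv.Perm.cycleType_conj]

lemma fl_extendDomain {β : Type*} [DecidableEq β] [Fintype β] {p : β → Prop} [DecidablePred p]
    (f : α ≃ Subtype p) (w : Perm α) : fl (w.extendDomain f) = fl w := by
  unfold fl
  rw [Equiv.Perm.cycleType_extendDomain]

lemma optionCongr_eq_extendDomain {β : Type*} [DecidableEq β] (e : Perm β) :
    Equiv.optionCongr e = e.extendDomain (Equiv.optionIsSomeEquiv β).symm := by
  ext x
  cases x with
  | none =>
    rw [Equiv.Perm.extendDomain_apply_not_subtype]
    · simp
    · simp [Equiv.optionIsSomeEquiv]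
  | some a =>
    have : (some a : Option β) = ((Equiv.optionIsSomeEquiv β).symm a : {x : Option β // x.isSome}) := by
      simp [Equiv.optionIsSomeEquiv]
    rw [this, Equiv.Perm.extendDomain_apply_image]
    simp [Equiv.optionIsSomeEquiv]

lemma fl_optionCongr {β : Type*} [DecidableEq β] [Fintype β] (e : Perm β) :
    fl (Equiv.optionCongr e) = fl e := by
  rw [optionCongr_eq_extendDomain, fl_extendDomain]

lemma fl_decompose {β : Type*} [DecidableEq β] [Fintype β] (p : Option β) (e : Perm β) :
    fl (Equiv.swap none p * Equiv.optionCongr e) = fl e + (if p = none then 0 else 1) := by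
  rcases p with _ | c
  · simp [fl_optionCongr, Equiv.Perm.refl_mul]
  · have hne : (none : Option β) ≠ some c := by simp
    have hnsc : ¬ Equiv.Perm.SameCycle (Equiv.optionCongr e) none (some c) := by
      intro hc
      have hfix : Equiv.optionCongr e none = none := by simp
      exact hne (sameCycle_of_fix hc hfix).symm
    rw [fl_swap_mul_of_not_sameCycle hne hnsc, fl_optionCongr]
    simp

lemma permCongr_mul {β : Type*} (ee : α ≃ β) (u v : Perm α) :
    ee.permCongr (u * v) = ee.permCongr u * ee.permCongr v := by
  ext x
  simp [Equiv.permCongr_apply]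

lemma permCongr_swap {β : Type*} [DecidableEq β] (ee : α ≃ β) (x y : α) :
    ee.permCongr (Equiv.swap x y) = Equiv.swap (ee x) (ee y) := by
  rw [← Equiv.symm_trans_swap_trans x y ee]
  rfl

lemma fl_permCongr {β : Type*} [DecidableEq β] [Fintype β] (ee : α ≃ β) (w : Perm α) :
    fl (ee.permCongr w) = fl w := by
  have hp : ∀ x : β, (fun _ : β => True) x := fun _ => trivial
  let f : α ≃ {x : β // True} := ee.trans (Equiv.subtypeUnivEquiv hp).symm
  have : ee.permCongr w = w.extendDomain f := by
    ext x
    have hx : (⟨x, trivial⟩ : {x : β // True}) = f (f.symm ⟨x, trivial⟩) := by simp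
    have h2 := Equiv.Perm.extendDomain_apply_image w f (f.symm ⟨x, trivial⟩)
    rw [← hx] at h2
    have h3 : (w.extendDomain f) x = (f (w (f.symm ⟨x, trivial⟩)) : β) := by
      exact_mod_cast h2
    rw [h3]
    simp [f, Equiv.permCongr_apply, Equiv.subtypeUnivEquiv]
  rw [this, fl_extendDomain]

/-- key step: value of the min-statistic on `decomposeOption.symm (p, e)`. -/
lemma min_fl_decompose {β : Type*} [DecidableEq β] [Fintype β] (p : Option β) (e : Perm β)
    (a b : β) :
    min (fl (Equiv.swap none p * Equiv.optionCongr e))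
        (fl ((Equiv.swap none p * Equiv.optionCongr e) * Equiv.swap (some a) (some b)))
      = min (fl e) (fl (e * Equiv.swap a b)) + (if p = none then 0 else 1) := by
  have h1 : (Equiv.swap none p * Equiv.optionCongr e) * Equiv.swap (some a) (some b)
      = Equiv.swap none p * Equiv.optionCongr (e * Equiv.swap a b) := by
    rw [mul_assoc]
    congr 1
    have h2 : (e * Equiv.swap a b) = (Equiv.swap a b).trans e := rfl
    rw [h2, show ((Equiv.swap a b).trans e).optionCongr
        = (Equiv.swap a b).optionCongr.trans e.optionCongr from (Equiv.optionCongr_trans _ _),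
      Equiv.optionCongr_swap]
    rfl
  rw [h1, fl_decompose, fl_decompose]
  omega


/-- `Option {x // x ≠ c} ≃ α`. -/
def optionNe {α : Type*} [DecidableEq α] (c : α) : Option {x : α // x ≠ c} ≃ α where
  toFun o := o.elim c Subtype.val
  invFun x := if h : x = c then none else some ⟨x, h⟩
  left_inv o := by
    cases o with
    | none => simp
    | some x => simp [x.2]
  right_inv x := by
    by_cases h : x = c <;> simp [h]

theorem counting : ∀ (n : ℕ), 2 ≤ n → ∀ (α : Type) [DecidableEq α] [Fintype α],
    Fintype.card α = n → ∀ a b : α, a ≠ b →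
    (∑ w : Perm α, (X : Polynomial ℤ) ^ (min (fl w) (fl (w * Equiv.swap a b))))
      = 2 * ∏ t ∈ Finset.Icc 2 (n - 1), (1 + C (t : ℤ) * X) := by
  intro n hn
  induction n, hn using Nat.le_induction with
  | base =>
    intro α _ _ hcard a b hab
    -- Perm α = {1, swap a b}
    have hcardp : Fintype.card (Perm α) = 2 := by
      rw [Fintype.card_perm, hcard]
      rfl
    have hne : (1 : Perm α) ≠ Equiv.swap a b := by
      intro hc
      have : Equiv.swap a b a = a := by rw [← hc]; rfl
      rw [Equiv.swap_apply_left] at this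
      exact hab this.symm
    have huniv : (Finset.univ : Finset (Perm α)) = {1, Equiv.swap a b} := by
      symm
      apply Finset.eq_of_subset_of_card_le (Finset.subset_univ _)
      rw [Finset.card_univ, hcardp, Finset.card_insert_of_notMem (by simpa using hne),
        Finset.card_singleton]
    rw [huniv, Finset.sum_pair hne]
    have h1 : fl (1 : Perm α) = 0 := fl_one
    have hsw : fl (Equiv.swap a b) = 1 := by
      rw [fl_isCycle (Equiv.Perm.isCycle_swap hab), Equiv.Perm.card_support_swap hab]
    have e1 : min (fl (1 : Perm α)) (fl (1 * Equiv.swap a b)) = 0 := by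
      simp [h1]
    have e2 : min (fl (Equiv.swap a b)) (fl (Equiv.swap a b * Equiv.swap a b)) = 0 := by
      rw [Equiv.swap_mul_self]
      simp [h1]
    rw [e1, e2]
    norm_num
  | succ n hn ih =>
    intro α _ _ hcard a b hab
    -- find c different from a and b
    have hnotsub : ¬ (Finset.univ : Finset α) ⊆ {a, b} := by
      intro hsub
      have h1 := Finset.card_le_card hsub
      have h2 : ({a, b} : Finset α).card ≤ 2 :=
        le_trans (Finset.card_insert_le _ _) (by simp)
      rw [Finset.card_univ, hcard] at h1
      omega
    obtain ⟨c, -, hc⟩ := Finset.not_subset.mp hnotsub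
    simp only [Finset.mem_insert, Finset.mem_singleton, not_or] at hc
    obtain ⟨hca, hcb⟩ := hc
    have hcardβ : Fintype.card {x : α // x ≠ c} = n := by
      have h0 := Fintype.card_subtype_compl (fun x : α => x = c)
      simp only [Fintype.card_subtype_eq] at h0
      have h2 : Fintype.card {x : α // x ≠ c} = Fintype.card α - 1 := by simpa using h0
      rw [hcard] at h2
      simpa using h2
    set β := {x : α // x ≠ c} with hβ
    set ee : Option β ≃ α := optionNe c with hee
    set E : Perm (Option β) ≃ Perm α := ee.permCongr with hE
    set a' : β := ⟨a, fun h => hca h.symm⟩ with ha'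
    set b' : β := ⟨b, fun h => hcb h.symm⟩ with hb'
    have hab' : a' ≠ b' := by
      intro hc'
      exact hab (congrArg Subtype.val hc')
    have hswab : E (Equiv.swap (some a') (some b')) = Equiv.swap a b := by
      rw [hE, permCongr_swap]
      congr 1
    have hstat : ∀ v : Perm (Option β),
        min (fl (E v)) (fl (E v * Equiv.swap a b))
          = min (fl v) (fl (v * Equiv.swap (some a') (some b'))) := by
      intro v
      rw [← hswab, ← permCongr_mul, fl_permCongr, fl_permCongr]
    calc (∑ w : Perm α, (X : Polynomial ℤ) ^ (min (fl w) (fl (w * Equiv.swap a b))))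
        = ∑ v : Perm (Option β),
            (X : Polynomial ℤ) ^ (min (fl (E v)) (fl (E v * Equiv.swap a b))) :=
          (Equiv.sum_comp E (fun w => (X : Polynomial ℤ) ^ (min (fl w) (fl (w * Equiv.swap a b))))).symm
      _ = ∑ v : Perm (Option β),
            (X : Polynomial ℤ) ^ (min (fl v) (fl (v * Equiv.swap (some a') (some b')))) := by
          refine Finset.sum_congr rfl fun v _ => by rw [hstat v]
      _ = ∑ pe : Option β × Perm β,
            (X : Polynomial ℤ) ^ (min (fl (Equiv.Perm.decomposeOption.symm pe))
              (fl (Equiv.Perm.decomposeOption.symm pe * Equiv.swap (some a') (some b')))) :=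
          (Equiv.sum_comp Equiv.Perm.decomposeOption.symm
            (fun v => (X : Polynomial ℤ) ^ (min (fl v) (fl (v * Equiv.swap (some a') (some b')))))).symm
      _ = ∑ pe : Option β × Perm β,
            (X : Polynomial ℤ) ^ (min (fl pe.2) (fl (pe.2 * Equiv.swap a' b'))
              + (if pe.1 = none then 0 else 1)) := by
          refine Finset.sum_congr rfl fun pe _ => ?_
          congr 1
          have := min_fl_decompose pe.1 pe.2 a' b'
          simpa using this
      _ = (∑ p : Option β, (X : Polynomial ℤ) ^ (if p = none then 0 else 1)) *
            (∑ e : Perm β, (X : Polynomial ℤ) ^ (min (fl e) (fl (e * Equiv.swap a' b')))) := by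
          rw [Finset.sum_mul_sum]
          rw [Fintype.sum_prod_type]
          refine Finset.sum_congr rfl fun p _ => Finset.sum_congr rfl fun e _ => ?_
          rw [← pow_add, add_comm]
      _ = (1 + C (n : ℤ) * X) * (2 * ∏ t ∈ Finset.Icc 2 (n - 1), (1 + C (t : ℤ) * X)) := by
          congr 1
          · rw [Fintype.sum_option]
            simp only [if_pos rfl, pow_zero]
            have : ∀ x : β, (if (some x : Option β) = none then 0 else 1) = 1 := by
              intro x; simp
            rw [Finset.sum_congr rfl (fun x _ => by rw [this x])]
            rw [Finset.sum_const, Finset.card_univ, hcardβ]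
            simp [nsmul_eq_mul]
          · exact ih β hcardβ a' b' hab'
      _ = 2 * ∏ t ∈ Finset.Icc 2 (n + 1 - 1), (1 + C (t : ℤ) * X) := by
          rw [show n + 1 - 1 = n from rfl]
          have hsplit : ∏ t ∈ Finset.Icc 2 n, (1 + C (t : ℤ) * X)
              = (∏ t ∈ Finset.Icc 2 (n - 1), (1 + C (t : ℤ) * X)) * (1 + C (n : ℤ) * X) := by
            have h2 : n = (n - 1) + 1 := by omega
            rw [h2, Finset.prod_Icc_succ_top (by omega)]
            rw [← h2]
          rw [hsplit]
          ring


variable {n : ℕ}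

/-- the distinguished transposition `(1 2)`. -/
def sn (n : ℕ) (hn : 2 ≤ n) : Perm (Fin n) :=
  Equiv.swap ⟨0, by omega⟩ ⟨1, by omega⟩

lemma sn_ne (hn : 2 ≤ n) : (⟨0, by omega⟩ : Fin n) ≠ ⟨1, by omega⟩ := by
  simp [Fin.ext_iff]

lemma sn_mul_self (hn : 2 ≤ n) : sn n hn * sn n hn = 1 := Equiv.swap_mul_self _ _

lemma sn_pow_even (hn : 2 ≤ n) {k : ℕ} (h : Even k) : (sn n hn) ^ k = 1 := by
  obtain ⟨m, rfl⟩ := h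
  rw [← two_mul, pow_mul]
  rw [show (sn n hn) ^ 2 = sn n hn * sn n hn by rw [sq], sn_mul_self, one_pow]

lemma sn_pow_odd (hn : 2 ≤ n) {k : ℕ} (h : Odd k) : (sn n hn) ^ k = sn n hn := by
  obtain ⟨m, rfl⟩ := h
  rw [pow_add, pow_one, sn_pow_even hn (even_two_mul m), one_mul]

lemma sign_sn (hn : 2 ≤ n) : Equiv.Perm.sign (sn n hn) = -1 :=
  Equiv.Perm.sign_swap (sn_ne hn)

lemma isSwap_conj {σ t : Perm (Fin n)} (h : t.IsSwap) : (σ * t * σ⁻¹).IsSwap := by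
  obtain ⟨x, y, hxy, rfl⟩ := h
  exact ⟨σ x, σ y, fun hc => hxy (σ.injective hc), (Equiv.swap_apply_apply σ x y).symm⟩

lemma mem_ATrans_iff (hn : 2 ≤ n) {g : Perm (Fin n)} :
    g ∈ ATrans n ↔ ∃ t : Perm (Fin n), t.IsSwap ∧ g = sn n hn * t := by
  constructor
  · rintro ⟨h1, i, j, hij, rfl⟩
    exact ⟨Equiv.swap i j, ⟨i, j, hij.ne, rfl⟩, rfl⟩
  · rintro ⟨t, ⟨x, y, hxy, rfl⟩, rfl⟩
    rcases hxy.lt_or_gt with h | h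
    · exact ⟨by omega, x, y, h, rfl⟩
    · exact ⟨by omega, y, x, h, by rw [Equiv.swap_comm]; rfl⟩

lemma prodA_to (hn : 2 ≤ n) : ∀ l : List (Perm (Fin n)), (∀ x ∈ l, x ∈ ATrans n) →
    isProdSwaps l.length ((sn n hn) ^ l.length * l.prod) := by
  intro l
  induction l with
  | nil => intro _; exact ⟨[], by simp, rfl, by simp⟩
  | cons g L ih =>
    intro hmem
    obtain ⟨t, hsw, rfl⟩ := (mem_ATrans_iff hn).mp (hmem g List.mem_cons_self)
    obtain ⟨l', hsw', hlen', hprod'⟩ := ih (fun x hx => hmem x (List.mem_cons_of_mem _ hx))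
    set σ := (sn n hn) ^ L.length with hσ
    refine ⟨(σ * t * σ⁻¹) :: l', ?_, by simp [hlen'], ?_⟩
    · intro x hx
      rcases List.mem_cons.mp hx with rfl | hx'
      · exact isSwap_conj hsw
      · exact hsw' x hx'
    · rw [List.prod_cons, hprod', List.prod_cons, List.length_cons, pow_succ]
      have : σ * sn n hn * (sn n hn * t * L.prod) = σ * t * L.prod := by
        rw [show σ * sn n hn * (sn n hn * t * L.prod)
            = σ * (sn n hn * sn n hn) * (t * L.prod) by group, sn_mul_self]
        group
      rw [this]
      group

lemma prodA_from (hn : 2 ≤ n) : ∀ l : List (Perm (Fin n)), (∀ x ∈ l, x.IsSwap) →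
    ∃ L : List (Perm (Fin n)), (∀ x ∈ L, x ∈ ATrans n) ∧ L.length = l.length ∧
      L.prod = (sn n hn) ^ l.length * l.prod := by
  intro l
  induction l with
  | nil => intro _; exact ⟨[], by simp, rfl, by simp⟩
  | cons t l' ih =>
    intro hmem
    obtain ⟨L', hA', hlen', hprod'⟩ := ih (fun x hx => hmem x (List.mem_cons_of_mem _ hx))
    set σ := (sn n hn) ^ l'.length with hσ
    have hsw := hmem t List.mem_cons_self
    refine ⟨(sn n hn * (σ * t * σ⁻¹)) :: L', ?_, by simp [hlen'], ?_⟩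
    · intro x hx
      rcases List.mem_cons.mp hx with rfl | hx'
      · exact (mem_ATrans_iff hn).mpr ⟨σ * t * σ⁻¹, isSwap_conj hsw, rfl⟩
      · exact hA' x hx'
    · rw [List.prod_cons, hprod', List.prod_cons, List.length_cons, pow_succ', ← hσ]
      simp only [mul_assoc, inv_mul_cancel_left]

lemma alen_set_eq (hn : 2 ≤ n) (v : Perm (Fin n)) (k : ℕ) :
    (∃ l : List (Perm (Fin n)), (∀ x ∈ l, x ∈ ATrans n) ∧ l.length = k ∧ l.prod = v)
    ↔ isProdSwaps k ((sn n hn) ^ k * v) := by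
  constructor
  · rintro ⟨l, hA, rfl, rfl⟩
    exact prodA_to hn l hA
  · rintro ⟨l, hsw, hlen, hprod⟩
    obtain ⟨L, hA, hlen', hprod'⟩ := prodA_from hn l hsw
    refine ⟨L, hA, by rw [hlen', hlen], ?_⟩
    rw [hprod', hprod, hlen, ← mul_assoc, ← pow_add]
    rw [sn_pow_even hn ⟨k, rfl⟩, one_mul]

lemma even_fl_of_sign {v : Perm (Fin n)} (hv : Equiv.Perm.sign v = 1) : Even (fl v) := by
  have h := sign_eq_pow_fl v
  rw [hv] at h
  by_contra hodd
  rw [Odd.neg_one_pow (Nat.not_even_iff_odd.mp hodd)] at h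
  exact absurd h.symm (by decide)

lemma odd_fl_of_sign {v : Perm (Fin n)} (hv : Equiv.Perm.sign v = -1) : Odd (fl v) := by
  have h := sign_eq_pow_fl v
  rw [hv] at h
  by_contra heven
  rw [Even.neg_one_pow (Nat.not_odd_iff_even.mp heven)] at h
  exact absurd h (by decide)

/-- The key formula for alen on the alternating group. -/
theorem alen_eq (hn : 2 ≤ n) {v : Perm (Fin n)} (hv : Equiv.Perm.sign v = 1) :
    alen n v = min (fl v) (fl (sn n hn * v)) := by
  have hset : ∀ k, (∃ l : List (Perm (Fin n)),
      (∀ x ∈ l, x ∈ ATrans n) ∧ l.length = k ∧ l.prod = v) ↔ fl ((sn n hn) ^ k * v) ≤ k := by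
    intro k
    rw [alen_set_eq hn v k, isProdSwaps_iff (sn_ne hn)]
    constructor
    · exact fun h => h.1
    · intro h
      refine ⟨h, ?_⟩
      rw [map_mul, map_pow, sign_sn hn, hv, mul_one]
  have hcond : ∀ k, fl ((sn n hn) ^ k * v) ≤ k ↔
      ((Even k ∧ fl v ≤ k) ∨ (Odd k ∧ fl (sn n hn * v) ≤ k)) := by
    intro k
    rcases Nat.even_or_odd k with h | h
    · rw [sn_pow_even hn h, one_mul]
      simp [h, Nat.not_odd_iff_even.mpr h]
    · rw [sn_pow_odd hn h]
      simp [h, Nat.not_even_iff_odd.mpr h]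
  have heven : Even (fl v) := even_fl_of_sign hv
  have hodd : Odd (fl (sn n hn * v)) := by
    apply odd_fl_of_sign
    rw [map_mul, sign_sn hn, hv, mul_one]
  unfold alen
  apply Nat.le_antisymm
  · apply Nat.sInf_le
    rw [Set.mem_setOf_eq, hset, hcond]
    rcases le_total (fl v) (fl (sn n hn * v)) with hle | hle
    · rw [min_eq_left hle]
      exact Or.inl ⟨heven, le_refl _⟩
    · rw [min_eq_right hle]
      exact Or.inr ⟨hodd, le_refl _⟩
  · apply le_csInf
    · refine ⟨fl v, ?_⟩
      rw [Set.mem_setOf_eq, hset, hcond]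
      exact Or.inl ⟨heven, le_refl _⟩
    · intro k hk
      rw [Set.mem_setOf_eq, hset, hcond] at hk
      rcases hk with ⟨_, hk⟩ | ⟨_, hk⟩
      · exact le_trans (min_le_left _ _) hk
      · exact le_trans (min_le_right _ _) hk

lemma fl_sn_mul_comm (hn : 2 ≤ n) (v : Perm (Fin n)) :
    fl (sn n hn * v) = fl (v * sn n hn) := by
  have := fl_conj (sn n hn) (v * sn n hn)
  rwa [show sn n hn * (v * sn n hn) * (sn n hn)⁻¹ = sn n hn * v from by group] at this


end AlenProof

open Polynomial in
open AlenProof in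
open Equiv Equiv.Perm in
open scoped Classical in
/-- For `n ≥ 2`, `∑_{v ∈ A_n} x^{ℓ(v)} = ∑_{k=0}^n a(n,k) x^k = ∏_{t=2}^{n-1} (1 + t x)`
as polynomials. -/
theorem stmt_13 (n : ℕ) (hn : 2 ≤ n) :
    (∑ v : {v : Equiv.Perm (Fin n) // v ∈ alternatingGroup (Fin n)},
        (X : Polynomial ℤ) ^ alen n (v : Equiv.Perm (Fin n)))
      = ∑ k ∈ Finset.range (n + 1), C ((aCount n k : ℤ)) * X ^ k ∧
    (∑ k ∈ Finset.range (n + 1), C ((aCount n k : ℤ)) * X ^ k)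
      = ∏ t ∈ Finset.Icc 2 (n - 1), (1 + C ((t : ℤ)) * X) := by
  have hcard : Fintype.card (Fin n) = n := Fintype.card_fin n
  set s : Perm (Fin n) := sn n hn with hs
  -- the statistic
  set m : Perm (Fin n) → ℕ := fun w => min (fl w) (fl (w * s)) with hm
  -- alen agrees with m on the alternating group
  have halen : ∀ v : Perm (Fin n), Equiv.Perm.sign v = 1 → alen n v = m v := by
    intro v hv
    rw [alen_eq hn hv, fl_sn_mul_comm hn v]
  -- bound on alen
  have hbound : ∀ v : Perm (Fin n), Equiv.Perm.sign v = 1 → alen n v < n + 1 := by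
    intro v hv
    rw [halen v hv]
    have := fl_le_card v
    rw [hcard] at this
    have h2 : m v ≤ fl v := min_le_left _ _
    omega
  -- conjunct 1
  have hconj1 : (∑ v : {v : Equiv.Perm (Fin n) // v ∈ alternatingGroup (Fin n)},
        (X : Polynomial ℤ) ^ alen n (v : Equiv.Perm (Fin n)))
      = ∑ k ∈ Finset.range (n + 1), C ((aCount n k : ℤ)) * X ^ k := by
    rw [← Finset.sum_fiberwise_of_maps_to (g := fun v : {v : Equiv.Perm (Fin n) //
        v ∈ alternatingGroup (Fin n)} => alen n (v : Equiv.Perm (Fin n)))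
        (t := Finset.range (n + 1)) (fun v _ => Finset.mem_range.mpr
          (hbound v.1 (Equiv.Perm.mem_alternatingGroup.mp v.2)))]
    refine Finset.sum_congr rfl fun k hk => ?_
    have hinner : ∀ v ∈ Finset.filter (fun v : {v : Equiv.Perm (Fin n) //
        v ∈ alternatingGroup (Fin n)} => alen n (v : Equiv.Perm (Fin n)) = k) Finset.univ,
        (X : Polynomial ℤ) ^ alen n (v : Equiv.Perm (Fin n)) = X ^ k := by
      intro v hv
      rw [(Finset.mem_filter.mp hv).2]
    rw [Finset.sum_congr rfl hinner, Finset.sum_const]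
    have hcount : (Finset.filter (fun v : {v : Equiv.Perm (Fin n) //
        v ∈ alternatingGroup (Fin n)} => alen n (v : Equiv.Perm (Fin n)) = k)
        Finset.univ).card = aCount n k := by
      rw [← Fintype.card_subtype]
      rw [aCount, Nat.card_eq_fintype_card]
      exact Fintype.card_congr (Equiv.subtypeSubtypeEquivSubtypeInter
        (fun v : Equiv.Perm (Fin n) => v ∈ alternatingGroup (Fin n)) (fun v => alen n v = k))
    rw [hcount, nsmul_eq_mul, (map_natCast (C : ℤ →+* Polynomial ℤ) (aCount n k))]
  refine ⟨hconj1, ?_⟩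
  rw [← hconj1]
  -- now prove ∑_{A_n} X^{alen} = ∏
  have hswab : Equiv.swap (⟨0, by omega⟩ : Fin n) ⟨1, by omega⟩ = s := rfl
  have hsum := counting n hn (Fin n) hcard ⟨0, by omega⟩ ⟨1, by omega⟩ (sn_ne hn)
  rw [hswab] at hsum
  -- split into even and odd
  have hsplit := Finset.sum_filter_add_sum_filter_not (Finset.univ : Finset (Perm (Fin n)))
    (fun w => Equiv.Perm.sign w = 1) (fun w => (X : Polynomial ℤ) ^ m w)
  have hmws : ∀ w : Perm (Fin n), m (w * s) = m w := by
    intro w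
    have hws : w * s * s = w := by rw [mul_assoc, sn_mul_self hn, mul_one]
    rw [hm]
    simp only
    rw [hws, min_comm]
  have hpair : ∑ w ∈ Finset.filter (fun w => ¬ Equiv.Perm.sign w = 1) Finset.univ,
      (X : Polynomial ℤ) ^ m w
      = ∑ w ∈ Finset.filter (fun w => Equiv.Perm.sign w = 1) Finset.univ,
      (X : Polynomial ℤ) ^ m w := by
    refine Finset.sum_nbij' (fun w => w * s) (fun w => w * s) ?_ ?_ ?_ ?_ ?_
    · intro w hw
      simp only [Finset.mem_filter, Finset.mem_univ, true_and] at hw ⊢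
      rcases Int.units_eq_one_or (Equiv.Perm.sign w) with h | h
      · exact absurd h hw
      · rw [map_mul, h, sign_sn hn]
        norm_num
    · intro w hw
      simp only [Finset.mem_filter, Finset.mem_univ, true_and] at hw ⊢
      rw [map_mul, hw, sign_sn hn]
      norm_num
    · intro w _
      show w * s * s = w
      rw [mul_assoc, hs, sn_mul_self hn, mul_one]
    · intro w _
      show w * s * s = w
      rw [mul_assoc, hs, sn_mul_self hn, mul_one]
    · intro w _
      rw [hmws w]
  have htotal : (∑ w : Perm (Fin n), (X : Polynomial ℤ) ^ m w)
      = 2 * ∑ w ∈ Finset.filter (fun w => Equiv.Perm.sign w = 1) Finset.univ,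
          (X : Polynomial ℤ) ^ m w := by
    rw [← hsplit, hpair]
    ring
  have hsub : (∑ v : {v : Equiv.Perm (Fin n) // v ∈ alternatingGroup (Fin n)},
        (X : Polynomial ℤ) ^ alen n (v : Equiv.Perm (Fin n)))
      = ∑ w ∈ Finset.filter (fun w => Equiv.Perm.sign w = 1) Finset.univ,
          (X : Polynomial ℤ) ^ m w := by
    have hst := Finset.sum_subtype (p := fun w : Perm (Fin n) => w ∈ alternatingGroup (Fin n)) (F := inferInstance)
      (Finset.filter (fun w => Equiv.Perm.sign w = 1) Finset.univ)
      (fun w => by simp [Equiv.Perm.mem_alternatingGroup])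
      (fun w => (X : Polynomial ℤ) ^ alen n w)
    rw [← hst]
    exact Finset.sum_congr rfl fun w hw => by
      rw [halen w ((Finset.mem_filter.mp hw).2)]
  have h2 : (2 : Polynomial ℤ) * (∑ v : {v : Equiv.Perm (Fin n) //
      v ∈ alternatingGroup (Fin n)}, (X : Polynomial ℤ) ^ alen n (v : Equiv.Perm (Fin n)))
      = 2 * ∏ t ∈ Finset.Icc 2 (n - 1), (1 + C ((t : ℤ)) * X) := by
    rw [hsub, ← htotal, hsum]
  exact mul_left_cancel₀ (by norm_num : (2 : Polynomial ℤ) ≠ 0) h2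
end

section
/- For every n ≥ 2, the variance of the length function ℓ on A_n under the uniform distribution equals H_n - H_{n,2} - 1/4; that is, (1/|A_n|) · ∑_{v ∈ A_n} ℓ(v)² - ((1/|A_n|) · ∑_{v ∈ A_n} ℓ(v))² = H_n - H_{n,2} - 1/4 as rational numbers, where |A_n| = n!/2. -/
open Equiv Equiv.Perm

namespace AV

variable {α : Type*} [Fintype α] [DecidableEq α]

/-- number of cycles (orbits, incl. fixed points) -/
noncomputable def cyc (v : Perm α) : ℕ := Nat.card (Quotient (SameCycle.setoid v))

lemma sameCycle_iff_pow {v : Perm α} {x y : α} :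
    v.SameCycle x y ↔ ∃ i : ℕ, (v ^ i) x = y := by
  constructor
  · intro h
    obtain ⟨i, _, hi⟩ := h.exists_pow_eq'
    exact ⟨i, hi⟩
  · rintro ⟨i, hi⟩
    exact ⟨(i : ℤ), by simpa using hi⟩

lemma swap_mul_apply {a b : α} (v : Perm α) (p : α) :
    (swap a b * v) p = if v p = a then b else if v p = b then a else v p := by
  simp [Equiv.swap_apply_def, Perm.mul_apply]

/-- minimal positive return time of `a` under `v` -/
lemma exists_period (v : Perm α) (a : α) : ∃ m : ℕ, 0 < m ∧ (v ^ m) a = a := by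
  refine ⟨orderOf v, ?_, by simp [pow_orderOf_eq_one]⟩
  exact orderOf_pos v

end AV

namespace AV2
set_option linter.unusedSectionVars false
open AV
variable {α : Type*} [Fintype α] [DecidableEq α]

noncomputable def per (v : Perm α) (a : α) : ℕ :=
  Nat.find (AV.exists_period v a)

lemma per_pos (v : Perm α) (a : α) : 0 < per v a := (Nat.find_spec (AV.exists_period v a)).1

lemma pow_per (v : Perm α) (a : α) : (v ^ per v a) a = a := (Nat.find_spec (AV.exists_period v a)).2

lemma per_min (v : Perm α) (a : α) {i : ℕ} (h0 : 0 < i) (h : i < per v a) : (v ^ i) a ≠ a := by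
  intro he
  exact Nat.find_min (AV.exists_period v a) h ⟨h0, he⟩

lemma pow_mul_per (v : Perm α) (a : α) (q : ℕ) : (v ^ (per v a * q)) a = a := by
  induction q with
  | zero => simp
  | succ k ih => rw [Nat.mul_succ, pow_add, Perm.mul_apply, pow_per, ih]

lemma pow_mod_per (v : Perm α) (a : α) (i : ℕ) : (v ^ i) a = (v ^ (i % per v a)) a := by
  conv_lhs => rw [← Nat.mod_add_div i (per v a), pow_add, Perm.mul_apply,
    mul_comm (per v a) (i / per v a), mul_comm (i / per v a) (per v a), pow_mul_per]

lemma pow_inj_per (v : Perm α) (a : α) {s t : ℕ} (hs : s < per v a) (ht : t < per v a)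
    (h : (v ^ s) a = (v ^ t) a) : s = t := by
  rcases lt_trichotomy s t with hlt | he | hlt
  · exfalso
    have h2 : (v ^ s) ((v ^ (t - s)) a) = (v ^ s) a := by
      rw [← Perm.mul_apply, ← pow_add]
      rw [Nat.add_sub_cancel' hlt.le] at *
      exact h.symm
    have := (v ^ s).injective h2
    exact per_min v a (by omega) (by omega) this
  · exact he
  · exfalso
    have h2 : (v ^ t) ((v ^ (s - t)) a) = (v ^ t) a := by
      rw [← Perm.mul_apply, ← pow_add]
      rw [Nat.add_sub_cancel' hlt.le] at *
      exact h
    have := (v ^ t).injective h2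
    exact per_min v a (by omega) (by omega) this

end AV2

namespace AV3
set_option linter.unusedSectionVars false
open AV AV2
variable {α : Type*} [Fintype α] [DecidableEq α]

lemma sameCycle_apply_self (w : Perm α) (p : α) : w.SameCycle p (w p) :=
  (Perm.sameCycle_apply_right).2 (Perm.SameCycle.refl w p)

section Merge
variable {v : Perm α} {a b : α}

lemma merge_pow_eq (h : ¬ v.SameCycle a b) :
    ∀ i, i < per v a → ((swap a b * v) ^ i) a = (v ^ i) a := by
  intro i
  induction i with
  | zero => simp
  | succ k ih =>
    intro hk
    have hk' : k < per v a := by omega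
    have e1 : ((swap a b * v) ^ (k+1)) a = (swap a b * v) ((v ^ k) a) := by
      rw [pow_succ', Perm.mul_apply, ih hk']
    have e2 : v ((v ^ k) a) = (v ^ (k+1)) a := by
      rw [pow_succ', Perm.mul_apply]
    have h1 : (v ^ (k+1)) a ≠ a := per_min v a (by omega) hk
    have h2 : (v ^ (k+1)) a ≠ b := fun he => h ⟨((k:ℤ)+1), by exact_mod_cast he⟩
    rw [e1, AV.swap_mul_apply, e2]
    simp [h1, h2]

lemma merge_sc_ab (h : ¬ v.SameCycle a b) : (swap a b * v).SameCycle a b := by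
  have hm1 : 1 ≤ per v a := per_pos v a
  refine sameCycle_iff_pow.2 ⟨per v a, ?_⟩
  have e1 : ((swap a b * v) ^ per v a) a = (swap a b * v) ((v ^ (per v a - 1)) a) := by
    conv_lhs => rw [show per v a = (per v a - 1) + 1 by omega]
    rw [pow_succ', Perm.mul_apply, merge_pow_eq h _ (by omega)]
  have e2 : v ((v ^ (per v a - 1)) a) = a := by
    rw [← Perm.mul_apply, ← pow_succ', show per v a - 1 + 1 = per v a by omega, pow_per]
  rw [e1, AV.swap_mul_apply, e2]
  simp

lemma merge_step (h : ¬ v.SameCycle a b) (p : α) : (swap a b * v).SameCycle p (v p) := by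
  have key := merge_sc_ab h
  set w := swap a b * v with hw
  have hp : w p = if v p = a then b else if v p = b then a else v p := AV.swap_mul_apply v p
  by_cases h1 : v p = a
  · rw [h1]
    have hwp : w p = b := by rw [hp]; simp [h1]
    have h2 : w.SameCycle p b := hwp ▸ sameCycle_apply_self w p
    exact h2.trans key.symm
  · by_cases h2 : v p = b
    · rw [h2]
      have hwp : w p = a := by rw [hp]; simp [h1, h2]
      have h3 : w.SameCycle p a := hwp ▸ sameCycle_apply_self w p
      exact h3.trans key
    · have hwp : w p = v p := by rw [hp]; simp [h1, h2]
      exact hwp ▸ sameCycle_apply_self w p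

lemma merge_preserve (h : ¬ v.SameCycle a b) {p q : α} (hpq : v.SameCycle p q) :
    (swap a b * v).SameCycle p q := by
  have key : ∀ i : ℕ, (swap a b * v).SameCycle p ((v ^ i) p) := by
    intro i
    induction i with
    | zero => exact Perm.SameCycle.refl _ p
    | succ k ih =>
      have e : (v ^ (k+1)) p = v ((v ^ k) p) := by rw [pow_succ', Perm.mul_apply]
      rw [e]
      exact ih.trans (merge_step h _)
  obtain ⟨i, hi⟩ := sameCycle_iff_pow.1 hpq
  exact hi ▸ key i

lemma merge_desc (h : ¬ v.SameCycle a b) {p q : α} (hpq : (swap a b * v).SameCycle p q) :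
    v.SameCycle p q ∨ (v.SameCycle p a ∧ v.SameCycle b q) ∨
      (v.SameCycle p b ∧ v.SameCycle a q) := by
  set w := swap a b * v with hw
  set R : α → α → Prop := fun p q => v.SameCycle p q ∨ (v.SameCycle p a ∧ v.SameCycle b q) ∨
      (v.SameCycle p b ∧ v.SameCycle a q) with hR
  have hclosed : ∀ r, R p r → R p (w r) := by
    intro r hr
    have hpr : w r = if v r = a then b else if v r = b then a else v r := AV.swap_mul_apply v r
    by_cases h1 : v r = a
    · have hra : v.SameCycle r a := h1 ▸ sameCycle_apply_self v r
      have hwr : w r = b := by rw [hpr]; simp [h1]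
      rw [hwr]
      rcases hr with h' | ⟨h2, h3⟩ | ⟨h2, h3⟩
      · exact Or.inr (Or.inl ⟨h'.trans hra, Perm.SameCycle.refl v b⟩)
      · exact absurd (hra.symm.trans h3.symm).symm (fun hc => h hc.symm)
      · exact Or.inl h2
    · by_cases h2 : v r = b
      · have hrb : v.SameCycle r b := h2 ▸ sameCycle_apply_self v r
        have hwr : w r = a := by rw [hpr]; simp [h1, h2]
        rw [hwr]
        rcases hr with h' | ⟨h3, h4⟩ | ⟨h3, h4⟩
        · exact Or.inr (Or.inr ⟨h'.trans hrb, Perm.SameCycle.refl v a⟩)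
        · exact Or.inl h3
        · exact absurd (h4.trans hrb) h
      · have hst : w r = v r := by rw [hpr]; simp [h1, h2]
        rw [hst]
        have hrvr : v.SameCycle r (v r) := sameCycle_apply_self v r
        rcases hr with h' | ⟨h3, h4⟩ | ⟨h3, h4⟩
        · exact Or.inl (h'.trans hrvr)
        · exact Or.inr (Or.inl ⟨h3, h4.trans hrvr⟩)
        · exact Or.inr (Or.inr ⟨h3, h4.trans hrvr⟩)
  have key : ∀ i : ℕ, R p ((w ^ i) p) := by
    intro i
    induction i with
    | zero => exact Or.inl (Perm.SameCycle.refl v p)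
    | succ k ih =>
      have e : (w ^ (k+1)) p = w ((w ^ k) p) := by rw [pow_succ', Perm.mul_apply]
      rw [e]
      exact hclosed _ ih
  obtain ⟨i, hi⟩ := sameCycle_iff_pow.1 hpq
  exact hi ▸ key i

end Merge
end AV3

namespace AV4
set_option linter.unusedSectionVars false
open AV AV2 AV3
variable {α : Type*} [Fintype α] [DecidableEq α]

lemma pow_mul_fix (w : Perm α) (a : α) {j : ℕ} (hj : (w ^ j) a = a) (q : ℕ) :
    (w ^ (j * q)) a = a := by
  induction q with
  | zero => simp
  | succ k ih => rw [Nat.mul_succ, pow_add, Perm.mul_apply, hj, ih]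

lemma pow_mod_gen (w : Perm α) (a : α) {j : ℕ} (hj : (w ^ j) a = a) (t : ℕ) :
    (w ^ t) a = (w ^ (t % j)) a := by
  rcases Nat.eq_zero_or_pos j with h0 | _
  · simp [h0]
  · conv_lhs => rw [← Nat.mod_add_div t j, pow_add, Perm.mul_apply,
      mul_comm j (t / j), mul_comm (t / j) j, pow_mul_fix w a hj]

variable {v : Perm α} {a b : α}

lemma split_not_sc (hab : a ≠ b) (h : v.SameCycle a b) :
    ¬ (swap a b * v).SameCycle a b := by
  set w := swap a b * v with hw
  obtain ⟨i, hi⟩ := sameCycle_iff_pow.1 h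
  set m := per v a with hm
  have hjm : i % m < m := Nat.mod_lt _ (per_pos v a)
  set j := i % m with hj
  have hjb : (v ^ j) a = b := by rw [hj, ← pow_mod_per, hi]
  have hj0 : 0 < j := by
    rcases Nat.eq_zero_or_pos j with h0 | h1
    · exfalso; apply hab; rw [h0] at hjb; simpa using hjb
    · exact h1
  -- trajectory of a under w agrees with v before j
  have claim1 : ∀ t, t < j → (w ^ t) a = (v ^ t) a := by
    intro t
    induction t with
    | zero => simp
    | succ k ih =>
      intro hk
      have e1 : (w ^ (k+1)) a = w ((v ^ k) a) := by
        rw [pow_succ', Perm.mul_apply, ih (by omega)]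
      have e2 : v ((v ^ k) a) = (v ^ (k+1)) a := by rw [pow_succ', Perm.mul_apply]
      have h1 : (v ^ (k+1)) a ≠ a := per_min v a (by omega) (by omega)
      have h2 : (v ^ (k+1)) a ≠ b := by
        intro he
        rw [← hjb] at he
        have := pow_inj_per v a (show k+1 < m by omega) hjm he
        omega
      rw [e1, hw, AV.swap_mul_apply, e2]
      simp [h1, h2]
  have claim2 : (w ^ j) a = a := by
    have e1 : (w ^ j) a = w ((v ^ (j-1)) a) := by
      conv_lhs => rw [show j = (j-1)+1 by omega]
      rw [pow_succ', Perm.mul_apply, claim1 _ (by omega)]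
    have e2 : v ((v ^ (j-1)) a) = b := by
      rw [← Perm.mul_apply, ← pow_succ', show j - 1 + 1 = j by omega, hjb]
    rw [e1, hw, AV.swap_mul_apply, e2]
    simp [hab.symm]
  intro hcon
  obtain ⟨t, ht⟩ := sameCycle_iff_pow.1 hcon
  rw [pow_mod_gen w a claim2 t] at ht
  have htj : t % j < j := Nat.mod_lt _ hj0
  rw [claim1 _ htj] at ht
  rw [← hjb] at ht
  have := pow_inj_per v a (by omega) hjm ht
  omega

lemma merge_cyc (hab : a ≠ b) (h : ¬ v.SameCycle a b) :
    cyc (swap a b * v) + 1 = cyc v := by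
  classical
  set w := swap a b * v with hw
  let sv := SameCycle.setoid v
  let sw := SameCycle.setoid w
  let Ψ : Quotient sv → Quotient sw := Quotient.map' id (fun p q hpq => merge_preserve h hpq)
  have hΨ : ∀ p : α, Ψ (Quotient.mk'' p) = Quotient.mk'' p := fun p => rfl
  let F : {z : Quotient sv // z ≠ Quotient.mk'' a} → Quotient sw := fun z => Ψ z.1
  have hinj : Function.Injective F := by
    rintro ⟨z1, h1⟩ ⟨z2, h2⟩ heq
    obtain ⟨p, rfl⟩ := Quotient.exists_rep z1
    obtain ⟨q, rfl⟩ := Quotient.exists_rep z2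
    simp only [F] at heq
    have heq' : (Quotient.mk'' p : Quotient sw) = Quotient.mk'' q := heq
    have hsc : w.SameCycle p q := Quotient.exact' heq'
    rcases merge_desc h hsc with h' | ⟨h3, h4⟩ | ⟨h3, h4⟩
    · exact Subtype.ext (Quotient.sound' h')
    · exact absurd (Quotient.sound' h3 : (Quotient.mk'' p : Quotient sv) = Quotient.mk'' a)
        (by exact h1)
    · exact absurd ((Quotient.sound' h4.symm : (Quotient.mk'' q : Quotient sv) = Quotient.mk'' a))
        (by exact h2)
  have hsurj : Function.Surjective F := by
    intro y
    obtain ⟨p, rfl⟩ := Quotient.exists_rep y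
    by_cases hp : v.SameCycle p a
    · refine ⟨⟨Quotient.mk'' b, ?_⟩, ?_⟩
      · intro hc
        exact h (Quotient.exact' hc).symm
      · have h1 : w.SameCycle b p :=
          (merge_sc_ab h).symm.trans (merge_preserve h hp).symm
        exact (Quotient.sound' h1 : (Quotient.mk'' b : Quotient sw) = Quotient.mk'' p)
    · exact ⟨⟨Quotient.mk'' p, fun hc => hp (Quotient.exact' hc)⟩, rfl⟩
  have hcard := Nat.card_eq_of_bijective F ⟨hinj, hsurj⟩
  have hsplit : Nat.card (Quotient sv) =
      Nat.card {z : Quotient sv // z = Quotient.mk'' a} +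
      Nat.card {z : Quotient sv // z ≠ Quotient.mk'' a} := by
    classical
    rw [← Nat.card_sum]
    exact Nat.card_congr (Equiv.sumCompl (fun z => z = Quotient.mk'' a)).symm
  have hone : Nat.card {z : Quotient sv // z = Quotient.mk'' a} = 1 := by
    haveI : Subsingleton {z : Quotient sv // z = Quotient.mk'' a} :=
      ⟨fun x y => Subtype.ext (x.2.trans y.2.symm)⟩
    haveI : Nonempty {z : Quotient sv // z = Quotient.mk'' a} := ⟨⟨Quotient.mk'' a, rfl⟩⟩
    exact Nat.card_unique
  show Nat.card (Quotient sw) + 1 = Nat.card (Quotient sv)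
  omega

lemma split_cyc (hab : a ≠ b) (h : v.SameCycle a b) :
    cyc (swap a b * v) = cyc v + 1 := by
  have h2 := split_not_sc hab h
  have h3 := merge_cyc hab h2
  have : swap a b * (swap a b * v) = v := by
    rw [← mul_assoc, Equiv.swap_mul_self, one_mul]
  rw [this] at h3
  omega

lemma cyc_one_eq : cyc (1 : Perm α) = Fintype.card α := by
  let sv := SameCycle.setoid (1 : Perm α)
  have hbij : Function.Bijective (Quotient.mk'' : α → Quotient sv) := by
    constructor
    · intro p q hpq
      have := Quotient.exact' hpq
      exact (Perm.sameCycle_one).mp this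
    · exact fun y => Quotient.exists_rep y
  have := Nat.card_eq_of_bijective _ hbij
  rw [Nat.card_eq_fintype_card] at this
  exact this.symm

end AV4

namespace AV5
set_option linter.unusedSectionVars false
open AV AV2 AV3 AV4
variable {α : Type*} [Fintype α] [DecidableEq α]

/-- `Φ(v) = c(v) + s(v)` with distinguished points `x y`. -/
noncomputable def phiN (v : Perm α) (x y : α) : ℕ :=
  AV.cyc v + (if v.SameCycle x y then 1 else 0)

lemma card_ne_add_one {β : Type*} [Finite β] (x : β) :
    Nat.card {z : β // z ≠ x} + 1 = Nat.card β := by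
  classical
  have hsplit : Nat.card β =
      Nat.card {z : β // z = x} + Nat.card {z : β // z ≠ x} := by
    rw [← Nat.card_sum]
    exact Nat.card_congr (Equiv.sumCompl (fun z => z = x)).symm
  have hone : Nat.card {z : β // z = x} = 1 := by
    haveI : Subsingleton {z : β // z = x} := ⟨fun a b => Subtype.ext (a.2.trans b.2.symm)⟩
    haveI : Nonempty {z : β // z = x} := ⟨⟨x, rfl⟩⟩
    exact Nat.card_unique
  omega

variable {v u : Perm α} {x y a b : α}

lemma phi_one (hxy : x ≠ y) : phiN (1 : Perm α) x y = Fintype.card α := by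
  unfold phiN
  rw [cyc_one_eq]
  simp [Perm.sameCycle_one, hxy]

lemma phi_swapxy (hxy : x ≠ y) (u : Perm α) : phiN (swap x y * u) x y = phiN u x y := by
  unfold phiN
  by_cases h : u.SameCycle x y
  · rw [split_cyc hxy h]
    simp [split_not_sc hxy h, h]
  · rw [← merge_cyc hxy h]
    simp [merge_sc_ab h, h]

lemma phi_step_ge (hab : a ≠ b) (u : Perm α) :
    phiN u x y ≤ phiN (swap a b * u) x y + 1 := by
  unfold phiN
  by_cases h : u.SameCycle a b
  · rw [split_cyc hab h]
    split_ifs <;> omega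
  · have h1 := merge_cyc hab h
    have h2 : u.SameCycle x y → (swap a b * u).SameCycle x y := fun hs => merge_preserve h hs
    split_ifs with hs1 hs2 <;> first
      | omega
      | (exact absurd (h2 hs1) hs2)
      | (split_ifs at * <;> omega)

lemma cyc_le_card (v : Perm α) : AV.cyc v ≤ Fintype.card α := by
  have h := Nat.card_le_card_of_surjective
    (Quotient.mk'' : α → Quotient (SameCycle.setoid v)) (fun z => Quotient.exists_rep z)
  unfold AV.cyc
  rw [← Nat.card_eq_fintype_card (α := α)]
  exact h

lemma surj_ne (hxy : x ≠ y) (hs : v.SameCycle x y) :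
    Function.Surjective (fun z : {z : α // z ≠ y} =>
      (Quotient.mk'' z.1 : Quotient (SameCycle.setoid v))) := by
  intro q
  obtain ⟨p, rfl⟩ := Quotient.exists_rep q
  by_cases hp : p = y
  · exact ⟨⟨x, hxy⟩, Quotient.sound' (hp ▸ hs)⟩
  · exact ⟨⟨p, hp⟩, rfl⟩

lemma phi_le_card (hxy : x ≠ y) (v : Perm α) : phiN v x y ≤ Fintype.card α := by
  unfold phiN
  by_cases h : v.SameCycle x y
  · have h1 := Nat.card_le_card_of_surjective _ (surj_ne hxy h)
    have h2 := card_ne_add_one (β := α) y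
    rw [Nat.card_eq_fintype_card (α := α)] at h2
    simp only [h, if_true]
    unfold AV.cyc
    omega
  · simp only [h, if_false]
    have := cyc_le_card v
    omega

lemma phi_eq_card (hxy : x ≠ y) (hv : phiN v x y = Fintype.card α) :
    v = 1 ∨ v = swap x y := by
  unfold phiN at hv
  by_cases h : v.SameCycle x y
  · right
    simp only [h, if_true] at hv
    -- cyc v = card α - 1 ; the map from {z // z ≠ y} is surjective with equal card
    have h1 := surj_ne hxy h
    have h2 := card_ne_add_one (β := α) y
    rw [Nat.card_eq_fintype_card (α := α)] at h2
    have hcardeq : Nat.card {z : α // z ≠ y} =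
        Nat.card (Quotient (SameCycle.setoid v)) := by
      unfold AV.cyc at hv
      omega
    have hbij := (Nat.bijective_iff_surjective_and_card _).2 ⟨h1, hcardeq⟩
    have hfix : ∀ p : α, p ≠ x → p ≠ y → v p = p := by
      intro p hpx hpy
      by_cases hvp : v p = y
      · exfalso
        have e1 : (Quotient.mk'' p : Quotient (SameCycle.setoid v)) = Quotient.mk'' x := by
          apply Quotient.sound'
          have h3 : v.SameCycle p y := hvp ▸ sameCycle_apply_self v p
          exact h3.trans h.symm
        have := hbij.1 (a₁ := ⟨p, hpy⟩) (a₂ := ⟨x, hxy⟩) e1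
        exact hpx (by simpa using this)
      · have e1 : (Quotient.mk'' (v p) : Quotient (SameCycle.setoid v)) = Quotient.mk'' p :=
          Quotient.sound' (sameCycle_apply_self v p).symm
        have := hbij.1 (a₁ := ⟨v p, hvp⟩) (a₂ := ⟨p, hpy⟩) e1
        simpa using this
    have hvx : v x = y := by
      by_cases hx1 : v x = x
      · exact absurd (h.eq_of_left hx1) hxy
      · by_cases hx2 : v x = y
        · exact hx2
        · exfalso
          have hfx := hfix (v x) hx1 hx2
          exact hx1 (v.injective hfx)
    have hvy : v y = x := by
      by_cases hy1 : v y = y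
      · exact absurd (h.symm.eq_of_left hy1) (Ne.symm hxy)
      · by_cases hy2 : v y = x
        · exact hy2
        · have := hfix (v y) hy2 hy1
          exact absurd (v.injective this) hy1
    ext p
    by_cases hp1 : p = x
    · simp [hp1, hvx]
    · by_cases hp2 : p = y
      · simp [hp2, hvy, Equiv.swap_apply_right]
      · rw [hfix p hp1 hp2, Equiv.swap_apply_of_ne_of_ne hp1 hp2]
  · left
    simp only [h, if_false] at hv
    have hbij := (Nat.bijective_iff_surjective_and_card
      (Quotient.mk'' : α → Quotient (SameCycle.setoid v))).2
      ⟨fun z => Quotient.exists_rep z, by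
        rw [Nat.card_eq_fintype_card (α := α)]; unfold AV.cyc at hv; omega⟩
    ext p
    have e1 : (Quotient.mk'' (v p) : Quotient (SameCycle.setoid v)) = Quotient.mk'' p :=
      Quotient.sound' (sameCycle_apply_self v p).symm
    simpa using hbij.1 e1

end AV5

namespace AV6
set_option linter.unusedSectionVars false
open AV AV2 AV3 AV4 AV5

variable {n : ℕ} [NeZero n]

lemma zero_ne_one (hn : 2 ≤ n) : (0 : Fin n) ≠ 1 := by
  intro h
  have := congrArg Fin.val h
  rw [Fin.val_zero, Fin.val_one'] at this
  rw [Nat.mod_eq_of_lt (by omega)] at this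
  omega

lemma anchor_eq (hn : 2 ≤ n) (h1 : 1 < n) :
    Equiv.swap (⟨0, by omega⟩ : Fin n) ⟨1, h1⟩ = Equiv.swap (0 : Fin n) (1 : Fin n) := by
  have e0 : (⟨0, by omega⟩ : Fin n) = (0 : Fin n) := Fin.ext (by simp)
  have e1 : (⟨1, h1⟩ : Fin n) = (1 : Fin n) := by
    apply Fin.ext
    rw [Fin.val_one']
    exact (Nat.mod_eq_of_lt h1).symm
  rw [e0, e1]

lemma mem_ATrans_of (hn : 2 ≤ n) {i j : Fin n} (hij : i ≠ j) :
    Equiv.swap (0 : Fin n) 1 * Equiv.swap i j ∈ ATrans n := by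
  rcases lt_or_gt_of_ne hij with h | h
  · exact ⟨by omega, i, j, h, by rw [anchor_eq hn]⟩
  · exact ⟨by omega, j, i, h, by rw [anchor_eq hn, Equiv.swap_comm i j]⟩

lemma ATrans_elim (hn : 2 ≤ n) {t : Equiv.Perm (Fin n)} (ht : t ∈ ATrans n) :
    ∃ i j : Fin n, i ≠ j ∧ t = Equiv.swap (0 : Fin n) 1 * Equiv.swap i j := by
  obtain ⟨h1, i, j, hij, rfl⟩ := ht
  exact ⟨i, j, hij.ne, by rw [anchor_eq hn]⟩

lemma ATrans_inv_mem (hn : 2 ≤ n) {t : Equiv.Perm (Fin n)} (ht : t ∈ ATrans n) :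
    t⁻¹ ∈ ATrans n := by
  obtain ⟨i, j, hij, rfl⟩ := ATrans_elim hn ht
  have key : (Equiv.swap (0 : Fin n) 1 * Equiv.swap i j)⁻¹ =
      Equiv.swap (0 : Fin n) 1 *
        Equiv.swap (Equiv.swap (0 : Fin n) 1 i) (Equiv.swap (0 : Fin n) 1 j) := by
    rw [mul_inv_rev, Equiv.swap_inv, Equiv.swap_inv, Equiv.swap_apply_apply]
    simp [← mul_assoc]
  rw [key]
  exact mem_ATrans_of hn (fun he => hij ((Equiv.swap (0 : Fin n) 1).injective he))

lemma phi_mul_mem_ge (hn : 2 ≤ n) {t : Equiv.Perm (Fin n)} (ht : t ∈ ATrans n)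
    (u : Equiv.Perm (Fin n)) :
    phiN u (0 : Fin n) 1 ≤ phiN (t * u) (0 : Fin n) 1 + 1 := by
  obtain ⟨i, j, hij, rfl⟩ := ATrans_elim hn ht
  rw [mul_assoc, phi_swapxy (zero_ne_one hn)]
  exact phi_step_ge hij u

lemma lower_bound (hn : 2 ≤ n) (l : List (Equiv.Perm (Fin n)))
    (hl : ∀ x ∈ l, x ∈ ATrans n) :
    n ≤ phiN l.prod (0 : Fin n) 1 + l.length := by
  induction l with
  | nil =>
    simp only [List.prod_nil, List.length_nil, add_zero]
    rw [phi_one (zero_ne_one hn), Fintype.card_fin]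
  | cons t l ih =>
    have h1 := ih (fun x hx => hl x (List.mem_cons_of_mem t hx))
    have h2 := phi_mul_mem_ge hn (hl t List.mem_cons_self) l.prod
    rw [List.prod_cons, List.length_cons]
    omega

lemma choice_lemma (hn : 2 ≤ n) {v : Equiv.Perm (Fin n)}
    (hsgn : Equiv.Perm.sign v = 1) (hv : v ≠ 1) :
    ∃ x0, v x0 ≠ x0 ∧ (v.SameCycle 0 1 → x0 ≠ 0 ∧ x0 ≠ 1) := by
  by_cases hs : v.SameCycle 0 1
  · by_contra hcon
    push_neg at hcon
    have hfix : ∀ p : Fin n, p ≠ 0 → p ≠ 1 → v p = p := by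
      intro p hp0 hp1
      by_contra hne
      exact hp1 ((hcon p hne).2 hp0)
    have hv0 : v 0 = 0 ∨ v 0 = 1 := by
      by_contra hc
      push_neg at hc
      have := hfix (v 0) hc.1 hc.2
      have h0 : v 0 = 0 := v.injective this
      exact hc.1 h0
    have hv1 : v 1 = 0 ∨ v 1 = 1 := by
      by_contra hc
      push_neg at hc
      have := hfix (v 1) hc.1 hc.2
      have h0 : v 1 = 1 := v.injective this
      exact hc.2 h0
    rcases hv0 with h0 | h0
    · -- then SameCycle v 0 1 forces 0 = 1
      exact absurd (hs.eq_of_left h0) (zero_ne_one hn)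
    · rcases hv1 with h1 | h1
      · -- v = swap 0 1, odd
        have : v = Equiv.swap (0 : Fin n) 1 := by
          ext p
          by_cases hp0 : p = 0
          · simp [hp0, h0]
          · by_cases hp1 : p = 1
            · simp [hp1, h1, Equiv.swap_apply_right]
            · rw [hfix p hp0 hp1, Equiv.swap_apply_of_ne_of_ne hp0 hp1]
        rw [this, Equiv.Perm.sign_swap (zero_ne_one hn)] at hsgn
        norm_num at hsgn
      · -- v 1 = 1: SameCycle forces 1 = 0
        exact absurd (hs.symm.eq_of_left h1) (Ne.symm (zero_ne_one hn))
  · have : ∃ x0, v x0 ≠ x0 := by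
      by_contra hc
      push_neg at hc
      exact hv (Equiv.ext hc)
    obtain ⟨x0, hx0⟩ := this
    exact ⟨x0, hx0, fun hsc => absurd hsc hs⟩

lemma phi_split_step (hn : 2 ≤ n) {v : Equiv.Perm (Fin n)} {x0 : Fin n}
    (hx : v x0 ≠ x0) (hcond : v.SameCycle 0 1 → x0 ≠ 0 ∧ x0 ≠ 1) :
    phiN (Equiv.swap x0 (v x0) * v) (0 : Fin n) 1 = phiN v (0 : Fin n) 1 + 1 := by
  set w := Equiv.swap x0 (v x0) * v with hw
  have hab : x0 ≠ v x0 := fun he => hx he.symm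
  have hsc : v.SameCycle x0 (v x0) := sameCycle_apply_self v x0
  have hcyc : AV.cyc w = AV.cyc v + 1 := split_cyc hab hsc
  have hwx0 : w x0 = x0 := by
    rw [hw]
    simp [AV.swap_mul_apply]
  have hfixw : Function.IsFixedPt w x0 := hwx0
  have hnsc : ¬ w.SameCycle x0 (v x0) := by
    intro hc
    exact hab (hc.eq_of_left hfixw)
  have hvw : Equiv.swap x0 (v x0) * w = v := by
    rw [hw, ← mul_assoc, Equiv.swap_mul_self, one_mul]
  have hsiff : (w.SameCycle 0 1 ↔ v.SameCycle 0 1) := by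
    constructor
    · intro h
      have := merge_preserve hnsc h
      rwa [hvw] at this
    · intro h
      obtain ⟨h0, h1⟩ := hcond h
      have h' : (Equiv.swap x0 (v x0) * w).SameCycle 0 1 := by rw [hvw]; exact h
      rcases merge_desc hnsc h' with hd | ⟨hd1, hd2⟩ | ⟨hd1, hd2⟩
      · exact hd
      · exact absurd (hd1.eq_of_right hfixw) (Ne.symm h0)
      · exact absurd (hd2.symm.eq_of_right hfixw) (Ne.symm h1)
  unfold phiN
  rw [hcyc]
  by_cases h : v.SameCycle 0 1
  · simp [h, hsiff.2 h]
  · have hnw : ¬ w.SameCycle 0 1 := fun hc => h (hsiff.1 hc)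
    simp [h, hnw]

lemma upper_bound (hn : 2 ≤ n) :
    ∀ k (v : Equiv.Perm (Fin n)), Equiv.Perm.sign v = 1 → phiN v (0 : Fin n) 1 + k = n →
    ∃ l : List (Equiv.Perm (Fin n)),
      (∀ x ∈ l, x ∈ ATrans n) ∧ l.length = k ∧ l.prod = v := by
  intro k
  induction k with
  | zero =>
    intro v hsgn hphi
    rw [add_zero] at hphi
    rcases phi_eq_card (zero_ne_one hn) (by rw [Fintype.card_fin]; exact hphi) with h | h
    · exact ⟨[], by simp, rfl, by simp [h]⟩
    · rw [h, Equiv.Perm.sign_swap (zero_ne_one hn)] at hsgn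
      norm_num at hsgn
  | succ k ih =>
    intro v hsgn hphi
    have hvne : v ≠ 1 := by
      intro he
      rw [he, phi_one (zero_ne_one hn), Fintype.card_fin] at hphi
      omega
    obtain ⟨x0, hx0, hcond⟩ := choice_lemma hn hsgn hvne
    set u := Equiv.swap (0 : Fin n) 1 * (Equiv.swap x0 (v x0) * v) with hu
    have hphiu : phiN u (0 : Fin n) 1 + k = n := by
      rw [hu, phi_swapxy (zero_ne_one hn), phi_split_step hn hx0 hcond]
      omega
    have hsgnu : Equiv.Perm.sign u = 1 := by
      rw [hu]
      simp [Equiv.Perm.sign_swap (zero_ne_one hn),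
        Equiv.Perm.sign_swap (fun he => hx0 he.symm : x0 ≠ v x0), hsgn]
    obtain ⟨l, hl1, hl2, hl3⟩ := ih u hsgnu hphiu
    set t : Equiv.Perm (Fin n) := Equiv.swap (0 : Fin n) 1 * Equiv.swap x0 (v x0) with hT
    have htmem : t ∈ ATrans n := mem_ATrans_of hn (fun he => hx0 he.symm)
    have htinv : t⁻¹ ∈ ATrans n := ATrans_inv_mem hn htmem
    refine ⟨t⁻¹ :: l, ?_, by simp [hl2], ?_⟩
    · intro x hx
      rcases List.mem_cons.1 hx with h | h
      · exact h ▸ htinv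
      · exact hl1 x h
    · rw [List.prod_cons, hl3, hu, hT]
      simp [mul_inv_rev, Equiv.swap_inv, mul_assoc, Equiv.swap_mul_self_mul]

theorem alen_add_phi (hn : 2 ≤ n) {v : Equiv.Perm (Fin n)}
    (hsgn : Equiv.Perm.sign v = 1) :
    alen n v + phiN v (0 : Fin n) 1 = n := by
  have hle : phiN v (0 : Fin n) 1 ≤ n := by
    have := phi_le_card (zero_ne_one hn) v
    rwa [Fintype.card_fin] at this
  set k0 := n - phiN v (0 : Fin n) 1 with hk0
  obtain ⟨l, hl1, hl2, hl3⟩ := upper_bound hn k0 v hsgn (by omega)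
  have hmem : k0 ∈ {k | ∃ l : List (Equiv.Perm (Fin n)),
      (∀ x ∈ l, x ∈ ATrans n) ∧ l.length = k ∧ l.prod = v} := ⟨l, hl1, hl2, hl3⟩
  have hlb : ∀ m ∈ {k | ∃ l : List (Equiv.Perm (Fin n)),
      (∀ x ∈ l, x ∈ ATrans n) ∧ l.length = m ∧ l.prod = v}, k0 ≤ m := by
    rintro m ⟨l', hl1', hl2', hl3'⟩
    have := lower_bound hn l' hl1'
    rw [hl3', hl2'] at this
    omega
  have : alen n v = k0 := le_antisymm (Nat.sInf_le hmem) (le_csInf ⟨k0, hmem⟩ hlb)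
  omega

end AV6

namespace AV7
set_option linter.unusedSectionVars false
open AV AV2 AV3 AV4 AV5

variable {α β : Type*} [Fintype α] [DecidableEq α] [Fintype β] [DecidableEq β]

/-- `permCongr` as a `MulEquiv`. -/
def pcM (e : α ≃ β) : Perm α ≃* Perm β :=
  { e.permCongr with
    map_mul' := by
      intro p q
      ext x
      simp [Equiv.permCongr_apply] }

lemma pcM_apply (e : α ≃ β) (v : Perm α) (x : α) : (pcM e v) (e x) = e (v x) := by
  simp [pcM, Equiv.permCongr_apply]

lemma sameCycle_pcM (e : α ≃ β) (v : Perm α) (x y : α) :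
    (pcM e v).SameCycle (e x) (e y) ↔ v.SameCycle x y := by
  constructor
  · rintro ⟨i, hi⟩
    refine ⟨i, ?_⟩
    have : (pcM e v) ^ i = pcM e (v ^ i) := (map_zpow (pcM e) v i).symm
    rw [this] at hi
    have h2 : (pcM e (v ^ i)) (e x) = e ((v ^ i) x) := pcM_apply e _ x
    rw [h2] at hi
    exact e.injective hi
  · rintro ⟨i, hi⟩
    refine ⟨i, ?_⟩
    have : (pcM e v) ^ i = pcM e (v ^ i) := (map_zpow (pcM e) v i).symm
    rw [this, pcM_apply e _ x, hi]

lemma cyc_pcM (e : α ≃ β) (v : Perm α) : AV.cyc (pcM e v) = AV.cyc v := by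
  unfold AV.cyc
  refine (Nat.card_congr ?_).symm
  exact Quotient.congr e (fun a b => (sameCycle_pcM e v a b).symm)

lemma phiN_pcM (e : α ≃ β) (v : Perm α) (x y : α) :
    phiN (pcM e v) (e x) (e y) = phiN v x y := by
  simp [phiN, cyc_pcM, sameCycle_pcM]

/-- `optionCongr` as a multiplicative map. -/
lemma optionCongr_mul (p q : Perm α) :
    Equiv.optionCongr (p * q) = Equiv.optionCongr p * Equiv.optionCongr q := by
  ext x
  cases x <;> simp

def ocM : Perm α →* Perm (Option α) :=
  { toFun := Equiv.optionCongr
    map_one' := Equiv.optionCongr_one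
    map_mul' := optionCongr_mul }

lemma ocM_none (σ : Perm α) : (Equiv.optionCongr σ) none = none := by simp

lemma sameCycle_oc_some (σ : Perm α) (x y : α) :
    Equiv.Perm.SameCycle (Equiv.optionCongr σ) (some x) (some y) ↔ σ.SameCycle x y := by
  constructor
  · rintro ⟨i, hi⟩
    refine ⟨i, ?_⟩
    have : (Equiv.optionCongr σ) ^ i = Equiv.optionCongr (σ ^ i) := (map_zpow ocM σ i).symm
    rw [this] at hi
    simpa using hi
  · rintro ⟨i, hi⟩
    refine ⟨i, ?_⟩
    have : (Equiv.optionCongr σ) ^ i = Equiv.optionCongr (σ ^ i) := (map_zpow ocM σ i).symm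
    rw [this]
    simp [hi]

lemma sameCycle_oc_none (σ : Perm α) (z : Option α) :
    Equiv.Perm.SameCycle (Equiv.optionCongr σ) none z ↔ z = none := by
  constructor
  · intro h
    exact (h.eq_of_left (ocM_none σ)).symm
  · rintro rfl
    exact Perm.SameCycle.refl _ _

lemma cyc_oc (σ : Perm α) : AV.cyc (Equiv.optionCongr σ) = AV.cyc σ + 1 := by
  classical
  set so := SameCycle.setoid (Equiv.optionCongr σ)
  set ss := SameCycle.setoid σ
  let F : Quotient ss → {z : Quotient so // z ≠ Quotient.mk'' none} := fun q =>
    ⟨Quotient.map' some (fun a b hab => (sameCycle_oc_some σ a b).2 hab) q, by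
      obtain ⟨p, rfl⟩ := Quotient.exists_rep q
      intro hc
      have h2 : Equiv.Perm.SameCycle (Equiv.optionCongr σ) (some p) none :=
        Quotient.exact' (hc : (Quotient.mk'' (some p) : Quotient so) = Quotient.mk'' none)
      have := (sameCycle_oc_none σ (some p)).1 h2.symm
      simp at this⟩
  have hinj : Function.Injective F := by
    intro q1 q2 he
    obtain ⟨p1, rfl⟩ := Quotient.exists_rep q1
    obtain ⟨p2, rfl⟩ := Quotient.exists_rep q2
    have h1 : (Quotient.mk'' (some p1) : Quotient so) = Quotient.mk'' (some p2) :=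
      congrArg Subtype.val he
    exact Quotient.sound' ((sameCycle_oc_some σ p1 p2).1 (Quotient.exact' h1))
  have hsurj : Function.Surjective F := by
    rintro ⟨z, hz⟩
    obtain ⟨w, rfl⟩ := Quotient.exists_rep z
    cases w with
    | none => exact absurd rfl hz
    | some p => exact ⟨Quotient.mk'' p, rfl⟩
  have hcard := Nat.card_eq_of_bijective F ⟨hinj, hsurj⟩
  have h2 := card_ne_add_one (β := Quotient so) (Quotient.mk'' none)
  have hfin : Nat.card (Quotient so) = Nat.card (Quotient ss) + 1 := by omega
  unfold AV.cyc
  exact hfin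

end AV7

namespace AV8
set_option linter.unusedSectionVars false
open AV AV2 AV3 AV4 AV5 AV7

variable {α : Type*} [Fintype α] [DecidableEq α]

lemma decomp_none (σ : Perm α) :
    Equiv.Perm.decomposeOption.symm ((none : Option α), σ) = Equiv.optionCongr σ := by
  show Equiv.swap none none * Equiv.optionCongr σ = Equiv.optionCongr σ
  rw [Equiv.swap_self]
  show (1 : Perm (Option α)) * Equiv.optionCongr σ = Equiv.optionCongr σ
  rw [one_mul]

lemma phi_decomp_none (σ : Perm α) (x y : α) :
    phiN (Equiv.Perm.decomposeOption.symm ((none : Option α), σ)) (some x) (some y)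
      = phiN σ x y + 1 := by
  rw [decomp_none]
  unfold phiN
  rw [cyc_oc]
  simp only [sameCycle_oc_some]
  split_ifs <;> omega

lemma phi_decomp_some (σ : Perm α) (q : α) (x y : α) :
    phiN (Equiv.Perm.decomposeOption.symm (some q, σ)) (some x) (some y) = phiN σ x y := by
  have hds : Equiv.Perm.decomposeOption.symm ((some q : Option α), σ) =
      Equiv.swap none (some q) * Equiv.optionCongr σ := rfl
  rw [hds]
  have h : ¬ Equiv.Perm.SameCycle (Equiv.optionCongr σ) none (some q) := by
    rw [sameCycle_oc_none]
    simp
  have hab : (none : Option α) ≠ some q := by simp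
  have hcyc : AV.cyc (Equiv.swap none (some q) * Equiv.optionCongr σ) + 1 =
      AV.cyc (Equiv.optionCongr σ) := merge_cyc hab h
  have hcyc2 := cyc_oc σ
  have hsiff : Equiv.Perm.SameCycle (Equiv.swap none (some q) * Equiv.optionCongr σ)
      (some x) (some y) ↔ σ.SameCycle x y := by
    constructor
    · intro hsc
      rcases merge_desc h hsc with hd | ⟨hd1, hd2⟩ | ⟨hd1, hd2⟩
      · exact (sameCycle_oc_some σ x y).1 hd
      · have := (sameCycle_oc_none σ (some x)).1 hd1.symm
        simp at this
      · have := (sameCycle_oc_none σ (some y)).1 hd2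
        simp at this
    · intro hsc
      exact merge_preserve h ((sameCycle_oc_some σ x y).2 hsc)
  unfold phiN
  simp only [hsiff]
  split_ifs <;> omega

lemma sum_perm_option (f : ℕ → ℚ) (x y : α) :
    ∑ w : Perm (Option α), f (phiN w (some x) (some y))
      = ∑ σ : Perm α, (f (phiN σ x y + 1) + (Fintype.card α : ℚ) * f (phiN σ x y)) := by
  classical
  have h1 : ∑ w : Perm (Option α), f (phiN w (some x) (some y))
      = ∑ p : Option α × Perm α,
          f (phiN (Equiv.Perm.decomposeOption.symm p) (some x) (some y)) := by
    refine Fintype.sum_equiv Equiv.Perm.decomposeOption _ _ (fun w => ?_)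
    rw [Equiv.symm_apply_apply]
  rw [h1, Fintype.sum_prod_type, Fintype.sum_option]
  have h2 : ∀ σ : Perm α,
      f (phiN (Equiv.Perm.decomposeOption.symm ((none : Option α), σ)) (some x) (some y))
        = f (phiN σ x y + 1) := fun σ => by rw [phi_decomp_none]
  have h3 : ∀ (q : α) (σ : Perm α),
      f (phiN (Equiv.Perm.decomposeOption.symm (some q, σ)) (some x) (some y))
        = f (phiN σ x y) := fun q σ => by rw [phi_decomp_some]
  simp_rw [h2, h3]
  rw [Finset.sum_add_distrib]
  congr 1
  rw [Finset.sum_comm]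
  simp [Finset.sum_const, Finset.card_univ, mul_comm, Finset.mul_sum]

lemma sum_fin_succ {n : ℕ} [NeZero n] (hn : 2 ≤ n) (f : ℕ → ℚ) :
    ∑ v : Perm (Fin (n+1)), f (phiN v (0 : Fin (n+1)) 1)
      = ∑ σ : Perm (Fin n),
          (f (phiN σ (0 : Fin n) 1 + 1) + (n : ℚ) * f (phiN σ (0 : Fin n) 1)) := by
  classical
  have key : ∀ v : Perm (Fin (n+1)),
      phiN v (0 : Fin (n+1)) 1 = phiN (pcM finSuccEquivLast v) (some (0 : Fin n)) (some 1) := by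
    intro v
    have e0 : (0 : Fin (n+1)) = Fin.castSucc (0 : Fin n) := by
      apply Fin.ext; simp
    have e1 : (1 : Fin (n+1)) = Fin.castSucc (1 : Fin n) := by
      apply Fin.ext
      rw [Fin.coe_castSucc, Fin.val_one', Fin.val_one', Nat.mod_eq_of_lt (by omega),
        Nat.mod_eq_of_lt (by omega)]
    have h0 : finSuccEquivLast (0 : Fin (n+1)) = some (0 : Fin n) := by
      rw [e0, finSuccEquivLast_castSucc]
    have h1 : finSuccEquivLast (1 : Fin (n+1)) = some (1 : Fin n) := by
      rw [e1, finSuccEquivLast_castSucc]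
    rw [← h0, ← h1, phiN_pcM]
  have h1 : ∑ v : Perm (Fin (n+1)), f (phiN v (0 : Fin (n+1)) 1)
      = ∑ w : Perm (Option (Fin n)), f (phiN w (some (0 : Fin n)) (some 1)) := by
    refine Fintype.sum_equiv (pcM finSuccEquivLast).toEquiv _ _ (fun v => ?_)
    rw [key v]
    rfl
  rw [h1, sum_perm_option, Fintype.card_fin]

end AV8

namespace AV9
set_option linter.unusedSectionVars false
open AV AV2 AV3 AV4 AV5 AV7 AV8

noncomputable def Hs (n : ℕ) : ℚ := ∑ i ∈ Finset.Icc 1 n, (1 : ℚ) / i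
noncomputable def H2s (n : ℕ) : ℚ := ∑ i ∈ Finset.Icc 1 n, (1 : ℚ) / (i ^ 2)

lemma mk0_eq {m : ℕ} [NeZero m] (h : 0 < m) : (⟨0, h⟩ : Fin m) = 0 := Fin.ext (by simp)

lemma mk1_eq {m : ℕ} [NeZero m] (h : 1 < m) : (⟨1, h⟩ : Fin m) = 1 := by
  apply Fin.ext
  rw [Fin.val_one']
  exact (Nat.mod_eq_of_lt h).symm

lemma phi_fin_two : ∀ v : Perm (Fin 2), phiN v (0 : Fin 2) 1 = 2 := by
  have hcases : ∀ v : Perm (Fin 2), v = 1 ∨ v = Equiv.swap (0 : Fin 2) 1 := by decide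
  intro v
  rcases hcases v with h | h
  · rw [h, AV5.phi_one (AV6.zero_ne_one (by omega)), Fintype.card_fin]
  · rw [h, show Equiv.swap (0 : Fin 2) 1 = Equiv.swap (0 : Fin 2) 1 * 1 from (mul_one _).symm,
      AV5.phi_swapxy (AV6.zero_ne_one (by omega)),
      AV5.phi_one (AV6.zero_ne_one (by omega)), Fintype.card_fin]

lemma Hs_succ (n : ℕ) : Hs (n+1) = Hs n + 1 / (n+1) := by
  unfold Hs
  rw [Finset.sum_Icc_succ_top (by omega)]
  push_cast
  ring

lemma H2s_succ (n : ℕ) : H2s (n+1) = H2s n + 1 / ((n+1)^2) := by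
  unfold H2s
  rw [Finset.sum_Icc_succ_top (by omega)]
  push_cast
  ring

lemma moments : ∀ (m : ℕ) (hm : 2 ≤ m),
    ((∑ v : Perm (Fin m), (phiN v ⟨0, by omega⟩ ⟨1, by omega⟩ : ℚ))
        = (m.factorial : ℚ) * (Hs m + 1/2))
  ∧ ((∑ v : Perm (Fin m), (phiN v ⟨0, by omega⟩ ⟨1, by omega⟩ : ℚ)^2)
        = (m.factorial : ℚ) * ((Hs m - H2s m - 1/4) + (Hs m + 1/2)^2)) := by
  refine Nat.le_induction ?_ ?_
  · -- base case m = 2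
    haveI : NeZero 2 := ⟨by omega⟩
    have hIcc : Finset.Icc 1 2 = {1, 2} := by decide
    have hH : Hs 2 = 3/2 := by unfold Hs; rw [hIcc]; norm_num
    have hH2 : H2s 2 = 5/4 := by unfold H2s; rw [hIcc]; norm_num
    have hphi : ∀ v : Perm (Fin 2), (phiN v ⟨0, by omega⟩ ⟨1, by omega⟩ : ℚ) = 2 := by
      intro v
      rw [mk0_eq, mk1_eq, phi_fin_two v]
      norm_num
    constructor
    · rw [Finset.sum_congr rfl (fun v _ => hphi v), Finset.sum_const, Finset.card_univ,
        Fintype.card_perm, Fintype.card_fin]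
      rw [hH]
      norm_num [Nat.factorial]
    · have hphi2 : ∀ v : Perm (Fin 2), (phiN v ⟨0, by omega⟩ ⟨1, by omega⟩ : ℚ)^2 = 4 := by
        intro v; rw [hphi v]; norm_num
      rw [Finset.sum_congr rfl (fun v _ => hphi2 v), Finset.sum_const, Finset.card_univ,
        Fintype.card_perm, Fintype.card_fin]
      rw [hH, hH2]
      norm_num [Nat.factorial]
  · -- step
    intro m hm ih
    haveI : NeZero m := ⟨by omega⟩
    haveI : NeZero (m+1) := ⟨by omega⟩
    obtain ⟨ih1, ih2⟩ := ih
    rw [mk0_eq, mk1_eq] at ih1 ih2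
    have key1 := sum_fin_succ (n := m) hm (fun k : ℕ => (k : ℚ))
    have key2 := sum_fin_succ (n := m) hm (fun k : ℕ => (k : ℚ)^2)
    simp only [Nat.cast_add, Nat.cast_one] at key1 key2
    have hc1 : ∀ σ : Perm (Fin m),
        ((phiN σ (0 : Fin m) 1 : ℚ) + 1 + (m : ℚ) * (phiN σ (0 : Fin m) 1 : ℚ))
        = (1 + (m : ℚ)) * (phiN σ (0 : Fin m) 1 : ℚ) + 1 := by
      intro σ
      ring
    have hc2 : ∀ σ : Perm (Fin m),
        (((phiN σ (0 : Fin m) 1 : ℚ) + 1)^2 + (m : ℚ) * (phiN σ (0 : Fin m) 1 : ℚ)^2)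
        = (1 + (m : ℚ)) * (phiN σ (0 : Fin m) 1 : ℚ)^2
            + 2 * (phiN σ (0 : Fin m) 1 : ℚ) + 1 := by
      intro σ
      ring
    rw [Finset.sum_congr rfl (fun σ _ => hc1 σ)] at key1
    rw [Finset.sum_congr rfl (fun σ _ => hc2 σ)] at key2
    rw [Finset.sum_add_distrib, Finset.sum_const, Finset.card_univ, Fintype.card_perm,
      Fintype.card_fin, ← Finset.mul_sum, ih1] at key1
    rw [Finset.sum_add_distrib, Finset.sum_add_distrib, Finset.sum_const, Finset.card_univ,
      Fintype.card_perm, Fintype.card_fin, ← Finset.mul_sum, ← Finset.mul_sum, ih1, ih2]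
      at key2
    have hfact : ((m+1).factorial : ℚ) = (m+1) * (m.factorial : ℚ) := by
      rw [Nat.factorial_succ]
      push_cast
      ring
    have hfne : (m.factorial : ℚ) ≠ 0 := by
      exact_mod_cast Nat.factorial_ne_zero m
    have hm1 : ((m : ℚ) + 1) ≠ 0 := by positivity
    constructor
    · rw [mk0_eq, mk1_eq]
      rw [key1, Hs_succ, hfact]
      push_cast
      field_simp
      ring
    · rw [mk0_eq, mk1_eq]
      rw [key2, Hs_succ, H2s_succ, hfact]
      push_cast
      field_simp
      ring

end AV9

namespace AV10
set_option linter.unusedSectionVars false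
open AV AV2 AV3 AV4 AV5 AV6 AV7 AV8 AV9

open scoped Classical in
lemma half_sum {n : ℕ} [NeZero n] (hn : 2 ≤ n) (g : ℕ → ℚ) :
    2 * ∑ v ∈ Finset.univ.filter
        (fun v : Perm (Fin n) => v ∈ alternatingGroup (Fin n)), g (phiN v (0 : Fin n) 1)
      = ∑ v : Perm (Fin n), g (phiN v (0 : Fin n) 1) := by
  classical
  have hsplit := Finset.sum_filter_add_sum_filter_not Finset.univ
    (fun v : Perm (Fin n) => v ∈ alternatingGroup (Fin n))
    (fun v => g (phiN v (0 : Fin n) 1))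
  have hmap : (Finset.univ.filter
        (fun v : Perm (Fin n) => v ∈ alternatingGroup (Fin n))).map
        (Equiv.mulLeft (Equiv.swap (0 : Fin n) 1)).toEmbedding
      = Finset.univ.filter
        (fun v : Perm (Fin n) => ¬ (v ∈ alternatingGroup (Fin n))) := by
    ext w
    simp only [Finset.mem_map, Finset.mem_filter, Finset.mem_univ, true_and,
      Equiv.coe_toEmbedding, Equiv.coe_mulLeft, Equiv.Perm.mem_alternatingGroup]
    constructor
    · rintro ⟨v, hv, rfl⟩
      rw [Equiv.Perm.sign_mul, Equiv.Perm.sign_swap (zero_ne_one hn), hv]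
      decide
    · intro hw
      refine ⟨Equiv.swap (0 : Fin n) 1 * w, ?_, ?_⟩
      · rw [Equiv.Perm.sign_mul, Equiv.Perm.sign_swap (zero_ne_one hn)]
        rcases Int.units_eq_one_or (Equiv.Perm.sign w) with h | h
        · exact absurd h hw
        · rw [h]; decide
      · rw [← mul_assoc, Equiv.swap_mul_self, one_mul]
  have heq : ∑ v ∈ Finset.univ.filter
        (fun v : Perm (Fin n) => ¬ (v ∈ alternatingGroup (Fin n))), g (phiN v (0 : Fin n) 1)
      = ∑ v ∈ Finset.univ.filter
        (fun v : Perm (Fin n) => v ∈ alternatingGroup (Fin n)), g (phiN v (0 : Fin n) 1) := by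
    rw [← hmap, Finset.sum_map]
    refine Finset.sum_congr rfl (fun v _ => ?_)
    simp only [Equiv.coe_toEmbedding, Equiv.coe_mulLeft]
    rw [phi_swapxy (zero_ne_one hn)]
  linarith [hsplit, heq]

end AV10


open AV AV2 AV3 AV4 AV5 AV6 AV7 AV8 AV9 AV10 Equiv Equiv.Perm

open scoped Classical in
/-- For `n ≥ 2`, the variance of `ℓ` on `A_n` under the uniform distribution is
`H_n - H_{n,2} - 1/4`, where `|A_n| = n!/2`. -/
theorem stmt_15 (n : ℕ) (hn : 2 ≤ n) :
    (1 / ((n.factorial : ℚ) / 2)) *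
        (∑ v : {v : Equiv.Perm (Fin n) // v ∈ alternatingGroup (Fin n)},
          (alen n (v : Equiv.Perm (Fin n)) : ℚ) ^ 2)
      - ((1 / ((n.factorial : ℚ) / 2)) *
        ∑ v : {v : Equiv.Perm (Fin n) // v ∈ alternatingGroup (Fin n)},
          (alen n (v : Equiv.Perm (Fin n)) : ℚ)) ^ 2
      = (∑ i ∈ Finset.Icc 1 n, (1 : ℚ) / i)
        - (∑ i ∈ Finset.Icc 1 n, (1 : ℚ) / (i ^ 2)) - 1 / 4 := by
  haveI : NeZero n := ⟨by omega⟩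
  -- replace subtype sums by filter sums
  have hsub : ∀ F : Equiv.Perm (Fin n) → ℚ,
      (∑ v : {v : Equiv.Perm (Fin n) // v ∈ alternatingGroup (Fin n)}, F (v : Equiv.Perm (Fin n)))
      = ∑ v ∈ Finset.univ.filter
          (fun v : Perm (Fin n) => v ∈ alternatingGroup (Fin n)), F v := by
    intro F
    exact (Finset.sum_subtype _ (by simp) F).symm
  rw [hsub (fun v => (alen n v : ℚ)^2), hsub (fun v => (alen n v : ℚ))]
  -- alen = n - phi on the filter set
  have halen : ∀ v ∈ Finset.univ.filter
      (fun v : Perm (Fin n) => v ∈ alternatingGroup (Fin n)),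
      (alen n v : ℚ) = (n : ℚ) - (phiN v (0 : Fin n) 1 : ℚ) := by
    intro v hv
    rw [Finset.mem_filter] at hv
    have hsgn : Equiv.Perm.sign v = 1 := (Equiv.Perm.mem_alternatingGroup).1 hv.2
    have := alen_add_phi hn hsgn
    have hc : ((alen n v + phiN v (0 : Fin n) 1 : ℕ) : ℚ) = (n : ℚ) := by
      rw [this]
    push_cast at hc
    linarith
  set A := Finset.univ.filter (fun v : Perm (Fin n) => v ∈ alternatingGroup (Fin n)) with hA
  -- the three A-sums
  set a0 := ∑ v ∈ A, (1 : ℚ) with ha0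
  set a1 := ∑ v ∈ A, (phiN v (0 : Fin n) 1 : ℚ) with ha1
  set a2 := ∑ v ∈ A, (phiN v (0 : Fin n) 1 : ℚ)^2 with ha2
  -- halving identities
  have h0 : 2 * a0 = (n.factorial : ℚ) := by
    have := half_sum hn (fun _ => (1 : ℚ))
    rw [ha0]
    rw [this]
    rw [Finset.sum_const, Finset.card_univ, Fintype.card_perm, Fintype.card_fin]
    simp
  have h1 : 2 * a1 = (n.factorial : ℚ) * (Hs n + 1/2) := by
    have hhalf := half_sum hn (fun k => (k : ℚ))
    have hmom := (moments n hn).1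
    rw [mk0_eq, mk1_eq] at hmom
    rw [ha1, hhalf, hmom]
  have h2 : 2 * a2 = (n.factorial : ℚ) * ((Hs n - H2s n - 1/4) + (Hs n + 1/2)^2) := by
    have hhalf := half_sum hn (fun k => ((k : ℚ))^2)
    have hmom := (moments n hn).2
    rw [mk0_eq, mk1_eq] at hmom
    rw [ha2, hhalf, hmom]
  -- rewrite the alen sums
  have hs1 : ∑ v ∈ A, (alen n v : ℚ) = (n : ℚ) * a0 - a1 := by
    have hterm : ∀ v ∈ A, (alen n v : ℚ) = (n : ℚ) * 1 - (phiN v (0 : Fin n) 1 : ℚ) := by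
      intro v hv
      rw [halen v hv]
      ring
    rw [Finset.sum_congr rfl hterm, Finset.sum_sub_distrib, ha0, ha1, Finset.mul_sum]
  have hs2 : ∑ v ∈ A, (alen n v : ℚ)^2
      = (n : ℚ)^2 * a0 - 2 * (n : ℚ) * a1 + a2 := by
    have : ∀ v ∈ A, (alen n v : ℚ)^2
        = (n:ℚ)^2 * 1 - 2 * (n:ℚ) * (phiN v (0 : Fin n) 1 : ℚ)
          + (phiN v (0 : Fin n) 1 : ℚ)^2 := by
      intro v hv
      rw [halen v hv]
      ring
    rw [Finset.sum_congr rfl this]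
    rw [Finset.sum_add_distrib, Finset.sum_sub_distrib, ha0, ha1, ha2,
      Finset.mul_sum, Finset.mul_sum]
  rw [hs1, hs2]
  have hfne : (n.factorial : ℚ) ≠ 0 := by exact_mod_cast Nat.factorial_ne_zero n
  have hrhs : (∑ i ∈ Finset.Icc 1 n, (1 : ℚ) / i)
      - (∑ i ∈ Finset.Icc 1 n, (1 : ℚ) / (i ^ 2)) - 1 / 4
      = Hs n - H2s n - 1/4 := by
    unfold Hs H2s
    ring
  rw [hrhs]
  have ha0v : a0 = (n.factorial : ℚ) / 2 := by linarith
  have ha1v : a1 = (n.factorial : ℚ) * (Hs n + 1/2) / 2 := by linarith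
  have ha2v : a2 = (n.factorial : ℚ) * ((Hs n - H2s n - 1/4) + (Hs n + 1/2)^2) / 2 := by
    linarith
  rw [ha0v, ha1v, ha2v]
  field_simp
  ring
end

section
/- For every n ≥ 2 and every k with 0 ≤ k ≤ n-2, the number a(n,k) of elements of A_n of length k equals the number of permutations v of {1,…,n} with exactly n-k cycles (including fixed points) such that 1 and 2 lie in different cycles of v; i.e., a(n,k) = |P(n,n-k)| where P(n,j) = {v ∈ S_n : cyc(v) = j and 1, 2 are in different cycles of v}. (Equivalently, a(n,k) equals the 2-restricted unsigned Stirling number of the first kind [n, n-k]₂.) -/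
section Aux

open Equiv Equiv.Perm MulAction Subgroup

variable {n : ℕ}

/-- `w` is a product of `k` transpositions. -/
def IsSwapProd (n k : ℕ) (w : Equiv.Perm (Fin n)) : Prop :=
  ∃ l : List (Equiv.Perm (Fin n)), (∀ x ∈ l, x.IsSwap) ∧ l.length = k ∧ l.prod = w

lemma mem_orbit_zpowers_iff {v : Equiv.Perm (Fin n)} {x y : Fin n} :
    y ∈ MulAction.orbit (Subgroup.zpowers v) x ↔ v.SameCycle x y := by
  constructor
  · rintro ⟨⟨g, hg⟩, rfl⟩
    obtain ⟨i, rfl⟩ := Subgroup.mem_zpowers_iff.mp hg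
    exact ⟨i, rfl⟩
  · rintro ⟨i, hi⟩
    exact ⟨⟨v ^ i, Subgroup.zpow_mem _ (Subgroup.mem_zpowers v) i⟩, hi⟩


lemma cyc_le (v : Equiv.Perm (Fin n)) : cycNum n v ≤ n := by
  have h := Nat.card_le_card_of_surjective
    (Quotient.mk (MulAction.orbitRel (Subgroup.zpowers v) (Fin n))) (Quot.exists_rep)
  simpa [cycNum] using h


lemma cyc_one : cycNum n (1 : Equiv.Perm (Fin n)) = n := by
  have hb : Function.Bijective
      (Quotient.mk (MulAction.orbitRel (Subgroup.zpowers (1 : Equiv.Perm (Fin n))) (Fin n))) := by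
    constructor
    · intro x y hxy
      have h1 := Quotient.exact hxy
      have h2 : (1 : Equiv.Perm (Fin n)).SameCycle y x := mem_orbit_zpowers_iff.mp h1
      simpa [Equiv.Perm.sameCycle_one, eq_comm] using h2
    · exact Quot.exists_rep
  rw [cycNum, ← Nat.card_congr (Equiv.ofBijective _ hb)]
  simp


/-- reduction of integer powers at a point fixed by `f^q` -/
lemma zpow_reduce (f : Equiv.Perm (Fin n)) (x : Fin n) {q : ℕ} (hq : 0 < q)
    (hfix : (f ^ q) x = x) (i : ℤ) : ∃ r : ℕ, r < q ∧ (f ^ i) x = (f ^ r) x := by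
  refine ⟨(i % q).toNat, ?_, ?_⟩
  · have h1 : i % (q : ℤ) < q := Int.emod_lt_of_pos i (by exact_mod_cast hq)
    omega
  · have h0 : (0:ℤ) ≤ i % q := Int.emod_nonneg i (by exact_mod_cast hq.ne')
    have hdecomp : i = (q : ℤ) * (i / q) + i % q := (Int.mul_ediv_add_emod i q).symm
    have hfix' : ∀ c : ℤ, ((f ^ (q : ℤ)) ^ c) x = x := by
      intro c
      have hx : (f ^ (q : ℤ)) x = x := by rwa [zpow_natCast]
      induction c using Int.induction_on with
      | zero => rfl
      | succ m ih => rw [add_comm, zpow_add, zpow_one, Equiv.Perm.mul_apply, ih, hx]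
      | pred m ih =>
        rw [sub_eq_add_neg, add_comm, zpow_add, Equiv.Perm.mul_apply, ih]
        have h2 : (f ^ (q:ℤ)) (((f ^ (q:ℤ)) ^ (-1:ℤ)) x) = (f ^ (q:ℤ)) x := by
          rw [zpow_neg_one, ← Equiv.Perm.mul_apply, mul_inv_cancel, Equiv.Perm.one_apply, hx]
        exact (Equiv.injective _ ) (by rw [h2, hx])
    calc (f ^ i) x = (f ^ ((q : ℤ) * (i / q) + i % q)) x := by rw [← hdecomp]
      _ = (f ^ (i % q)) ((f ^ ((q:ℤ) * (i / q))) x) := by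
          rw [add_comm, zpow_add, Equiv.Perm.mul_apply]
      _ = (f ^ (i % q)) x := by rw [zpow_mul]; rw [hfix' (i / q)]
      _ = (f ^ (i % q).toNat) x := by rw [← zpow_natCast f (i % q).toNat, Int.toNat_of_nonneg h0]


lemma key_cycle {a b : Fin n} (hab : a ≠ b) (w : Equiv.Perm (Fin n)) :
    (Equiv.swap a b * w).SameCycle a b ↔ ¬ w.SameCycle a b := by
  classical
  set u := Equiv.swap a b * w with hu
  have hex : ∃ q, 0 < q ∧ ((w ^ q) b = a ∨ (w ^ q) b = b) :=
    ⟨orderOf w, orderOf_pos w, Or.inr (by rw [pow_orderOf_eq_one]; rfl)⟩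
  set q := Nat.find hex with hqdef
  obtain ⟨hq0, hqab⟩ : 0 < q ∧ ((w ^ q) b = a ∨ (w ^ q) b = b) := Nat.find_spec hex
  have hmin : ∀ j, 0 < j → j < q → (w ^ j) b ≠ a ∧ (w ^ j) b ≠ b := by
    intro j hj0 hjq
    have h := Nat.find_min hex hjq
    push_neg at h
    exact h hj0
  have hiter : ∀ j, j < q → (u ^ j) b = (w ^ j) b := by
    intro j
    induction j with
    | zero => intro _; rfl
    | succ m ih =>
      intro hm
      have h1 : (u ^ m) b = (w ^ m) b := ih (by omega)
      have h2 : (w ^ (m+1)) b ≠ a ∧ (w ^ (m+1)) b ≠ b := hmin (m+1) (by omega) hm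
      rw [pow_succ', Equiv.Perm.mul_apply, h1, hu, Equiv.Perm.mul_apply,
        ← Equiv.Perm.mul_apply w (w ^ m), ← pow_succ']
      exact Equiv.swap_apply_of_ne_of_ne h2.1 h2.2
  have hqq : (u ^ q) b = Equiv.swap a b ((w ^ q) b) := by
    obtain ⟨m, hm⟩ : ∃ m, q = m + 1 := ⟨q - 1, by omega⟩
    rw [hm, pow_succ', Equiv.Perm.mul_apply, hiter m (by omega), hu, Equiv.Perm.mul_apply,
      ← Equiv.Perm.mul_apply w, ← pow_succ']
  rcases hqab with ha | hb
  · have hw : w.SameCycle a b :=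
      (show w.SameCycle b a from ⟨(q:ℤ), by rw [zpow_natCast]; exact ha⟩).symm
    have hub : (u ^ q) b = b := by rw [hqq, ha, Equiv.swap_apply_left]
    have hnu : ¬ u.SameCycle a b := by
      rintro hsc
      obtain ⟨i, hi⟩ := hsc.symm
      obtain ⟨r, hr, hre⟩ := zpow_reduce u b hq0 hub i
      rw [hre] at hi
      rcases Nat.eq_zero_or_pos r with h0 | hrpos
      · rw [h0] at hi; exact hab (by simpa using hi.symm)
      · rw [hiter r hr] at hi
        exact (hmin r hrpos hr).1 hi
    exact iff_of_false hnu (not_not_intro hw)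
  · have hua : (u ^ q) b = a := by rw [hqq, hb, Equiv.swap_apply_right]
    have hu' : u.SameCycle a b :=
      (show u.SameCycle b a from ⟨(q:ℤ), by rw [zpow_natCast]; exact hua⟩).symm
    have hnw : ¬ w.SameCycle a b := by
      rintro hsc
      obtain ⟨i, hi⟩ := hsc.symm
      obtain ⟨r, hr, hre⟩ := zpow_reduce w b hq0 hb i
      rw [hre] at hi
      rcases Nat.eq_zero_or_pos r with h0 | hrpos
      · rw [h0] at hi; exact hab (by simpa using hi.symm)
      · exact (hmin r hrpos hr).1 hi
    exact iff_of_true hu' hnw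


lemma stab_closure {S : Set (Fin n)} {w t : Equiv.Perm (Fin n)}
    (hw : ∀ x, x ∈ S ↔ w x ∈ S) (ht : ∀ x, x ∈ S ↔ t x ∈ S) :
    ∀ g ∈ Subgroup.closure ({w, t} : Set (Equiv.Perm (Fin n))), ∀ x, x ∈ S ↔ g x ∈ S := by
  intro g hg
  induction hg using Subgroup.closure_induction with
  | mem g hgen =>
    rcases hgen with rfl | rfl
    · exact hw
    · exact ht
  | one => intro x; rfl
  | mul g₁ g₂ h₁ h₂ ih₁ ih₂ =>
    intro x
    rw [Equiv.Perm.mul_apply]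
    exact (ih₂ x).trans (ih₁ (g₂ x))
  | inv g h ih =>
    intro x
    have h2 := ih (g⁻¹ x)
    rw [← Equiv.Perm.mul_apply, mul_inv_cancel, Equiv.Perm.one_apply] at h2
    exact h2.symm


lemma mem_orbit_closure_iff {a b : Fin n} (w : Equiv.Perm (Fin n)) (x y : Fin n) :
    y ∈ MulAction.orbit (Subgroup.closure ({w, Equiv.swap a b} : Set (Equiv.Perm (Fin n)))) x ↔
      (w.SameCycle x y ∨ (w.SameCycle x a ∧ w.SameCycle b y) ∨
        (w.SameCycle x b ∧ w.SameCycle a y)) := by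
  classical
  constructor
  · rintro ⟨⟨g, hg⟩, rfl⟩
    set S : Set (Fin n) := {z | w.SameCycle x z ∨ (w.SameCycle x a ∧ w.SameCycle b z) ∨
        (w.SameCycle x b ∧ w.SameCycle a z)} with hS
    have hwS : ∀ z, z ∈ S ↔ w z ∈ S := by
      intro z
      simp only [hS, Set.mem_setOf_eq, Equiv.Perm.sameCycle_apply_right]
    have haS : (a ∈ S ↔ b ∈ S) := by
      simp only [hS, Set.mem_setOf_eq]
      constructor
      · rintro (h | ⟨h1, h2⟩ | ⟨h1, h2⟩)
        · exact Or.inr (Or.inl ⟨h, Equiv.Perm.SameCycle.refl w b⟩)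
        · exact Or.inr (Or.inl ⟨h1, Equiv.Perm.SameCycle.refl w b⟩)
        · exact Or.inl h1
      · rintro (h | ⟨h1, h2⟩ | ⟨h1, h2⟩)
        · exact Or.inr (Or.inr ⟨h, Equiv.Perm.SameCycle.refl w a⟩)
        · exact Or.inl h1
        · exact Or.inr (Or.inr ⟨h1, Equiv.Perm.SameCycle.refl w a⟩)
    have htS : ∀ z, z ∈ S ↔ Equiv.swap a b z ∈ S := by
      intro z
      rcases eq_or_ne z a with rfl | hza
      · rw [Equiv.swap_apply_left]; exact haS
      rcases eq_or_ne z b with rfl | hzb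
      · rw [Equiv.swap_apply_right]; exact haS.symm
      · rw [Equiv.swap_apply_of_ne_of_ne hza hzb]
    have hxS : x ∈ S := Or.inl (Equiv.Perm.SameCycle.refl w x)
    exact (stab_closure hwS htS g hg x).mp hxS
  · have hmem : ∀ (i : ℤ),
        (w ^ i) ∈ Subgroup.closure ({w, Equiv.swap a b} : Set (Equiv.Perm (Fin n))) :=
      fun i => Subgroup.zpow_mem _ (Subgroup.subset_closure (Set.mem_insert _ _)) i
    have htmem :
        Equiv.swap a b ∈ Subgroup.closure ({w, Equiv.swap a b} : Set (Equiv.Perm (Fin n))) :=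
      Subgroup.subset_closure (Set.mem_insert_of_mem _ rfl)
    rintro (⟨i, hi⟩ | ⟨⟨i, hi⟩, ⟨j, hj⟩⟩ | ⟨⟨i, hi⟩, ⟨j, hj⟩⟩)
    · exact ⟨⟨w ^ i, hmem i⟩, hi⟩
    · refine ⟨⟨w ^ j * Equiv.swap a b * w ^ i, mul_mem (mul_mem (hmem j) htmem) (hmem i)⟩, ?_⟩
      show (w ^ j * Equiv.swap a b * w ^ i) x = y
      rw [Equiv.Perm.mul_apply, Equiv.Perm.mul_apply, hi, Equiv.swap_apply_left, hj]
    · refine ⟨⟨w ^ j * Equiv.swap a b * w ^ i, mul_mem (mul_mem (hmem j) htmem) (hmem i)⟩, ?_⟩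
      show (w ^ j * Equiv.swap a b * w ^ i) x = y
      rw [Equiv.Perm.mul_apply, Equiv.Perm.mul_apply, hi, Equiv.swap_apply_right, hj]


lemma closure_swap_eq (w : Equiv.Perm (Fin n)) (a b : Fin n) :
    Subgroup.closure ({w, Equiv.swap a b} : Set (Equiv.Perm (Fin n))) =
      Subgroup.closure ({Equiv.swap a b * w, Equiv.swap a b} : Set (Equiv.Perm (Fin n))) := by
  apply le_antisymm
  · rw [Subgroup.closure_le]
    intro g hg
    rcases Set.mem_insert_iff.mp hg with rfl | hg'
    · have h1 : Equiv.swap a b * g ∈ _ := Subgroup.subset_closure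
        (Set.mem_insert (Equiv.swap a b * g) {Equiv.swap a b})
      have h2 : Equiv.swap a b ∈ Subgroup.closure
          ({Equiv.swap a b * g, Equiv.swap a b} : Set (Equiv.Perm (Fin n))) :=
        Subgroup.subset_closure (Set.mem_insert_of_mem _ rfl)
      have h3 := mul_mem h2 h1
      rwa [Equiv.swap_mul_self_mul] at h3
    · rw [Set.mem_singleton_iff.mp hg']
      exact Subgroup.subset_closure (Set.mem_insert_of_mem _ rfl)
  · rw [Subgroup.closure_le]
    intro g hg
    rcases Set.mem_insert_iff.mp hg with rfl | hg'
    · exact mul_mem (Subgroup.subset_closure (Set.mem_insert_of_mem _ rfl))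
        (Subgroup.subset_closure (Set.mem_insert _ _))
    · rw [Set.mem_singleton_iff.mp hg']
      exact Subgroup.subset_closure (Set.mem_insert_of_mem _ rfl)


lemma card_quot_same {a b : Fin n} (w : Equiv.Perm (Fin n)) (h : w.SameCycle a b) :
    cycNum n w =
      Nat.card (MulAction.orbitRel.Quotient
        (Subgroup.closure ({w, Equiv.swap a b} : Set (Equiv.Perm (Fin n)))) (Fin n)) := by
  apply Nat.card_congr
  apply Quotient.congrRight
  intro x y
  rw [MulAction.orbitRel_apply, MulAction.orbitRel_apply, mem_orbit_zpowers_iff,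
    mem_orbit_closure_iff]
  constructor
  · intro hxy; exact Or.inl hxy
  · rintro (hxy | ⟨h1, h2⟩ | ⟨h1, h2⟩)
    · exact hxy
    · exact (h1.trans h).trans h2
    · exact (h1.trans h.symm).trans h2


lemma card_quot_diff {a b : Fin n} (w : Equiv.Perm (Fin n)) (hab : a ≠ b)
    (h : ¬ w.SameCycle a b) :
    cycNum n w =
      Nat.card (MulAction.orbitRel.Quotient
        (Subgroup.closure ({w, Equiv.swap a b} : Set (Equiv.Perm (Fin n)))) (Fin n)) + 1 := by
  classical
  set G := Subgroup.closure ({w, Equiv.swap a b} : Set (Equiv.Perm (Fin n))) with hG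
  set sW := MulAction.orbitRel (Subgroup.zpowers w) (Fin n) with hsW
  set sG := MulAction.orbitRel G (Fin n) with hsG
  have hWr : ∀ x y : Fin n, sW x y ↔ w.SameCycle y x := fun x y =>
    (MulAction.orbitRel_apply).trans mem_orbit_zpowers_iff
  have hGr : ∀ x y : Fin n, sG x y ↔
      (w.SameCycle y x ∨ (w.SameCycle y a ∧ w.SameCycle b x) ∨
        (w.SameCycle y b ∧ w.SameCycle a x)) := fun x y =>
    (MulAction.orbitRel_apply).trans (mem_orbit_closure_iff w y x)
  let f : Fin n → Option (Quotient sG) :=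
    fun x => if w.SameCycle b x then none else some (Quotient.mk sG x)
  have hresp : ∀ x y : Fin n, sW x y → f x = f y := by
    intro x y hxy
    have hxy' : w.SameCycle y x := (hWr x y).mp hxy
    by_cases hbx : w.SameCycle b x
    · have hby : w.SameCycle b y := hbx.trans hxy'.symm
      simp [f, hbx, hby]
    · have hby : ¬ w.SameCycle b y := fun hby => hbx (hby.trans hxy')
      have heq : Quotient.mk sG x = Quotient.mk sG y := by
        apply Quotient.sound
        show sG x y
        rw [hGr]
        exact Or.inl hxy'
      simp [f, hbx, hby, heq]
  let ψ : Quotient sW → Option (Quotient sG) :=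
    Quotient.lift f (by intro x y hxy; exact hresp x y hxy)
  have hbij : Function.Bijective ψ := by
    constructor
    · intro p q
      induction p using Quotient.ind
      induction q using Quotient.ind
      rename_i x y
      intro hpq
      apply Quotient.sound
      show sW x y
      rw [hWr]
      have hx : ψ (Quotient.mk sW x) = f x := rfl
      have hy : ψ (Quotient.mk sW y) = f y := rfl
      rw [hx, hy] at hpq
      by_cases hbx : w.SameCycle b x <;> by_cases hby : w.SameCycle b y
      · exact (hbx.symm.trans hby).symm
      · simp [f, hbx, hby] at hpq
      · simp [f, hbx, hby] at hpq
      · simp only [f] at hpq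
        rw [if_neg hbx, if_neg hby] at hpq
        have hGxy : sG x y := Quotient.exact (Option.some_inj.mp hpq)
        rw [hGr] at hGxy
        rcases hGxy with h1 | ⟨h1, h2⟩ | ⟨h1, h2⟩
        · exact h1
        · exact absurd h2 hbx
        · exact absurd h1.symm hby
    · intro p
      rcases p with _ | q
      · exact ⟨Quotient.mk sW b, by simp [ψ, f, Equiv.Perm.SameCycle.refl]⟩
      · induction q using Quotient.ind
        rename_i x
        by_cases hbx : w.SameCycle b x
        · refine ⟨Quotient.mk sW a, ?_⟩
          have hba : ¬ w.SameCycle b a := fun hh => h hh.symm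
          have hax : sG a x := by
            rw [hGr]
            exact Or.inr (Or.inr ⟨hbx.symm, Equiv.Perm.SameCycle.refl w a⟩)
          show f a = some (Quotient.mk sG x)
          simp only [f, hba, if_neg, not_false_iff]
          exact congrArg some (Quotient.sound hax)
        · exact ⟨Quotient.mk sW x, by simp [ψ, f, hbx]⟩
  have hcard := Nat.card_congr (Equiv.ofBijective ψ hbij)
  rw [show cycNum n w = Nat.card (Quotient sW) from rfl, hcard]
  exact Finite.card_option


lemma key_merge {a b : Fin n} (hab : a ≠ b) {w : Equiv.Perm (Fin n)}
    (h : ¬ w.SameCycle a b) : cycNum n (Equiv.swap a b * w) + 1 = cycNum n w := by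
  have h1 := card_quot_diff w hab h
  have hu : (Equiv.swap a b * w).SameCycle a b := (key_cycle hab w).mpr h
  have h2 := card_quot_same (Equiv.swap a b * w) hu
  rw [closure_swap_eq w a b] at h1
  rw [h2, h1]


lemma key_split {a b : Fin n} (hab : a ≠ b) {w : Equiv.Perm (Fin n)}
    (h : w.SameCycle a b) : cycNum n (Equiv.swap a b * w) = cycNum n w + 1 := by
  have hnu : ¬ (Equiv.swap a b * w).SameCycle a b := fun hu =>
    ((key_cycle hab w).mp hu) h
  have h1 := key_merge hab hnu
  rw [Equiv.swap_mul_self_mul] at h1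
  omega


lemma swapProd_zero (w : Equiv.Perm (Fin n)) : IsSwapProd n 0 w ↔ w = 1 := by
  constructor
  · rintro ⟨l, h1, h2, h3⟩
    rw [List.length_eq_zero_iff] at h2
    subst h2
    simpa using h3.symm
  · rintro rfl
    exact ⟨[], by simp, rfl, List.prod_nil⟩


lemma swapProd_low_aux : ∀ (l : List (Equiv.Perm (Fin n))), (∀ x ∈ l, x.IsSwap) →
    n ≤ cycNum n l.prod + l.length ∧ Even (cycNum n l.prod + l.length + n) := by
  intro l
  induction l with
  | nil =>
    intro _
    simp only [List.prod_nil, List.length_nil, cyc_one]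
    exact ⟨by omega, ⟨n, by omega⟩⟩
  | cons t l ih =>
    intro hmem
    obtain ⟨a, b, hab, ht⟩ := hmem t List.mem_cons_self
    obtain ⟨ih1, r, hr⟩ := ih (fun x hx => hmem x (List.mem_cons_of_mem _ hx))
    rw [List.prod_cons, List.length_cons, ht]
    by_cases hsc : l.prod.SameCycle a b
    · have hk := key_split hab hsc
      exact ⟨by omega, ⟨r + 1, by omega⟩⟩
    · have hk := key_merge hab hsc
      exact ⟨by omega, ⟨r, by omega⟩⟩

lemma swapProd_low {k : ℕ} {w : Equiv.Perm (Fin n)} (h : IsSwapProd n k w) :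
    n ≤ cycNum n w + k ∧ Even (cycNum n w + k + n) := by
  obtain ⟨l, h1, h2, h3⟩ := h
  have h4 := swapProd_low_aux l h1
  rw [h3, h2] at h4
  exact h4


lemma swapProd_up (w : Equiv.Perm (Fin n)) : IsSwapProd n (n - cycNum n w) w := by
  classical
  generalize hm : w.support.card = m
  induction m using Nat.strong_induction_on generalizing w with
  | _ m ih =>
    by_cases hw : w = 1
    · subst hw
      rw [cyc_one, Nat.sub_self]
      exact ⟨[], by simp, rfl, List.prod_nil⟩
    · obtain ⟨x, hx⟩ : ∃ x, w x ≠ x := by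
        by_contra hc
        push_neg at hc
        exact hw (Equiv.ext hc)
      subst hm
      have hlt : (Equiv.swap x (w x) * w).support.card < w.support.card :=
        Equiv.Perm.card_support_swap_mul hx
      set u := Equiv.swap x (w x) * w with hu
      have hxw : x ≠ w x := fun hh => hx hh.symm
      have hsc : w.SameCycle x (w x) := ⟨1, by simp⟩
      have hcyc : cycNum n u = cycNum n w + 1 := key_split hxw hsc
      have hule : cycNum n u ≤ n := cyc_le u
      obtain ⟨l, hl1, hl2, hl3⟩ := ih (u.support.card) hlt u rfl
      refine ⟨Equiv.swap x (w x) :: l, ?_, ?_, ?_⟩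
      · intro g hg
        rcases List.mem_cons.mp hg with rfl | hgl
        · exact ⟨x, w x, hxw, rfl⟩
        · exact hl1 g hgl
      · rw [List.length_cons, hl2]
        omega
      · rw [List.prod_cons, hl3, hu, Equiv.swap_mul_self_mul]


lemma swapProd_iff (hn : 2 ≤ n) (k : ℕ) (w : Equiv.Perm (Fin n)) :
    IsSwapProd n k w ↔ (n ≤ cycNum n w + k ∧ Even (cycNum n w + k + n)) := by
  constructor
  · exact swapProd_low
  · rintro ⟨hle, r, hr⟩
    have hcle := cyc_le w
    obtain ⟨j, hj⟩ : ∃ j, k = (n - cycNum n w) + 2 * j := ⟨r - n, by omega⟩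
    have hpad : ∀ j, IsSwapProd n ((n - cycNum n w) + 2 * j) w := by
      intro j
      induction j with
      | zero => simpa using swapProd_up w
      | succ m ihm =>
        obtain ⟨l, a1, a2, a3⟩ := ihm
        have hne : (⟨0, by omega⟩ : Fin n) ≠ ⟨1, by omega⟩ :=
          Fin.ne_of_val_ne (by norm_num)
        refine ⟨Equiv.swap (⟨0, by omega⟩ : Fin n) ⟨1, by omega⟩ ::
          Equiv.swap (⟨0, by omega⟩ : Fin n) ⟨1, by omega⟩ :: l, ?_, ?_, ?_⟩
        · intro g hg
          rcases List.mem_cons.mp hg with rfl | hg'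
          · exact ⟨_, _, hne, rfl⟩
          rcases List.mem_cons.mp hg' with rfl | hg''
          · exact ⟨_, _, hne, rfl⟩
          · exact a1 g hg''
        · rw [List.length_cons, List.length_cons, a2]
          omega
        · rw [List.prod_cons, List.prod_cons, a3, Equiv.swap_mul_self_mul]
    rw [hj]
    exact hpad j


lemma sign_eq_cyc (w : Equiv.Perm (Fin n)) :
    Equiv.Perm.sign w = (-1 : ℤˣ) ^ (n - cycNum n w) := by
  obtain ⟨l, h1, h2, h3⟩ := swapProd_up w
  conv_lhs => rw [← h3]
  rw [Equiv.Perm.sign_prod_list_swap h1, h2]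


lemma isSwap_conj {g : Equiv.Perm (Fin n)} (f : Equiv.Perm (Fin n)) (h : g.IsSwap) :
    (f * g * f⁻¹).IsSwap := by
  obtain ⟨x, y, hxy, rfl⟩ := h
  exact ⟨f x, f y, fun hh => hxy (f.injective hh), (Equiv.swap_apply_apply f x y).symm⟩

lemma tprod_iff (hn : 2 ≤ n) (k : ℕ) (v : Equiv.Perm (Fin n)) :
    (∃ l : List (Equiv.Perm (Fin n)), (∀ x ∈ l, x ∈ ATrans n) ∧ l.length = k ∧ l.prod = v) ↔
    IsSwapProd n k ((Equiv.swap (⟨0, by omega⟩ : Fin n) ⟨1, by omega⟩) ^ k * v) := by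
  set s : Equiv.Perm (Fin n) := Equiv.swap (⟨0, by omega⟩ : Fin n) ⟨1, by omega⟩ with hsdef
  have hssX : ∀ X : Equiv.Perm (Fin n), s * (s * X) = X := fun X =>
    Equiv.swap_mul_self_mul _ _ X
  induction k generalizing v with
  | zero =>
    rw [pow_zero, one_mul, swapProd_zero]
    constructor
    · rintro ⟨l, h1, h2, h3⟩
      rw [List.length_eq_zero_iff] at h2
      subst h2
      simpa using h3.symm
    · rintro rfl
      exact ⟨[], by simp, rfl, List.prod_nil⟩
  | succ k ih =>
    constructor
    · rintro ⟨l, h1, h2, h3⟩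
      rcases l with _ | ⟨g, l'⟩
      · simp at h2
      obtain ⟨h1', i, j, hij, hg⟩ := h1 g List.mem_cons_self
      rw [List.prod_cons] at h3
      rw [List.length_cons] at h2
      have hTl' : ∀ x ∈ l', x ∈ ATrans n := fun x hx => h1 x (List.mem_cons_of_mem _ hx)
      obtain ⟨m, m1, m2, m3⟩ := (ih l'.prod).mp ⟨l', hTl', by omega, rfl⟩
      refine ⟨(s ^ k * Equiv.swap i j * (s ^ k)⁻¹) :: m, ?_, ?_, ?_⟩
      · intro x hx
        rcases List.mem_cons.mp hx with rfl | hxm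
        · exact isSwap_conj (s ^ k) ⟨i, j, ne_of_lt hij, rfl⟩
        · exact m1 x hxm
      · rw [List.length_cons, m2]
      · rw [List.prod_cons, m3]
        have hgs : g = s * Equiv.swap i j := hg
        rw [← h3, hgs]
        simp only [pow_succ, mul_assoc, inv_mul_cancel_left, hssX]
    · rintro ⟨l, h1, h2, h3⟩
      rcases l with _ | ⟨d, m⟩
      · simp at h2
      rw [List.prod_cons] at h3
      rw [List.length_cons] at h2
      have hdsw : d.IsSwap := h1 d List.mem_cons_self
      have hcsw : ((s ^ k)⁻¹ * d * ((s ^ k)⁻¹)⁻¹).IsSwap := isSwap_conj ((s ^ k)⁻¹) hdsw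
      rw [inv_inv] at hcsw
      set c : Equiv.Perm (Fin n) := (s ^ k)⁻¹ * d * s ^ k with hcdef
      set v' : Equiv.Perm (Fin n) := c * (s * v) with hv'def
      have hdinv : d⁻¹ = d := by
        obtain ⟨p0, q0, hpq0, hd0⟩ := hdsw
        rw [hd0]
        exact Equiv.swap_inv _ _
      have hcc : c * c = 1 := by
        obtain ⟨p0, q0, hpq0, hc0⟩ := hcsw
        rw [hc0]
        exact Equiv.swap_mul_self _ _
      have hmprod : m.prod = s ^ k * v' := by
        have hd : m.prod = d⁻¹ * (s ^ (k+1) * v) := by rw [← h3, inv_mul_cancel_left]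
        rw [hd, hdinv, hv'def, hcdef]
        simp only [pow_succ, mul_assoc, mul_inv_cancel_left, inv_mul_cancel_left]
      obtain ⟨l'', t1, t2, t3⟩ := (ih v').mpr
        ⟨m, fun x hx => h1 x (List.mem_cons_of_mem _ hx), by omega, hmprod⟩
      obtain ⟨p, q, hpq, hcswap⟩ := hcsw
      have hmemT : s * c ∈ ATrans n := by
        rcases lt_trichotomy p q with hlt | heq | hgt
        · exact ⟨by omega, p, q, hlt, by rw [hcswap]⟩
        · exact absurd heq hpq
        · exact ⟨by omega, q, p, hgt, by rw [hcswap, Equiv.swap_comm]⟩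
      refine ⟨(s * c) :: l'', ?_, ?_, ?_⟩
      · intro x hx
        rcases List.mem_cons.mp hx with rfl | hxm
        · exact hmemT
        · exact t1 x hxm
      · rw [List.length_cons, t2]
      · rw [List.prod_cons, t3, hv'def]
        calc s * c * (c * (s * v)) = s * (c * (c * (s * v))) := by rw [mul_assoc]
          _ = s * (s * v) := by rw [← mul_assoc c c, hcc, one_mul]
          _ = v := hssX v


lemma even_cyc_of_alt (hn : 2 ≤ n) {v : Equiv.Perm (Fin n)}
    (hv : v ∈ alternatingGroup (Fin n)) : Even (n - cycNum n v) := by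
  have h1 := sign_eq_cyc v
  rw [Equiv.Perm.mem_alternatingGroup] at hv
  rw [hv] at h1
  rcases Nat.even_or_odd (n - cycNum n v) with he | ho
  · exact he
  · exfalso
    rw [ho.neg_one_pow] at h1
    exact (by decide : ((1:ℤˣ) ≠ -1)) h1

lemma alen_eq (hn : 2 ≤ n) (v : Equiv.Perm (Fin n)) (hv : v ∈ alternatingGroup (Fin n)) :
    alen n v = min (n - cycNum n v)
      (n - cycNum n (Equiv.swap (⟨0, by omega⟩ : Fin n) ⟨1, by omega⟩ * v)) := by
  classical
  set e0 : Fin n := ⟨0, by omega⟩ with he0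
  set e1 : Fin n := ⟨1, by omega⟩ with he1
  set s : Equiv.Perm (Fin n) := Equiv.swap e0 e1 with hsdef
  have he01 : e0 ≠ e1 := Fin.ne_of_val_ne (by norm_num)
  have hvle := cyc_le v
  have hsvle := cyc_le (s * v)
  have hEven : Even (n - cycNum n v) := even_cyc_of_alt hn hv
  have hsv : cycNum n (s * v) = cycNum n v + 1 ∨ cycNum n (s * v) + 1 = cycNum n v := by
    by_cases hsc : v.SameCycle e0 e1
    · exact Or.inl (key_split he01 hsc)
    · exact Or.inr (key_merge he01 hsc)
  have hOdd : Odd (n - cycNum n (s * v)) := by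
    obtain ⟨r, hr⟩ := hEven
    rcases hsv with h | h
    · exact ⟨r - 1, by omega⟩
    · exact ⟨r, by omega⟩
  have hs2 : s ^ 2 = 1 := by rw [pow_two]; exact Equiv.swap_mul_self _ _
  have hspowE : ∀ m : ℕ, Even m → s ^ m = 1 := by
    rintro m ⟨r, hr⟩
    rw [hr, ← two_mul, pow_mul, hs2, one_pow]
  have hspowO : ∀ m : ℕ, Odd m → s ^ m = s := by
    rintro m ⟨r, hr⟩
    rw [hr, pow_add, pow_mul, hs2, one_pow, pow_one, one_mul]
  have hset : ∀ k : ℕ,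
      (∃ l : List (Equiv.Perm (Fin n)), (∀ x ∈ l, x ∈ ATrans n) ∧ l.length = k ∧ l.prod = v) ↔
      (n ≤ cycNum n (s ^ k * v) + k ∧ Even (cycNum n (s ^ k * v) + k + n)) := fun k =>
    (tprod_iff hn k v).trans (swapProd_iff hn k _)
  have hm0 : (n - cycNum n v) ∈ {k | ∃ l : List (Equiv.Perm (Fin n)),
      (∀ x ∈ l, x ∈ ATrans n) ∧ l.length = k ∧ l.prod = v} := by
    rw [Set.mem_setOf_eq, hset, hspowE _ hEven, one_mul]
    obtain ⟨r, hr⟩ := hEven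
    exact ⟨by omega, ⟨n, by omega⟩⟩
  have hm1 : (n - cycNum n (s * v)) ∈ {k | ∃ l : List (Equiv.Perm (Fin n)),
      (∀ x ∈ l, x ∈ ATrans n) ∧ l.length = k ∧ l.prod = v} := by
    rw [Set.mem_setOf_eq, hset, hspowO _ hOdd]
    obtain ⟨r, hr⟩ := hOdd
    exact ⟨by omega, ⟨n, by omega⟩⟩
  have hlb : ∀ k ∈ {k | ∃ l : List (Equiv.Perm (Fin n)),
      (∀ x ∈ l, x ∈ ATrans n) ∧ l.length = k ∧ l.prod = v},
      min (n - cycNum n v) (n - cycNum n (s * v)) ≤ k := by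
    intro k hk
    rw [Set.mem_setOf_eq, hset] at hk
    rcases Nat.even_or_odd k with he | ho
    · rw [hspowE _ he, one_mul] at hk
      exact le_trans (min_le_left _ _) (by omega)
    · rw [hspowO _ ho] at hk
      exact le_trans (min_le_right _ _) (by omega)
  rw [alen]
  apply le_antisymm
  · rcases min_cases (n - cycNum n v) (n - cycNum n (s * v)) with ⟨hmin, _⟩ | ⟨hmin, _⟩
    · rw [hmin]; exact Nat.sInf_le hm0
    · rw [hmin]; exact Nat.sInf_le hm1
  · exact hlb _ (Nat.sInf_mem ⟨_, hm0⟩)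


end Aux

/-- For `n ≥ 2` and `0 ≤ k ≤ n - 2`, `a(n,k)` equals the number of permutations of
`{1,…,n}` with exactly `n - k` cycles in which `1` and `2` lie in different cycles
(the 2-restricted unsigned Stirling number of the first kind `[n, n-k]₂`). -/
theorem stmt_16 (n : ℕ) (hn : 2 ≤ n) (k : ℕ) (hk : k ≤ n - 2) :
    aCount n k = Nat.card {v : Equiv.Perm (Fin n) //
      cycNum n v = n - k ∧ ¬ v.SameCycle ⟨0, by omega⟩ ⟨1, by omega⟩} := by
  classical
  have he01 : (⟨0, by omega⟩ : Fin n) ≠ (⟨1, by omega⟩ : Fin n) := Fin.ne_of_val_ne (by norm_num)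
  set e0 : Fin n := ⟨0, by omega⟩ with he0def
  set e1 : Fin n := ⟨1, by omega⟩ with he1def
  have hss : ∀ x : Equiv.Perm (Fin n), Equiv.swap e0 e1 * (Equiv.swap e0 e1 * x) = x := fun x =>
    Equiv.swap_mul_self_mul _ _ x
  have hsalt : ∀ v : Equiv.Perm (Fin n), (Equiv.swap e0 e1 * v ∈ alternatingGroup (Fin n)) ↔
      v ∉ alternatingGroup (Fin n) := by
    intro v
    rw [Equiv.Perm.mem_alternatingGroup, Equiv.Perm.mem_alternatingGroup, map_mul,
      Equiv.Perm.sign_swap he01]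
    constructor
    · intro h hv
      rw [hv] at h
      simp at h
    · intro hv
      rcases Int.units_eq_one_or (Equiv.Perm.sign v) with h1 | h1
      · exact absurd h1 hv
      · rw [h1]; decide
  have hB1 : ∀ v : Equiv.Perm (Fin n), v ∈ alternatingGroup (Fin n) → alen n v = k →
      v.SameCycle e0 e1 →
      cycNum n (Equiv.swap e0 e1 * v) = n - k ∧
        ¬ (Equiv.swap e0 e1 * v).SameCycle e0 e1 := by
    intro v hv halen hsc
    have hal := alen_eq hn v hv
    rw [halen] at hal
    have hks := key_split he01 hsc
    have hle := cyc_le (Equiv.swap e0 e1 * v)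
    have hvle := cyc_le v
    constructor
    · rw [min_eq_right (by omega : n - cycNum n (Equiv.swap e0 e1 * v) ≤ n - cycNum n v)] at hal
      omega
    · exact fun hcon => (key_cycle he01 v).mp hcon hsc
  have hB2 : ∀ v : Equiv.Perm (Fin n), v ∈ alternatingGroup (Fin n) → alen n v = k →
      ¬ v.SameCycle e0 e1 → cycNum n v = n - k ∧ ¬ v.SameCycle e0 e1 := by
    intro v hv halen hsc
    have hal := alen_eq hn v hv
    rw [halen] at hal
    have hkm := key_merge he01 hsc
    have hvle := cyc_le v
    refine ⟨?_, hsc⟩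
    rw [min_eq_left (by omega : n - cycNum n v ≤ n - cycNum n (Equiv.swap e0 e1 * v))] at hal
    omega
  have hA1 : ∀ w : Equiv.Perm (Fin n), cycNum n w = n - k → ¬ w.SameCycle e0 e1 →
      w ∈ alternatingGroup (Fin n) → w ∈ alternatingGroup (Fin n) ∧ alen n w = k := by
    intro w hc hsc hw
    refine ⟨hw, ?_⟩
    have hal := alen_eq hn w hw
    have hkm := key_merge he01 hsc
    have hwle := cyc_le w
    rw [min_eq_left (by omega : n - cycNum n w ≤ n - cycNum n (Equiv.swap e0 e1 * w))] at hal
    omega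
  have hA2 : ∀ w : Equiv.Perm (Fin n), cycNum n w = n - k → ¬ w.SameCycle e0 e1 →
      w ∉ alternatingGroup (Fin n) →
      Equiv.swap e0 e1 * w ∈ alternatingGroup (Fin n) ∧
        alen n (Equiv.swap e0 e1 * w) = k := by
    intro w hc hsc hw
    have halt : Equiv.swap e0 e1 * w ∈ alternatingGroup (Fin n) := (hsalt w).mpr hw
    refine ⟨halt, ?_⟩
    have hal := alen_eq hn (Equiv.swap e0 e1 * w) halt
    rw [hss w] at hal
    have hkm := key_merge he01 hsc
    have hwle := cyc_le w
    have hswle := cyc_le (Equiv.swap e0 e1 * w)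
    rw [min_eq_right
      (by omega : n - cycNum n w ≤ n - cycNum n (Equiv.swap e0 e1 * w))] at hal
    omega
  rw [aCount]
  refine Nat.card_congr (Equiv.mk
    (fun p => if h : p.1.SameCycle e0 e1 then
        ⟨Equiv.swap e0 e1 * p.1, hB1 p.1 p.2.1 p.2.2 h⟩
      else ⟨p.1, hB2 p.1 p.2.1 p.2.2 h⟩)
    (fun q => if h : q.1 ∈ alternatingGroup (Fin n) then
        ⟨q.1, hA1 q.1 q.2.1 q.2.2 h⟩
      else ⟨Equiv.swap e0 e1 * q.1, hA2 q.1 q.2.1 q.2.2 h⟩)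
    ?_ ?_)
  · intro p
    obtain ⟨v, hv1, hv2⟩ := p
    dsimp only
    by_cases h : v.SameCycle e0 e1
    · rw [dif_pos h]
      have hnotalt : Equiv.swap e0 e1 * v ∉ alternatingGroup (Fin n) := by
        intro hcon
        exact (hsalt v).mp hcon hv1
      rw [dif_neg hnotalt]
      exact Subtype.ext (hss v)
    · rw [dif_neg h, dif_pos hv1]
  · intro q
    obtain ⟨w, hw1, hw2⟩ := q
    dsimp only
    by_cases h : w ∈ alternatingGroup (Fin n)
    · rw [dif_pos h, dif_neg hw2]
    · rw [dif_neg h]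
      have hscn : (Equiv.swap e0 e1 * w).SameCycle e0 e1 := (key_cycle he01 w).mpr hw2
      rw [dif_pos hscn]
      exact Subtype.ext (hss w)
end
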